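/- arXiv:1804.02787 — 5 statements merged into one kernel-verified Lean document; each statement's English description precedes it below -/
import Mathlib

section
/- Theorem 1: Let a countably additive transition function p on a measurable space (X,Σ) be given, with Markov operator A on ba(X,Σ). Suppose the set Δ_ba of invariant finitely additive probability measures satisfies dim span(Δ_ba) = n < ∞ and Δ_ba is the convex hull of measures μ₁,…,μₙ that are pairwise singular (for i ≠ j there exist disjoint Kᵢ,Kⱼ ∈ Σ with μᵢ(Kᵢ) = μⱼ(Kⱼ) = 1), and each μᵢ satisfies condition (α). Then every invariant finitely additive probability measure is countably additive, i.e. Δ_ba ⊂ ca(X,Σ). -/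
open MeasureTheory Set Filter Topology Function

/-- A bounded finitely additive (signed) set function on the σ-algebra. -/
def IsFinAdd {X : Type*} [MeasurableSpace X] (μ : Set X → ℝ) : Prop :=
  μ ∅ = 0 ∧ ∀ E F : Set X, MeasurableSet E → MeasurableSet F → Disjoint E F →
    μ (E ∪ F) = μ E + μ F

/-- Nonnegativity on measurable sets. -/
def IsNonnegSF {X : Type*} [MeasurableSpace X] (μ : Set X → ℝ) : Prop :=
  ∀ E : Set X, MeasurableSet E → 0 ≤ μ E

/-- Countable additivity on the σ-algebra. -/
def IsCtblAdd {X : Type*} [MeasurableSpace X] (μ : Set X → ℝ) : Prop :=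
  ∀ E : ℕ → Set X, (∀ n, MeasurableSet (E n)) → Pairwise (Disjoint on E) →
    HasSum (fun n => μ (E n)) (μ (⋃ n, E n))

/-- A nonnegative finitely additive measure is purely finitely additive if the only
countably additive measure `lam` with `0 ≤ lam ≤ μ` is `lam = 0`. -/
def IsPurelyFinAdd {X : Type*} [MeasurableSpace X] (μ : Set X → ℝ) : Prop :=
  ∀ lam : Set X → ℝ, IsFinAdd lam → IsCtblAdd lam →
    (∀ E, MeasurableSet E → 0 ≤ lam E) → (∀ E, MeasurableSet E → lam E ≤ μ E) →
    ∀ E, MeasurableSet E → lam E = 0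

/-- A countably additive transition function (transition probability). -/
def IsTransFun {X : Type*} [MeasurableSpace X] (p : X → Set X → ℝ) : Prop :=
  (∀ (x : X) (E : Set X), MeasurableSet E → 0 ≤ p x E ∧ p x E ≤ 1) ∧
  (∀ x : X, p x Set.univ = 1) ∧
  (∀ E : Set X, MeasurableSet E → Measurable fun x => p x E) ∧
  (∀ x : X, IsFinAdd (p x) ∧ IsCtblAdd (p x))

/-- The integral of a bounded measurable function with respect to a (finitely additive)
set function, defined by the layer-cake formula. -/
noncomputable def faIntegral {X : Type*} [MeasurableSpace X] (μ : Set X → ℝ) (f : X → ℝ) : ℝ :=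
  (∫ t in Set.Ioi (0:ℝ), μ {x | t < f x}) - (∫ t in Set.Ioi (0:ℝ), μ {x | f x < -t})

/-- The Markov operator `A` on finitely additive measures: `(Aμ)(E) = ∫ p(x,E) μ(dx)`. -/
noncomputable def markovOp {X : Type*} [MeasurableSpace X] (p : X → Set X → ℝ)
    (μ : Set X → ℝ) : Set X → ℝ :=
  fun E => faIntegral μ fun x => p x E

/-- `Δ_ba`: the set of invariant finitely additive probability measures. -/
def InvProbSet {X : Type*} [MeasurableSpace X] (p : X → Set X → ℝ) : Set (Set X → ℝ) :=
  {μ | IsFinAdd μ ∧ IsNonnegSF μ ∧ μ Set.univ = 1 ∧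
    ∀ E : Set X, MeasurableSet E → markovOp p μ E = μ E}

open scoped ENNReal NNReal symmDiff

section FA
variable {X : Type*} [MeasurableSpace X] {ν : Set X → ℝ}

lemma fa_diff (hfa : IsFinAdd ν) {A B : Set X} (hA : MeasurableSet A) (hB : MeasurableSet B)
    (hBA : B ⊆ A) : ν A = ν B + ν (A \ B) := by
  have := hfa.2 B (A \ B) hB (hA.diff hB) disjoint_sdiff_self_right
  rwa [Set.union_diff_cancel hBA] at this

lemma fa_le_univ (hfa : IsFinAdd ν) (hnn : IsNonnegSF ν) {A : Set X} (hA : MeasurableSet A) :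
    ν A ≤ ν Set.univ := by
  have := fa_diff hfa MeasurableSet.univ hA (Set.subset_univ A)
  have h2 := hnn _ (MeasurableSet.univ.diff hA)
  linarith

lemma fa_full_inter (hfa : IsFinAdd ν) (hnn : IsNonnegSF ν) (huniv : ν Set.univ = 1)
    {A B : Set X} (hA : MeasurableSet A) (hB : MeasurableSet B)
    (hA1 : ν A = 1) (hB1 : ν B = 1) : ν (A ∩ B) = 1 := by
  have hBd : ν B = ν (A ∩ B) + ν (B \ A) := by
    have := fa_diff hfa hB (hA.inter hB) Set.inter_subset_right
    have hset : B \ (A ∩ B) = B \ A := by ext x; by_cases hx : x ∈ A <;> simp [hx]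
    rwa [hset] at this
  have hU : ν (A ∪ B) = ν A + ν (B \ A) := by
    have := hfa.2 A (B \ A) hA (hB.diff hA) disjoint_sdiff_self_right
    rwa [Set.union_diff_self] at this
  have hle : ν (A ∪ B) ≤ 1 := huniv ▸ fa_le_univ hfa hnn (hA.union hB)
  have h0 : 0 ≤ ν (B \ A) := hnn _ (hB.diff hA)
  linarith

lemma fa_full_iInter {n : ℕ} (hfa : IsFinAdd ν) (hnn : IsNonnegSF ν) (huniv : ν Set.univ = 1)
    {T : Fin n → Set X} (hT : ∀ j, MeasurableSet (T j)) (hT1 : ∀ j, ν (T j) = 1) :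
    ν (⋂ j, T j) = 1 := by
  have key : ∀ F : Finset (Fin n), ν (⋂ j ∈ F, T j) = 1 := by
    intro F
    induction F using Finset.induction with
    | empty => simpa using huniv
    | @insert a F ha ih =>
        rw [Finset.set_biInter_insert]
        exact fa_full_inter hfa hnn huniv (hT a)
          (MeasurableSet.biInter (Finset.countable_toSet F) (fun j _ => hT j)) (hT1 a) ih
  have := key Finset.univ
  simpa using this

lemma fa_sum_range (hfa : IsFinAdd ν) {E : ℕ → Set X} (hE : ∀ k, MeasurableSet (E k))
    (hd : Pairwise (Disjoint on E)) (N : ℕ) :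
    ν (⋃ k ∈ Finset.range N, E k) = ∑ k ∈ Finset.range N, ν (E k) := by
  induction N with
  | zero => simpa using hfa.1
  | succ N ih =>
      rw [Finset.sum_range_succ, ← ih]
      have hmeas : MeasurableSet (⋃ k ∈ Finset.range N, E k) :=
        MeasurableSet.biUnion (Finset.countable_toSet _) (fun k _ => hE k)
      have hdisj : Disjoint (⋃ k ∈ Finset.range N, E k) (E N) := by
        refine Set.disjoint_iUnion_left.2 fun k => ?_
        refine Set.disjoint_iUnion_left.2 fun hk => ?_
        exact hd (by simp at hk; omega)
      have := hfa.2 _ _ hmeas (hE N) hdisj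
      rw [← this]
      congr 1
      ext x
      simp [Finset.mem_range]
      constructor
      · rintro ⟨k, hk, hx⟩
        rcases Nat.lt_or_eq_of_le hk with h | h
        · exact Or.inl ⟨k, h, hx⟩
        · exact Or.inr (h ▸ hx)
      · rintro (⟨k, hk, hx⟩ | hx)
        · exact ⟨k, le_of_lt hk, hx⟩
        · exact ⟨N, le_rfl, hx⟩

end FA

section AntitoneInt

lemma antInt_integrableOn {h : ℝ → ℝ} (hmono : Antitone h) (h0 : ∀ t, 0 ≤ h t)
    (h1 : ∀ t, h t ≤ 1) (a b : ℝ) : IntegrableOn h (Ioc a b) volume := by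
  refine Integrable.mono' (g := fun _ => (1:ℝ))
    (integrableOn_const measure_Ioc_lt_top.ne) ?_ ?_
  · exact (hmono.measurable).aestronglyMeasurable
  · refine Filter.Eventually.of_forall fun t => ?_
    rw [Real.norm_eq_abs, abs_of_nonneg (h0 t)]
    exact h1 t

lemma antInt_eq {h : ℝ → ℝ} (hmono : Antitone h) (h0 : ∀ t, 0 ≤ h t) (h1 : ∀ t, h t ≤ 1)
    (hvan : ∀ t, 1 ≤ t → h t = 0) :
    ∫ t in Ioi (0:ℝ), h t = ∫ t in Ioc (0:ℝ) 1, h t := by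
  have hsplit : Ioc (0:ℝ) 1 ∪ Ioi 1 = Ioi 0 := Ioc_union_Ioi_eq_Ioi zero_le_one
  have hzero : ∀ t ∈ Ioi (1:ℝ), h t = 0 := fun t ht => hvan t (le_of_lt ht)
  have hint1 : IntegrableOn h (Ioc (0:ℝ) 1) volume := antInt_integrableOn hmono h0 h1 0 1
  have hint2 : IntegrableOn h (Ioi (1:ℝ)) volume := by
    refine (integrableOn_zero).congr_fun ?_ measurableSet_Ioi
    intro t ht; exact (hzero t ht).symm
  rw [← hsplit, setIntegral_union (Ioc_disjoint_Ioi le_rfl) measurableSet_Ioi hint1 hint2]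
  have : ∫ t in Ioi (1:ℝ), h t = 0 := by
    rw [setIntegral_congr_fun measurableSet_Ioi hzero, integral_zero]
  rw [this, add_zero]

lemma antInt_bounds {h : ℝ → ℝ} (hmono : Antitone h) (h0 : ∀ t, 0 ≤ h t) (h1 : ∀ t, h t ≤ 1)
    {R : ℕ} (hR : 0 < R) :
    (∑ r ∈ Finset.range R, h (((r:ℝ)+1)/R)) / R ≤ ∫ t in Ioc (0:ℝ) 1, h t ∧
    ∫ t in Ioc (0:ℝ) 1, h t ≤ (∑ r ∈ Finset.range R, h ((r:ℝ)/R)) / R := by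
  have hRR : (R:ℝ) ≠ 0 := Nat.cast_ne_zero.2 hR.ne'
  have hRpos : (0:ℝ) < R := Nat.cast_pos.2 hR
  set a : ℕ → ℝ := fun k => (k:ℝ)/R with ha
  have hle : ∀ k : ℕ, a k ≤ a (k+1) := by
    intro k; simp only [ha]; gcongr; push_cast; linarith
  have hint : ∀ k < R, IntervalIntegrable h volume (a k) (a (k+1)) := by
    intro k _
    rw [intervalIntegrable_iff_integrableOn_Ioc_of_le (hle k)]
    exact antInt_integrableOn hmono h0 h1 _ _
  have hadj := intervalIntegral.sum_integral_adjacent_intervals hint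
  have ha0 : a 0 = 0 := by simp [ha]
  have haR : a R = 1 := by simp only [ha]; field_simp
  rw [ha0, haR] at hadj
  have hioc : ∫ t in Ioc (0:ℝ) 1, h t = ∫ t in (0:ℝ)..1, h t := by
    rw [intervalIntegral.integral_of_le zero_le_one]
  have hdiff : ∀ k : ℕ, a (k+1) - a k = 1/(R:ℝ) := by
    intro k; simp only [ha]; field_simp; push_cast; ring
  have hcell_up : ∀ k, k < R → ∫ t in a k..a (k+1), h t ≤ h (a k) / R := by
    intro k hk
    have hmon := intervalIntegral.integral_mono_on (hle k) (hint k hk)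
      (intervalIntegrable_const (c := h (a k))) (fun x hx => hmono hx.1)
    rw [intervalIntegral.integral_const, hdiff k, smul_eq_mul] at hmon
    calc ∫ t in a k..a (k+1), h t ≤ 1/(R:ℝ) * h (a k) := hmon
    _ = h (a k) / R := by ring
  have hcell_lo : ∀ k, k < R → h (a (k+1)) / R ≤ ∫ t in a k..a (k+1), h t := by
    intro k hk
    have hmon := intervalIntegral.integral_mono_on (hle k)
      (intervalIntegrable_const (c := h (a (k+1)))) (hint k hk) (fun x hx => hmono hx.2)
    rw [intervalIntegral.integral_const, hdiff k, smul_eq_mul] at hmon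
    calc h (a (k+1)) / R = 1/(R:ℝ) * h (a (k+1)) := by ring
    _ ≤ _ := hmon
  constructor
  · rw [hioc, ← hadj, Finset.sum_div]
    refine Finset.sum_le_sum fun r hr => ?_
    have hc : a (r+1) = ((r:ℝ)+1)/R := by simp only [ha]; push_cast; ring
    rw [← hc]
    exact hcell_lo r (Finset.mem_range.1 hr)
  · rw [hioc, ← hadj, Finset.sum_div]
    exact Finset.sum_le_sum fun r hr => hcell_up r (Finset.mem_range.1 hr)

lemma ulim_integral (U : Ultrafilter ℕ) (g : ℕ → ℝ → ℝ) (g' : ℝ → ℝ)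
    (hmono : ∀ m, Antitone (g m)) (hmono' : Antitone g')
    (h0 : ∀ m t, 0 ≤ g m t) (h1 : ∀ m t, g m t ≤ 1)
    (h0' : ∀ t, 0 ≤ g' t) (h1' : ∀ t, g' t ≤ 1)
    (hvan : ∀ m t, 1 ≤ t → g m t = 0) (hvan' : ∀ t, 1 ≤ t → g' t = 0)
    (hlim : ∀ t, Tendsto (fun m => g m t) U (nhds (g' t))) :
    Tendsto (fun m => ∫ t in Ioi (0:ℝ), g m t) U (nhds (∫ t in Ioi (0:ℝ), g' t)) := by
  rw [Metric.tendsto_nhds]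
  intro ε hε
  obtain ⟨R, hRgt⟩ := exists_nat_gt (4/ε)
  have hRposR : (0:ℝ) < R := lt_trans (div_pos (by norm_num) hε) hRgt
  have hRpos : 0 < R := Nat.cast_pos.1 hRposR
  have hRinv : 1/(R:ℝ) < ε/4 := by
    rw [div_lt_div_iff₀ hRposR (by norm_num : (0:ℝ) < 4)]
    have h4 : 4 < (R:ℝ) * ε := by
      have := (div_lt_iff₀ hε).1 hRgt
      linarith
    nlinarith
  set Sl : (ℝ → ℝ) → ℝ := fun h => (∑ r ∈ Finset.range R, h (((r:ℝ)+1)/R)) / R with hSl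
  set Su : (ℝ → ℝ) → ℝ := fun h => (∑ r ∈ Finset.range R, h ((r:ℝ)/R)) / R with hSu
  have hbnd : ∀ h : ℝ → ℝ, Antitone h → (∀ t, 0 ≤ h t) → (∀ t, h t ≤ 1) → (∀ t, 1 ≤ t → h t = 0) →
      Sl h ≤ ∫ t in Ioi (0:ℝ), h t ∧ ∫ t in Ioi (0:ℝ), h t ≤ Su h := by
    intro h hm h0h h1h hv
    rw [antInt_eq hm h0h h1h hv]
    exact antInt_bounds hm h0h h1h hRpos
  have hgap : ∀ h : ℝ → ℝ, Antitone h → (∀ t, 0 ≤ h t) → (∀ t, h t ≤ 1) →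
      Su h - Sl h ≤ 1/(R:ℝ) := by
    intro h hm h0h h1h
    have htel : ∑ r ∈ Finset.range R, (h ((r:ℝ)/R) - h (((r:ℝ)+1)/R))
        = h 0 - h ((R:ℝ)/R) := by
      have := Finset.sum_range_sub' (f := fun r : ℕ => h ((r:ℝ)/R)) R
      simp only [Nat.cast_zero, zero_div] at this
      rw [← this]
      refine Finset.sum_congr rfl fun r _ => ?_
      push_cast; ring_nf
    have : Su h - Sl h = (h 0 - h ((R:ℝ)/R)) / R := by
      rw [hSu, hSl]; dsimp only
      rw [div_sub_div_same, ← Finset.sum_sub_distrib, htel]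
    rw [this]
    have h00 : h 0 ≤ 1 := h1h 0
    have hR0 : 0 ≤ h ((R:ℝ)/R) := h0h _
    rw [div_le_div_iff₀ hRposR hRposR]
    nlinarith
  have hSlT : Tendsto (fun m => Sl (g m)) U (nhds (Sl g')) := by
    apply Tendsto.div_const
    exact tendsto_finset_sum _ (fun r _ => hlim _)
  have hSuT : Tendsto (fun m => Su (g m)) U (nhds (Su g')) := by
    apply Tendsto.div_const
    exact tendsto_finset_sum _ (fun r _ => hlim _)
  have hev1 : ∀ᶠ m in U, |Sl (g m) - Sl g'| < ε/4 :=
    (hSlT.eventually (eventually_abs_sub_lt (Sl g') (by linarith)))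
  have hev2 : ∀ᶠ m in U, |Su (g m) - Su g'| < ε/4 :=
    (hSuT.eventually (eventually_abs_sub_lt (Su g') (by linarith)))
  filter_upwards [hev1, hev2] with m h1m h2m
  have hb := hbnd (g m) (hmono m) (h0 m) (h1 m) (hvan m)
  have hb' := hbnd g' hmono' h0' h1' hvan'
  have hg := hgap g' hmono' h0' h1'
  have hgm := hgap (g m) (hmono m) (h0 m) (h1 m)
  rw [Real.dist_eq, abs_lt]
  rw [abs_lt] at h1m h2m
  constructor <;> nlinarith [hb.1, hb.2, hb'.1, hb'.2]

end AntitoneInt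

section VHS

variable {X : Type*} [MeasurableSpace X]

/-- The type of measurable sets, made into a pseudo-emetric space via a measure `Λ`. -/
def MSp (X : Type*) [MeasurableSpace X] (Λ : Measure X) : Type _ := {s : Set X // MeasurableSet s}

noncomputable instance (Λ : Measure X) : PseudoEMetricSpace (MSp X Λ) where
  edist A B := Λ (symmDiff A.1 B.1)
  edist_self A := by simp [symmDiff_self]
  edist_comm A B := by simp [symmDiff_comm]
  edist_triangle A B C := by
    refine le_trans (measure_mono ?_) (measure_union_le _ _)
    exact symmDiff_triangle A.1 B.1 C.1

lemma msp_edist_def (Λ : Measure X) (A B : MSp X Λ) : edist A B = Λ (symmDiff A.1 B.1) := rfl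

/-- crossing helper -/
lemma crossing (u : ℕ → Set X) (x : X) {j l : ℕ} (hjl : j ≤ l)
    (hne : x ∈ u j ↔ x ∉ u l) :
    ∃ r, j ≤ r ∧ x ∈ symmDiff (u r) (u (r+1)) := by
  induction l, hjl using Nat.le_induction with
  | base => tauto
  | succ l hjl ih =>
      by_cases hx : (x ∈ u j) ↔ (x ∉ u l)
      · exact ih hx
      · refine ⟨l, le_trans hjl (by omega), ?_⟩
        rw [Set.mem_symmDiff]
        by_cases hj : x ∈ u j <;> by_cases hl1 : x ∈ u (l+1) <;> tauto

lemma msp_complete (Λ : Measure X) : CompleteSpace (MSp X Λ) := by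
  apply EMetric.complete_of_convergent_controlled_sequences (fun n => (2:ℝ≥0∞)⁻¹ ^ n)
    (fun n => ENNReal.pow_pos (by norm_num) n)
  intro u hu
  set E : Set X := ⋂ J, ⋃ j, ⋃ (_ : J ≤ j), (u j).1 with hE
  have hEmeas : MeasurableSet E :=
    MeasurableSet.iInter fun J => MeasurableSet.iUnion fun j => MeasurableSet.iUnion fun _ => (u j).2
  refine ⟨⟨E, hEmeas⟩, ?_⟩
  have hbound : ∀ j : ℕ, edist (u j) (⟨E, hEmeas⟩ : MSp X Λ) ≤ (2:ℝ≥0∞)⁻¹ ^ j * 2 := by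
    intro j
    have hsub : symmDiff (u j).1 E ⊆ ⋃ d : ℕ, symmDiff ((u (j+d)).1) ((u (j+d+1)).1) := by
      intro x hx
      rw [Set.mem_symmDiff] at hx
      have hcross : ∃ r, j ≤ r ∧ x ∈ symmDiff ((u r).1) ((u (r+1)).1) := by
        rcases hx with ⟨hxj, hxE⟩ | ⟨hxE, hxj⟩
        · -- x ∈ u j, x ∉ E : there is J with x ∉ ⋃_{l ≥ J} u l
          rw [hE, Set.mem_iInter] at hxE
          push_neg at hxE
          obtain ⟨J, hJ⟩ := hxE
          simp only [Set.mem_iUnion, not_exists] at hJ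
          have hJj : j < J := by
            by_contra hc
            push_neg at hc
            exact hJ j hc hxj
          exact crossing (fun k => (u k).1) x (le_of_lt hJj)
            ⟨fun _ => hJ J le_rfl, fun _ => hxj⟩
        · -- x ∈ E, x ∉ u j : x ∈ ⋃_{l ≥ j} u l
          rw [hE, Set.mem_iInter] at hxE
          have := hxE j
          simp only [Set.mem_iUnion] at this
          obtain ⟨l, hl, hxl⟩ := this
          exact crossing (fun k => (u k).1) x hl
            ⟨fun h => absurd h hxj, fun h => absurd hxl h⟩
      obtain ⟨r, hr, hxr⟩ := hcross
      rw [Set.mem_iUnion]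
      exact ⟨r - j, by rwa [show j + (r - j) = r by omega]⟩
    calc edist (u j) (⟨E, hEmeas⟩ : MSp X Λ) = Λ (symmDiff (u j).1 E) := rfl
      _ ≤ Λ (⋃ d : ℕ, symmDiff ((u (j+d)).1) ((u (j+d+1)).1)) := measure_mono hsub
      _ ≤ ∑' d : ℕ, Λ (symmDiff ((u (j+d)).1) ((u (j+d+1)).1)) := measure_iUnion_le _
      _ ≤ ∑' d : ℕ, (2:ℝ≥0∞)⁻¹ ^ (j+d) := by
          refine ENNReal.tsum_le_tsum fun d => ?_
          exact le_of_lt (hu (j+d) (j+d) (j+d+1) le_rfl (by omega))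
      _ = (2:ℝ≥0∞)⁻¹ ^ j * ∑' d : ℕ, (2:ℝ≥0∞)⁻¹ ^ d := by
          rw [← ENNReal.tsum_mul_left]
          congr 1; funext d; rw [pow_add]
      _ = (2:ℝ≥0∞)⁻¹ ^ j * 2 := by
          rw [ENNReal.tsum_geometric]
          congr 1
          rw [ENNReal.one_sub_inv_two]
          simp
  refine EMetric.tendsto_atTop.2 ?_
  intro ε hε
  have htend : Tendsto (fun j : ℕ => (2:ℝ≥0∞)⁻¹ ^ j * 2) atTop (nhds 0) := by
    have h2 : Tendsto (fun j : ℕ => (2:ℝ≥0∞)⁻¹ ^ j) atTop (nhds 0) :=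
      ENNReal.tendsto_pow_atTop_nhds_zero_of_lt_one (by norm_num)
    have := ENNReal.Tendsto.mul_const h2 (Or.inr (by norm_num : (2:ℝ≥0∞) ≠ ∞))
    simpa using this
  have hev : ∀ᶠ j in atTop, (2:ℝ≥0∞)⁻¹ ^ j * 2 < ε := htend.eventually_lt_const hε
  obtain ⟨N, hN⟩ := eventually_atTop.1 hev
  exact ⟨N, fun n hn => lt_of_le_of_lt (hbound n) (hN n hn)⟩

end VHS

section VHS2
variable {X : Type*} [MeasurableSpace X]

lemma geom_tail (J : ℕ) : ∑' d : ℕ, (2:ℝ≥0∞)⁻¹ ^ (J+d) = (2:ℝ≥0∞)⁻¹ ^ J * 2 := by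
  calc ∑' d : ℕ, (2:ℝ≥0∞)⁻¹ ^ (J+d) = ∑' d : ℕ, (2:ℝ≥0∞)⁻¹ ^ J * (2:ℝ≥0∞)⁻¹ ^ d := by
        congr 1; funext d; rw [pow_add]
    _ = (2:ℝ≥0∞)⁻¹ ^ J * ∑' d : ℕ, (2:ℝ≥0∞)⁻¹ ^ d := ENNReal.tsum_mul_left
    _ = (2:ℝ≥0∞)⁻¹ ^ J * 2 := by
        rw [ENNReal.tsum_geometric, ENNReal.one_sub_inv_two]; simp

lemma pow_half_mul_two_tendsto : Tendsto (fun j : ℕ => (2:ℝ≥0∞)⁻¹ ^ j * 2) atTop (nhds 0) := by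
  have h2 : Tendsto (fun j : ℕ => (2:ℝ≥0∞)⁻¹ ^ j) atTop (nhds 0) :=
    ENNReal.tendsto_pow_atTop_nhds_zero_of_lt_one (by norm_num)
  have := ENNReal.Tendsto.mul_const h2 (Or.inr (by norm_num : (2:ℝ≥0∞) ≠ ∞))
  simpa using this

lemma acfin {Λ σ : Measure X} [IsFiniteMeasure σ] (h : σ ≪ Λ) {ε : ℝ≥0∞} (hε : 0 < ε) :
    ∃ δ : ℝ≥0∞, 0 < δ ∧ ∀ S, MeasurableSet S → Λ S < δ → σ S < ε := by
  by_contra hc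
  push_neg at hc
  have hc' : ∀ k : ℕ, ∃ S, MeasurableSet S ∧ Λ S < (2:ℝ≥0∞)⁻¹ ^ k ∧ ε ≤ σ S :=
    fun k => hc ((2:ℝ≥0∞)⁻¹ ^ k) (ENNReal.pow_pos (by norm_num) k)
  choose S hSm hSΛ hSσ using hc'
  set A := ⋂ J, ⋃ k, ⋃ (_ : J ≤ k), S k with hA
  have hΛA : Λ A = 0 := by
    have hbound : ∀ J : ℕ, Λ A ≤ (2:ℝ≥0∞)⁻¹ ^ J * 2 := by
      intro J
      have hsub : A ⊆ ⋃ d : ℕ, S (J + d) := by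
        refine Set.Subset.trans (Set.iInter_subset _ J) ?_
        intro x hx
        simp only [Set.mem_iUnion] at hx ⊢
        obtain ⟨k, hk, hxk⟩ := hx
        exact ⟨k - J, by rwa [show J + (k - J) = k by omega]⟩
      calc Λ A ≤ Λ (⋃ d : ℕ, S (J + d)) := measure_mono hsub
        _ ≤ ∑' d : ℕ, Λ (S (J + d)) := measure_iUnion_le _
        _ ≤ ∑' d : ℕ, (2:ℝ≥0∞)⁻¹ ^ (J + d) := ENNReal.tsum_le_tsum fun d => le_of_lt (hSΛ _)
        _ = (2:ℝ≥0∞)⁻¹ ^ J * 2 := geom_tail J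
    refine le_antisymm ?_ zero_le
    exact ge_of_tendsto pow_half_mul_two_tendsto (Filter.Eventually.of_forall hbound)
  have hσA : ε ≤ σ A := by
    have hmeas : ∀ J : ℕ, NullMeasurableSet (⋃ k, ⋃ (_ : J ≤ k), S k) σ := fun J =>
      (MeasurableSet.iUnion fun k => MeasurableSet.iUnion fun _ => hSm k).nullMeasurableSet
    have hanti : Antitone (fun J : ℕ => ⋃ k, ⋃ (_ : J ≤ k), S k) := by
      intro J J' hJJ x hx
      simp only [Set.mem_iUnion] at hx ⊢
      obtain ⟨k, hk, hxk⟩ := hx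
      exact ⟨k, le_trans hJJ hk, hxk⟩
    have htendA := tendsto_measure_iInter_atTop hmeas hanti ⟨0, measure_ne_top σ _⟩
    refine ge_of_tendsto htendA (Filter.Eventually.of_forall fun J => ?_)
    calc ε ≤ σ (S J) := hSσ J
    _ ≤ σ (⋃ k, ⋃ (_ : J ≤ k), S k) := measure_mono (by
        intro x hx; simp only [Set.mem_iUnion]; exact ⟨J, le_rfl, hx⟩)
  rw [h hΛA] at hσA
  exact absurd (lt_of_lt_of_le hε hσA) (lt_irrefl 0)

lemma abs_toReal_sub_le (σ : Measure X) [IsFiniteMeasure σ] (A B : Set X)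
    (hA : MeasurableSet A) (hB : MeasurableSet B) :
    |(σ A).toReal - (σ B).toReal| ≤ (σ (symmDiff A B)).toReal := by
  have key : ∀ C D : Set X, (σ C).toReal - (σ D).toReal ≤ (σ (symmDiff C D)).toReal := by
    intro C D
    have h1 : σ C ≤ σ D + σ (symmDiff C D) := by
      refine le_trans (measure_mono ?_) (measure_union_le _ _)
      intro x hx
      by_cases hD : x ∈ D
      · exact Or.inl hD
      · exact Or.inr (Set.mem_symmDiff.2 (Or.inl ⟨hx, hD⟩))
    have h2 : (σ C).toReal ≤ (σ D).toReal + (σ (symmDiff C D)).toReal := by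
      rw [← ENNReal.toReal_add (measure_ne_top σ D) (measure_ne_top σ _)]
      exact ENNReal.toReal_mono (by
        exact ENNReal.add_ne_top.2 ⟨measure_ne_top σ D, measure_ne_top σ _⟩) h1
    linarith
  rw [abs_sub_le_iff]
  exact ⟨key A B, by rw [symmDiff_comm]; exact key B A⟩

lemma vhs (Λ : Measure X) (σ : ℕ → Measure X) [∀ m, IsFiniteMeasure (σ m)]
    (habs : ∀ m, σ m ≪ Λ) (μ₀ : Set X → ℝ)
    (hconv : ∀ S, MeasurableSet S → Tendsto (fun m => ((σ m) S).toReal) atTop (nhds (μ₀ S)))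
    {ε : ℝ} (hε : 0 < ε) :
    ∃ δ : ℝ≥0∞, 0 < δ ∧ ∀ S, MeasurableSet S → Λ S < δ → μ₀ S ≤ ε := by
  haveI : CompleteSpace (MSp X Λ) := msp_complete Λ
  haveI : Nonempty (MSp X Λ) := ⟨⟨∅, MeasurableSet.empty⟩⟩
  have hcont : ∀ m : ℕ, Continuous (fun A : MSp X Λ => ((σ m) A.1).toReal) := by
    intro m
    rw [continuous_iff_continuousAt]
    intro A₀
    rw [ContinuousAt, (EMetric.nhds_basis_eball).tendsto_iff Metric.nhds_basis_ball]
    intro ε' hε'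
    obtain ⟨δ, hδpos, hδ⟩ := acfin (habs m) (ENNReal.ofReal_pos.2 hε')
    refine ⟨δ, hδpos, fun A hA => ?_⟩
    rw [EMetric.mem_ball, msp_edist_def] at hA
    rw [Metric.mem_ball, Real.dist_eq]
    have hσsmall : (σ m) (symmDiff A.1 A₀.1) < ENNReal.ofReal ε' :=
      hδ _ ((A.2.symmDiff A₀.2)) hA
    have := abs_toReal_sub_le (σ m) A.1 A₀.1 A.2 A₀.2
    calc |((σ m) A.1).toReal - ((σ m) A₀.1).toReal| ≤ ((σ m) (symmDiff A.1 A₀.1)).toReal := this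
      _ < ε' := ENNReal.toReal_lt_of_lt_ofReal hσsmall
  set C : ℕ → Set (MSp X Λ) := fun K =>
    ⋂ (m : ℕ) (m' : ℕ), {A : MSp X Λ | K ≤ m → K ≤ m' →
      |((σ m) A.1).toReal - ((σ m') A.1).toReal| ≤ ε/4} with hC
  have hclosed : ∀ K, IsClosed (C K) := by
    intro K
    refine isClosed_iInter fun m => isClosed_iInter fun m' => ?_
    by_cases h1 : K ≤ m
    · by_cases h2 : K ≤ m'
      · have : {A : MSp X Λ | K ≤ m → K ≤ m' →
            |((σ m) A.1).toReal - ((σ m') A.1).toReal| ≤ ε/4} =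
            {A : MSp X Λ | |((σ m) A.1).toReal - ((σ m') A.1).toReal| ≤ ε/4} := by
          ext A; simp [h1, h2]
        rw [this]
        exact isClosed_le (Continuous.abs ((hcont m).sub (hcont m'))) continuous_const
      · have : {A : MSp X Λ | K ≤ m → K ≤ m' →
            |((σ m) A.1).toReal - ((σ m') A.1).toReal| ≤ ε/4} = Set.univ := by
          ext A; simp [h2]
        rw [this]; exact isClosed_univ
    · have : {A : MSp X Λ | K ≤ m → K ≤ m' →
          |((σ m) A.1).toReal - ((σ m') A.1).toReal| ≤ ε/4} = Set.univ := by
        ext A; simp [h1]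
      rw [this]; exact isClosed_univ
  have hcover : ⋃ K, C K = Set.univ := by
    rw [Set.eq_univ_iff_forall]
    intro A
    have hcauchy : CauchySeq (fun m => ((σ m) A.1).toReal) := (hconv A.1 A.2).cauchySeq
    obtain ⟨N, hN⟩ := (Metric.cauchySeq_iff.1 hcauchy) (ε/4) (by linarith)
    rw [Set.mem_iUnion]
    refine ⟨N, ?_⟩
    rw [hC]
    simp only [Set.mem_iInter, Set.mem_setOf_eq]
    intro m m' hm hm'
    have := hN m hm m' hm'
    rw [Real.dist_eq] at this
    exact le_of_lt this
  obtain ⟨K, x₀, hx₀⟩ := nonempty_interior_of_iUnion_of_closed hclosed hcover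
  rw [mem_interior_iff_mem_nhds, EMetric.mem_nhds_iff] at hx₀
  obtain ⟨r, hr, hball⟩ := hx₀
  obtain ⟨δ₂, hδ₂pos, hδ₂⟩ := acfin (habs K) (ENNReal.ofReal_pos.2 (by linarith : (0:ℝ) < ε/4))
  refine ⟨min r δ₂, lt_min hr hδ₂pos, fun S hS hΛS => ?_⟩
  have hΛSr : Λ S < r := lt_of_lt_of_le hΛS (min_le_left _ _)
  have hΛSδ₂ : Λ S < δ₂ := lt_of_lt_of_le hΛS (min_le_right _ _)
  set A₁ : MSp X Λ := ⟨x₀.1 ∪ S, x₀.2.union hS⟩ with hA₁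
  set A₂ : MSp X Λ := ⟨x₀.1 \ S, x₀.2.diff hS⟩ with hA₂
  have hA₁ball : A₁ ∈ Metric.eball x₀ r := by
    rw [EMetric.mem_ball, msp_edist_def]
    refine lt_of_le_of_lt (measure_mono ?_) hΛSr
    intro x hx
    rw [Set.mem_symmDiff] at hx
    rcases hx with ⟨hx1, hx2⟩ | ⟨hx1, hx2⟩
    · rcases hx1 with h | h
      · exact absurd h hx2
      · exact h
    · exact absurd (Or.inl hx1) hx2
  have hA₂ball : A₂ ∈ Metric.eball x₀ r := by
    rw [EMetric.mem_ball, msp_edist_def]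
    refine lt_of_le_of_lt (measure_mono ?_) hΛSr
    intro x hx
    rw [Set.mem_symmDiff] at hx
    rcases hx with ⟨hx1, hx2⟩ | ⟨hx1, hx2⟩
    · exact absurd hx1.1 hx2
    · by_contra hxS
      exact hx2 ⟨hx1, hxS⟩
  have hA₁C := hball hA₁ball
  have hA₂C := hball hA₂ball
  rw [hC] at hA₁C hA₂C
  simp only [Set.mem_iInter, Set.mem_setOf_eq] at hA₁C hA₂C
  have hsplit : ∀ m : ℕ, ((σ m) S).toReal = ((σ m) A₁.1).toReal - ((σ m) A₂.1).toReal := by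
    intro m
    have hunion : (x₀.1 \ S) ∪ S = x₀.1 ∪ S := Set.diff_union_self
    have hadd := measure_union (μ := σ m)
      (disjoint_sdiff_self_left : Disjoint (x₀.1 \ S) S) hS
    rw [hunion] at hadd
    show ((σ m) S).toReal = ((σ m) (x₀.1 ∪ S)).toReal - ((σ m) (x₀.1 \ S)).toReal
    rw [hadd, ENNReal.toReal_add (measure_ne_top _ _) (measure_ne_top _ _)]
    ring
  have hbig : ∀ m, K ≤ m → ((σ m) S).toReal ≤ 3*ε/4 := by
    intro m hm
    have h1 := hA₁C m K hm le_rfl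
    have h2 := hA₂C m K hm le_rfl
    have h3 : ((σ K) S).toReal < ε/4 := ENNReal.toReal_lt_of_lt_ofReal (hδ₂ S hS hΛSδ₂)
    have e1 := hsplit m
    have e2 := hsplit K
    rw [abs_le] at h1 h2
    have hkey : ((σ m) S).toReal - ((σ K) S).toReal =
        (((σ m) A₁.1).toReal - ((σ K) A₁.1).toReal) -
        (((σ m) A₂.1).toReal - ((σ K) A₂.1).toReal) := by rw [e1, e2]; ring
    linarith [h1.1, h1.2, h2.1, h2.2]
  exact le_trans (le_of_tendsto (hconv S hS)
    (eventually_atTop.2 ⟨K, hbig⟩)) (by linarith)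

end VHS2


section Key

lemma key_ctbladd {X : Type*} [MeasurableSpace X]
    (p : X → Set X → ℝ) (hp : IsTransFun p)
    {n : ℕ} (μ : Fin n → Set X → ℝ)
    (hbase : ∀ i, μ i ∈ InvProbSet p)
    (hhull : InvProbSet p = convexHull ℝ (Set.range μ))
    (hsing : ∀ i j, i ≠ j → ∃ Ki Kj : Set X, MeasurableSet Ki ∧ MeasurableSet Kj ∧
      Disjoint Ki Kj ∧ μ i Ki = 1 ∧ μ j Kj = 1)
    (halpha : ∀ i (Kmu : Set X), MeasurableSet Kmu → μ i Kmu = 1 →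
      ∃ K : Set X, MeasurableSet K ∧ K ⊆ Kmu ∧ μ i K = 1 ∧ ∀ x ∈ K, p x K = 1)
    (i : Fin n) : IsCtblAdd (μ i) := by
  classical
  -- basic facts about the transition function
  have hp0 : ∀ x (E : Set X), MeasurableSet E → 0 ≤ p x E := fun x E hE => (hp.1 x E hE).1
  have hp1 : ∀ x (E : Set X), MeasurableSet E → p x E ≤ 1 := fun x E hE => (hp.1 x E hE).2
  -- Step 1 : pairwise disjoint supports
  choose KA KB hKAm hKBm hKdis hKA1 hKB1 using hsing
  set C : Fin n → Fin n → Set X := fun a b =>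
    if h : a < b then KA a b h.ne else if h' : b < a then KB b a h'.ne else Set.univ with hC
  have hCm : ∀ a b, MeasurableSet (C a b) := by
    intro a b; rw [hC]; dsimp only; split_ifs with h h'
    · exact hKAm a b h.ne
    · exact hKBm b a h'.ne
    · exact MeasurableSet.univ
  have hC1 : ∀ a b, μ a (C a b) = 1 := by
    intro a b; rw [hC]; dsimp only; split_ifs with h h'
    · exact hKA1 a b h.ne
    · exact hKB1 b a h'.ne
    · exact (hbase a).2.2.1
  have hCdis : ∀ a b, a ≠ b → Disjoint (C a b) (C b a) := by
    intro a b hab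
    rcases lt_or_gt_of_ne hab with h | h
    · have e1 : C a b = KA a b h.ne := by rw [hC]; dsimp only; rw [dif_pos h]
      have e2 : C b a = KB a b h.ne := by
        rw [hC]; dsimp only; rw [dif_neg (asymm h), dif_pos h]
      rw [e1, e2]; exact hKdis a b h.ne
    · have h' : b < a := h
      have e1 : C a b = KB b a h'.ne := by
        rw [hC]; dsimp only; rw [dif_neg (asymm h'), dif_pos h']
      have e2 : C b a = KA b a h'.ne := by rw [hC]; dsimp only; rw [dif_pos h']
      rw [e1, e2]; exact (hKdis b a h'.ne).symm
  set S : Fin n → Set X := fun a => ⋂ b, C a b with hSdef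
  have hSm : ∀ a, MeasurableSet (S a) := fun a => MeasurableSet.iInter fun b => hCm a b
  have hS1 : ∀ a, μ a (S a) = 1 := fun a =>
    fa_full_iInter (hbase a).1 (hbase a).2.1 (hbase a).2.2.1 (hCm a) (hC1 a)
  have hSdis : ∀ a b, a ≠ b → Disjoint (S a) (S b) := fun a b hab =>
    Set.disjoint_of_subset (Set.iInter_subset _ b) (Set.iInter_subset _ a) (hCdis a b hab)
  -- Step 2 : absorbing set inside S i
  obtain ⟨K, hKm, hKsub, hK1, hKabs⟩ := halpha i (S i) (hSm i) (hS1 i)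
  have hKne : K.Nonempty := by
    rw [Set.nonempty_iff_ne_empty]
    intro h
    rw [h, (hbase i).1.1] at hK1
    norm_num at hK1
  obtain ⟨x₀, hx₀⟩ := hKne
  -- Step 3 : the transition kernel as a family of measures
  have hμx : ∀ x : X, ∃ mx : Measure X, ∀ E : Set X, MeasurableSet E →
      mx E = ENNReal.ofReal (p x E) := by
    intro x
    refine ⟨Measure.ofMeasurable (fun s _ => ENNReal.ofReal (p x s)) ?_ ?_, ?_⟩
    · show ENNReal.ofReal (p x ∅) = 0
      rw [(hp.2.2.2 x).1.1]; simp
    · intro f hf hdis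
      show ENNReal.ofReal (p x (⋃ k, f k)) = ∑' k, ENNReal.ofReal (p x (f k))
      have hhs : HasSum (fun k => p x (f k)) (p x (⋃ k, f k)) := (hp.2.2.2 x).2 f hf hdis
      rw [← hhs.tsum_eq, ENNReal.ofReal_tsum_of_nonneg (fun k => hp0 x _ (hf k)) hhs.summable]
    · intro E hE; rw [Measure.ofMeasurable_apply E hE]
  choose q hq using hμx
  have hqmeas : Measurable q := by
    apply Measure.measurable_of_measurable_coe
    intro E hE
    have he : (fun x => q x E) = fun x => ENNReal.ofReal (p x E) := funext fun x => hq x E hE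
    rw [he]
    exact (hp.2.2.1 E hE).ennreal_ofReal
  have hqprob : ∀ x, IsProbabilityMeasure (q x) := fun x =>
    ⟨by rw [hq x _ MeasurableSet.univ, hp.2.1 x]; simp⟩
  -- Step 4 : the iterates of the kernel started from x₀
  set π : ℕ → Measure X := fun k => Nat.rec (Measure.dirac x₀) (fun _ m => m.bind q) k with hπdef
  have hπ0 : π 0 = Measure.dirac x₀ := rfl
  have hπapp : ∀ k (E : Set X), MeasurableSet E → π (k+1) E = ∫⁻ x, q x E ∂(π k) := by
    intro k E hE
    show ((π k).bind q) E = _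
    rw [Measure.bind_apply hE hqmeas.aemeasurable]
  have hπprob : ∀ k, IsProbabilityMeasure (π k) := by
    intro k; induction k with
    | zero => rw [hπ0]; infer_instance
    | succ k ih =>
        constructor
        rw [hπapp k _ MeasurableSet.univ]
        calc ∫⁻ x, q x Set.univ ∂(π k) = ∫⁻ _, 1 ∂(π k) :=
              lintegral_congr fun x => (hqprob x).measure_univ
          _ = π k Set.univ := lintegral_one
          _ = 1 := ih.measure_univ
  have hπK : ∀ k, π k K = 1 := by
    intro k; induction k with
    | zero =>
        rw [hπ0, Measure.dirac_apply' _ hKm]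
        simp [hx₀]
    | succ k ih =>
        haveI := hπprob k
        rw [hπapp k K hKm]
        have hcompl : (π k) Kᶜ = 0 := by
          rw [measure_compl hKm (measure_ne_top _ _), ih, measure_univ, tsub_self]
        have hae : ∀ᵐ x ∂(π k), q x K = 1 := by
          rw [Filter.eventually_iff, mem_ae_iff]
          refine measure_mono_null ?_ hcompl
          intro x hx
          simp only [Set.mem_compl_iff, Set.mem_setOf_eq] at hx ⊢
          intro hxK
          exact hx (by rw [hq x K hKm, hKabs x hxK]; simp)
        calc ∫⁻ x, q x K ∂(π k) = ∫⁻ _, 1 ∂(π k) := lintegral_congr_ae hae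
          _ = π k Set.univ := lintegral_one
          _ = 1 := (hπprob k).measure_univ
  -- Step 5 : Cesàro averages
  set σ : ℕ → Measure X := fun m => (((m:ℝ≥0∞)+1))⁻¹ • ∑ k ∈ Finset.range (m+1), π k with hσdef
  have hσapp : ∀ m (Q : Set X), σ m Q = ((m:ℝ≥0∞)+1)⁻¹ * ∑ k ∈ Finset.range (m+1), π k Q := by
    intro m Q
    rw [hσdef]
    dsimp only
    rw [Measure.smul_apply, Measure.finset_sum_apply, smul_eq_mul]
  have hm1ne : ∀ m : ℕ, ((m:ℝ≥0∞)+1) ≠ 0 := fun m => by simp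
  have hm1top : ∀ m : ℕ, ((m:ℝ≥0∞)+1) ≠ ∞ := fun m => by simp
  have hinvm : ∀ m : ℕ, ((m:ℝ≥0∞)+1)⁻¹ * ((m+1:ℕ) : ℝ≥0∞) = 1 := by
    intro m
    rw [show ((m+1 : ℕ) : ℝ≥0∞) = (m:ℝ≥0∞)+1 by push_cast; ring]
    exact ENNReal.inv_mul_cancel (hm1ne m) (hm1top m)
  have hσprob : ∀ m, IsProbabilityMeasure (σ m) := by
    intro m
    constructor
    rw [hσapp]
    have h1 : ∀ k ∈ Finset.range (m+1), π k Set.univ = 1 := fun k _ => (hπprob k).measure_univ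
    rw [Finset.sum_congr rfl h1, Finset.sum_const, Finset.card_range, nsmul_eq_mul, mul_one,
      hinvm m]
  have hσfin : ∀ m, IsFiniteMeasure (σ m) := fun m =>
    ⟨by rw [(hσprob m).measure_univ]; exact ENNReal.one_lt_top⟩
  have hσK : ∀ m, σ m K = 1 := by
    intro m
    rw [hσapp]
    have h1 : ∀ k ∈ Finset.range (m+1), π k K = 1 := fun k _ => hπK k
    rw [Finset.sum_congr rfl h1, Finset.sum_const, Finset.card_range, nsmul_eq_mul, mul_one,
      hinvm m]
  have hπfin : ∀ k, IsFiniteMeasure (π k) := fun k =>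
    ⟨by rw [(hπprob k).measure_univ]; exact ENNReal.one_lt_top⟩
  have hcast : ∀ m : ℕ, (((m:ℝ≥0∞)+1)⁻¹).toReal = ((m:ℝ)+1)⁻¹ := by
    intro m
    rw [show ((m:ℝ≥0∞)+1) = ((m+1:ℕ):ℝ≥0∞) by push_cast; ring]
    rw [ENNReal.toReal_inv, ENNReal.toReal_natCast]
    push_cast; ring
  -- integrability of p · E
  have hpint : ∀ (E : Set X), MeasurableSet E → ∀ (ρ : Measure X), IsFiniteMeasure ρ →
      Integrable (fun x => p x E) ρ := by
    intro E hE ρ hρ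
    haveI := hρ
    refine Integrable.mono' (integrable_const 1) (hp.2.2.1 E hE).aestronglyMeasurable ?_
    refine Filter.Eventually.of_forall fun x => ?_
    rw [Real.norm_eq_abs, abs_of_nonneg (hp0 x E hE)]
    exact hp1 x E hE
  -- integral identities
  have hintπ : ∀ k (E : Set X), MeasurableSet E →
      ∫ x, p x E ∂(π k) = (π (k+1) E).toReal := by
    intro k E hE
    haveI := hπprob k
    rw [integral_eq_lintegral_of_nonneg_ae (Filter.Eventually.of_forall fun x => hp0 x E hE)
      (hp.2.2.1 E hE).aestronglyMeasurable]
    rw [hπapp k E hE]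
    congr 1
    exact lintegral_congr fun x => ((hq x E hE).symm)
  have hintσ : ∀ m (E : Set X), MeasurableSet E → ∫ x, p x E ∂(σ m)
      = (((m:ℝ)+1))⁻¹ * ∑ k ∈ Finset.range (m+1), (π (k+1) E).toReal := by
    intro m E hE
    rw [hσdef]
    dsimp only
    rw [integral_smul_measure,
      integral_finset_sum_measure (fun k _ => hpint E hE (π k) (hπfin k))]
    rw [Finset.sum_congr rfl (fun k _ => hintπ k E hE)]
    rw [smul_eq_mul, hcast m]
  have hσtoReal : ∀ m (Q : Set X), MeasurableSet Q → (σ m Q).toReal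
      = (((m:ℝ)+1))⁻¹ * ∑ k ∈ Finset.range (m+1), (π k Q).toReal := by
    intro m Q _
    rw [hσapp, ENNReal.toReal_mul, hcast m]
    congr 1
    exact ENNReal.toReal_sum fun k _ => measure_ne_top _ _
  -- the layer-cake identity for σ m
  have hfirst : ∀ m (E : Set X), MeasurableSet E →
      (∫ t in Set.Ioi (0:ℝ), (σ m {x | t < p x E}).toReal) = ∫ x, p x E ∂(σ m) := by
    intro m E hE
    exact ((hpint E hE (σ m) (hσfin m)).integral_eq_integral_meas_lt
      (Filter.Eventually.of_forall fun x => hp0 x E hE)).symm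
  -- combination : the first layer-cake integral in terms of σ' m E plus error
  have hAm : ∀ m (E : Set X), MeasurableSet E →
      (∫ t in Set.Ioi (0:ℝ), (σ m {x | t < p x E}).toReal)
        = (σ m E).toReal + (((m:ℝ)+1))⁻¹ * ((π (m+1) E).toReal - (π 0 E).toReal) := by
    intro m E hE
    rw [hfirst m E hE, hintσ m E hE, hσtoReal m E hE]
    have hsum : ∑ k ∈ Finset.range (m+1), (π (k+1) E).toReal
        = ∑ k ∈ Finset.range (m+1), (π k E).toReal + (π (m+1) E).toReal - (π 0 E).toReal := by
      have h1 := Finset.sum_range_succ' (fun k => (π k E).toReal) (m+1)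
      have h2 := Finset.sum_range_succ (fun k => (π k E).toReal) (m+1)
      rw [h2] at h1
      linarith
    rw [hsum]
    ring
  -- bounds for σ
  have hσ01 : ∀ m (Q : Set X), (σ m Q).toReal ∈ Set.Icc (0:ℝ) 1 := by
    intro m Q
    haveI := hσfin m
    constructor
    · exact ENNReal.toReal_nonneg
    · have hle : σ m Q ≤ 1 := by
        rw [← (hσprob m).measure_univ]
        exact measure_mono (Set.subset_univ _)
      calc (σ m Q).toReal ≤ (1:ℝ≥0∞).toReal := ENNReal.toReal_mono (by simp) hle
        _ = 1 := by simp
  have hσmono : ∀ m (A B : Set X), A ⊆ B → (σ m A).toReal ≤ (σ m B).toReal := by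
    intro m A B hAB
    haveI := hσfin m
    exact ENNReal.toReal_mono (measure_ne_top _ _) (measure_mono hAB)
  have hπ01 : ∀ k (Q : Set X), (π k Q).toReal ∈ Set.Icc (0:ℝ) 1 := by
    intro k Q
    haveI := hπfin k
    constructor
    · exact ENNReal.toReal_nonneg
    · have hle : π k Q ≤ 1 := by
        rw [← (hπprob k).measure_univ]
        exact measure_mono (Set.subset_univ _)
      calc (π k Q).toReal ≤ (1:ℝ≥0∞).toReal := ENNReal.toReal_mono (by simp) hle
        _ = 1 := by simp
  -- Step 6 : ultrafilter limits are invariant and hence equal μ i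
  have hUlim : ∀ U : Ultrafilter ℕ, (↑U : Filter ℕ) ≤ atTop →
      ∀ E : Set X, MeasurableSet E →
        Tendsto (fun m => (σ m E).toReal) (↑U) (nhds (μ i E)) := by
    intro U hU
    have hex : ∀ Q : Set X, ∃ a : ℝ, a ∈ Set.Icc (0:ℝ) 1 ∧
        Tendsto (fun m => (σ m Q).toReal) (↑U) (nhds a) := by
      intro Q
      have hle : (↑(U.map fun m => (σ m Q).toReal) : Filter ℝ) ≤
          Filter.principal (Set.Icc (0:ℝ) 1) := by
        rw [Ultrafilter.coe_map, Filter.le_principal_iff, Filter.mem_map]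
        exact Filter.univ_mem' fun m => hσ01 m Q
      obtain ⟨a, haI, haU⟩ := isCompact_Icc.ultrafilter_le_nhds (U.map _) hle
      exact ⟨a, haI, haU⟩
    choose ν hν01 hνlim using hex
    have hνempty : ν ∅ = 0 := by
      refine tendsto_nhds_unique (hνlim ∅) ?_
      have : (fun m => (σ m ∅).toReal) = fun _ => (0:ℝ) := by
        funext m; rw [measure_empty]; simp
      rw [this]; exact tendsto_const_nhds
    have hνuniv : ν Set.univ = 1 := by
      refine tendsto_nhds_unique (hνlim Set.univ) ?_
      have : (fun m => (σ m Set.univ).toReal) = fun _ => (1:ℝ) := by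
        funext m; rw [(hσprob m).measure_univ]; simp
      rw [this]; exact tendsto_const_nhds
    have hνadd : IsFinAdd ν := by
      refine ⟨hνempty, fun E F hE hF hEF => ?_⟩
      refine tendsto_nhds_unique (hνlim (E ∪ F)) ?_
      have heq : (fun m => (σ m (E ∪ F)).toReal)
          = fun m => (σ m E).toReal + (σ m F).toReal := by
        funext m
        haveI := hσfin m
        rw [measure_union hEF hF, ENNReal.toReal_add (measure_ne_top _ _) (measure_ne_top _ _)]
      rw [heq]
      exact (hνlim E).add (hνlim F)
    have hνnn : IsNonnegSF ν := fun E _ => (hν01 E).1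
    have hνSk : ∀ k : Fin n, k ≠ i → ν (S k) = 0 := by
      intro k hk
      refine tendsto_nhds_unique (hνlim (S k)) ?_
      have heq : (fun m => (σ m (S k)).toReal) = fun _ => (0:ℝ) := by
        funext m
        haveI := hσfin m
        have hnull : σ m Kᶜ = 0 := by
          rw [measure_compl hKm (measure_ne_top _ _), hσK m, (hσprob m).measure_univ, tsub_self]
        have hsub : S k ⊆ Kᶜ := by
          intro x hx
          intro hxK
          exact Set.disjoint_left.1 (hSdis k i hk) hx (hKsub hxK)
        rw [measure_mono_null hsub hnull]
        simp
      rw [heq]; exact tendsto_const_nhds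
    -- invariance of ν
    have hνinv : ∀ E : Set X, MeasurableSet E → markovOp p ν E = ν E := by
      intro E hE
      set g : ℕ → ℝ → ℝ := fun m t => (σ m {x | t < p x E}).toReal with hg
      set g' : ℝ → ℝ := fun t => ν {x | t < p x E} with hg'
      have hmonog : ∀ m, Antitone (g m) := by
        intro m t t' htt'
        exact hσmono m _ _ (fun x hx => lt_of_le_of_lt htt' hx)
      have h0g : ∀ m t, 0 ≤ g m t := fun m t => (hσ01 m _).1
      have h1g : ∀ m t, g m t ≤ 1 := fun m t => (hσ01 m _).2
      have hvang : ∀ m t, 1 ≤ t → g m t = 0 := by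
        intro m t ht
        have hempty : {x | t < p x E} = ∅ := by
          ext x
          simp only [Set.mem_setOf_eq, Set.mem_empty_iff_false, iff_false, not_lt]
          exact le_trans (hp1 x E hE) ht
        rw [hg]
        dsimp only
        rw [hempty, measure_empty]
        simp
      have hlimg : ∀ t, Tendsto (fun m => g m t) (↑U) (nhds (g' t)) := fun t => hνlim _
      have hmonog' : Antitone g' := by
        intro t t' htt'
        refine le_of_tendsto_of_tendsto' (hlimg t') (hlimg t) fun m => ?_
        exact hmonog m htt'
      have h0g' : ∀ t, 0 ≤ g' t := fun t => (hν01 _).1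
      have h1g' : ∀ t, g' t ≤ 1 := fun t => (hν01 _).2
      have hvang' : ∀ t, 1 ≤ t → g' t = 0 := by
        intro t ht
        refine tendsto_nhds_unique (hlimg t) ?_
        have : (fun m => g m t) = fun _ => (0:ℝ) := funext fun m => hvang m t ht
        rw [this]; exact tendsto_const_nhds
      have htendInt := ulim_integral U g g' hmonog hmonog' h0g h1g h0g' h1g' hvang hvang' hlimg
      -- identify the integrals
      have herrb : Tendsto (fun m : ℕ => 2 * (((m:ℝ)+1))⁻¹) atTop (nhds 0) := by
        have h1 := tendsto_one_div_add_atTop_nhds_zero_nat (𝕜 := ℝ)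
        have h2 := h1.const_mul (2:ℝ)
        simp only [mul_zero] at h2
        refine h2.congr fun m => ?_
        rw [one_div]
      have herr : Tendsto (fun m : ℕ => (((m:ℝ)+1))⁻¹ * ((π (m+1) E).toReal - (π 0 E).toReal))
          atTop (nhds 0) := by
        refine squeeze_zero_norm ?_ herrb
        intro m
        rw [Real.norm_eq_abs, abs_mul]
        have h1 : |(((m:ℝ)+1))⁻¹| = (((m:ℝ)+1))⁻¹ := by
          rw [abs_of_nonneg]; positivity
        have h2 : |(π (m+1) E).toReal - (π 0 E).toReal| ≤ 2 := by
          rw [abs_le]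
          have a1 := hπ01 (m+1) E
          have a2 := hπ01 0 E
          constructor <;> [linarith [a1.1, a2.2]; linarith [a1.2, a2.1]]
        rw [h1, mul_comm]
        have hpos : (0:ℝ) ≤ (((m:ℝ)+1))⁻¹ := by positivity
        nlinarith
      have hAmtend : Tendsto (fun m => ∫ t in Set.Ioi (0:ℝ), g m t) (↑U) (nhds (ν E)) := by
        have heq : (fun m : ℕ => ∫ t in Set.Ioi (0:ℝ), g m t)
            = fun m : ℕ => (σ m E).toReal
              + (((m:ℝ)+1))⁻¹ * ((π (m+1) E).toReal - (π 0 E).toReal) := by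
          funext m
          exact hAm m E hE
        rw [heq]
        have := (hνlim E).add (herr.mono_left hU)
        simpa using this
      have hIg' : ∫ t in Set.Ioi (0:ℝ), g' t = ν E := tendsto_nhds_unique htendInt hAmtend
      -- now compute markovOp p ν E
      show (∫ t in Set.Ioi (0:ℝ), ν {x | t < p x E})
          - (∫ t in Set.Ioi (0:ℝ), ν {x | p x E < -t}) = ν E
      have hsecond : ∫ t in Set.Ioi (0:ℝ), ν {x | p x E < -t} = 0 := by
        rw [setIntegral_congr_fun measurableSet_Ioi (g := fun _ => (0:ℝ)) ?_, integral_zero]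
        intro t ht
        have hempty : {x | p x E < -t} = ∅ := by
          ext x
          simp only [Set.mem_setOf_eq, Set.mem_empty_iff_false, iff_false, not_lt]
          have : (0:ℝ) < t := ht
          linarith [hp0 x E hE]
        show ν {x | p x E < -t} = 0
        rw [hempty, hνempty]
      rw [hsecond, sub_zero]
      exact hIg'
    have hνmem : ν ∈ InvProbSet p := ⟨hνadd, hνnn, hνuniv, hνinv⟩
    -- use the convex hull structure
    rw [hhull, convexHull_eq] at hνmem
    obtain ⟨ι, t, w, z, hw0, hw1, hz, hcm⟩ := hνmem
    have hrep : ∀ Q : Set X, ν Q = ∑ l ∈ t, w l * z l Q := by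
      intro Q
      rw [← hcm, Finset.centerMass_eq_of_sum_1 _ _ hw1]
      rw [Finset.sum_apply]
      simp [Pi.smul_apply, smul_eq_mul]
    have hzero : ∀ l ∈ t, z l = μ i ∨ w l = 0 := by
      intro l hl
      obtain ⟨k, hk⟩ := hz l hl
      by_cases hki : k = i
      · left; rw [← hk, hki]
      · right
        have h0 : ν (S k) = 0 := hνSk k hki
        rw [hrep (S k)] at h0
        have hterms : ∀ l' ∈ t, 0 ≤ w l' * z l' (S k) := by
          intro l' hl'
          obtain ⟨k', hk'⟩ := hz l' hl'
          exact mul_nonneg (hw0 l' hl') (by rw [← hk']; exact (hbase k').2.1 _ (hSm k))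
        have hterm0 : w l * z l (S k) = 0 := by
          by_contra hne
          have hpos : 0 < w l * z l (S k) := lt_of_le_of_ne (hterms l hl) (Ne.symm hne)
          have hsum_pos : 0 < ∑ l' ∈ t, w l' * z l' (S k) :=
            Finset.sum_pos' hterms ⟨l, hl, hpos⟩
          linarith
        have hz1 : z l (S k) = 1 := by rw [← hk]; exact hS1 k
        rw [hz1, mul_one] at hterm0
        exact hterm0
    have hν_eq : ∀ Q : Set X, ν Q = μ i Q := by
      intro Q
      rw [hrep Q]
      have hcongr : ∀ l ∈ t, w l * z l Q = w l * μ i Q := by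
        intro l hl
        rcases hzero l hl with h | h
        · rw [h]
        · rw [h]; ring
      rw [Finset.sum_congr rfl hcongr, ← Finset.sum_mul, hw1, one_mul]
    intro E _
    rw [← hν_eq E]
    exact hνlim E
  -- Step 7 : setwise convergence along atTop
  have hconv : ∀ E : Set X, MeasurableSet E →
      Tendsto (fun m => (σ m E).toReal) atTop (nhds (μ i E)) := by
    intro E hE
    rw [tendsto_iff_ultrafilter]
    exact fun U hU => hUlim U hU E hE
  -- Step 8 : a dominating countably additive measure
  set Λ : Measure X := Measure.sum (fun k => ((2:ℝ≥0∞)⁻¹ ^ (k+1)) • π k) with hΛdef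
  have hΛapp : ∀ Q : Set X, MeasurableSet Q → Λ Q = ∑' k, (2:ℝ≥0∞)⁻¹ ^ (k+1) * π k Q := by
    intro Q hQ
    rw [hΛdef, Measure.sum_apply _ hQ]
    exact tsum_congr fun k => by rw [Measure.smul_apply, smul_eq_mul]
  haveI hΛfin : IsFiniteMeasure Λ := by
    constructor
    rw [hΛapp Set.univ MeasurableSet.univ]
    have hgeo : ∀ k : ℕ, (2:ℝ≥0∞)⁻¹ ^ (k+1) * π k Set.univ = (2:ℝ≥0∞)⁻¹ ^ (1+k) := by
      intro k; rw [(hπprob k).measure_univ, mul_one, add_comm]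
    rw [tsum_congr hgeo, geom_tail 1]
    rw [pow_one]
    rw [ENNReal.inv_mul_cancel (by norm_num) (by norm_num)]
    exact ENNReal.one_lt_top
  have habsσ : ∀ m, σ m ≪ Λ := by
    intro m
    refine Measure.AbsolutelyContinuous.mk fun Q hQm hQ0 => ?_
    have hπQ : ∀ k, π k Q = 0 := by
      intro k
      have hle : (2:ℝ≥0∞)⁻¹ ^ (k+1) * π k Q ≤ Λ Q := by
        rw [hΛapp Q hQm]; exact ENNReal.le_tsum k
      rw [hQ0, le_zero_iff] at hle
      rcases mul_eq_zero.1 hle with h | h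
      · exact absurd h (pow_ne_zero _ (by norm_num))
      · exact h
    rw [hσapp]
    rw [Finset.sum_congr rfl (fun k _ => hπQ k)]
    simp
  -- Step 9 : countable additivity
  intro E hE hdis
  set T : Set X := ⋃ k, E k with hT
  have hTm : MeasurableSet T := MeasurableSet.iUnion hE
  set R : ℕ → Set X := fun N => T \ ⋃ k ∈ Finset.range N, E k with hR
  have hbiUm : ∀ N : ℕ, MeasurableSet (⋃ k ∈ Finset.range N, E k) :=
    fun N => MeasurableSet.biUnion (Finset.range N).countable_toSet fun k _ => hE k
  have hRm : ∀ N, MeasurableSet (R N) := fun N => hTm.diff (hbiUm N)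
  have hpartial : ∀ N, μ i T = (∑ k ∈ Finset.range N, μ i (E k)) + μ i (R N) := by
    intro N
    have hsub : (⋃ k ∈ Finset.range N, E k) ⊆ T :=
      Set.iUnion₂_subset fun k _ => Set.subset_iUnion E k
    have hd := fa_diff (hbase i).1 hTm (hbiUm N) hsub
    rw [hd, fa_sum_range (hbase i).1 hE hdis N]
  have hΛR : Tendsto (fun N => Λ (R N)) atTop (nhds 0) := by
    have hanti : Antitone R := by
      intro N N' hNN' x hx
      refine ⟨hx.1, fun hmem => hx.2 ?_⟩
      rw [Set.mem_iUnion₂] at hmem ⊢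
      obtain ⟨k, hk, hxk⟩ := hmem
      exact ⟨k, Finset.mem_range.2 (lt_of_lt_of_le (Finset.mem_range.1 hk) hNN'), hxk⟩
    have hiInter : ⋂ N, R N = ∅ := by
      ext x
      simp only [Set.mem_iInter, Set.mem_empty_iff_false, iff_false]
      intro hx
      have hxT : x ∈ T := (hx 0).1
      rw [hT, Set.mem_iUnion] at hxT
      obtain ⟨k, hxk⟩ := hxT
      exact (hx (k+1)).2
        (Set.mem_iUnion₂.2 ⟨k, Finset.mem_range.2 (Nat.lt_succ_self k), hxk⟩)
    have := tendsto_measure_iInter_atTop (fun N => (hRm N).nullMeasurableSet) hanti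
      ⟨0, measure_ne_top Λ _⟩
    rw [show ((fun N => Λ (R N)) : ℕ → ℝ≥0∞) = Λ ∘ R from rfl]
    rw [hiInter] at this
    rw [measure_empty] at this
    exact this
  have hμR : Tendsto (fun N => μ i (R N)) atTop (nhds 0) := by
    refine Metric.tendsto_atTop.2 fun ε hε => ?_
    haveI : ∀ m, IsFiniteMeasure (σ m) := hσfin
    obtain ⟨δ, hδpos, hδ⟩ := vhs Λ σ habsσ (fun Q => μ i Q) hconv (half_pos hε)
    have hev : ∀ᶠ N in atTop, Λ (R N) < δ := hΛR.eventually_lt_const hδpos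
    obtain ⟨N₀, hN₀⟩ := eventually_atTop.1 hev
    refine ⟨N₀, fun N hN => ?_⟩
    have h1 : μ i (R N) ≤ ε/2 := hδ (R N) (hRm N) (hN₀ N hN)
    have h2 : 0 ≤ μ i (R N) := (hbase i).2.1 _ (hRm N)
    rw [Real.dist_eq, sub_zero, abs_of_nonneg h2]
    linarith
  rw [hasSum_iff_tendsto_nat_of_nonneg (fun k => (hbase i).2.1 _ (hE k))]
  have heq : (fun N => ∑ k ∈ Finset.range N, μ i (E k)) = fun N => μ i T - μ i (R N) := by
    funext N
    have := hpartial N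
    linarith
  rw [heq]
  have hfinal := (tendsto_const_nhds (x := μ i T) (f := (atTop : Filter ℕ))).sub hμR
  simpa using hfinal



end Key

/-- Theorem 1: if `Δ_ba` has finite dimension `n`, is the convex hull of `n` pairwise
singular measures each satisfying condition (α), then every invariant finitely additive
probability measure is countably additive. -/
theorem theorem1 {X : Type*} [MeasurableSpace X]
    (hsingl : ∀ x : X, MeasurableSet ({x} : Set X))
    (p : X → Set X → ℝ) (hp : IsTransFun p)
    (n : ℕ) (hn : 0 < n) (μ : Fin n → Set X → ℝ)
    (hbase : ∀ i, μ i ∈ InvProbSet p)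
    (hdim : Module.finrank ℝ (Submodule.span ℝ (InvProbSet p)) = n)
    (hhull : InvProbSet p = convexHull ℝ (Set.range μ))
    (hsing : ∀ i j, i ≠ j → ∃ Ki Kj : Set X, MeasurableSet Ki ∧ MeasurableSet Kj ∧
      Disjoint Ki Kj ∧ μ i Ki = 1 ∧ μ j Kj = 1)
    (halpha : ∀ i (Kmu : Set X), MeasurableSet Kmu → μ i Kmu = 1 →
      ∃ K : Set X, MeasurableSet K ∧ K ⊆ Kmu ∧ μ i K = 1 ∧ ∀ x ∈ K, p x K = 1) :
    ∀ ν ∈ InvProbSet p, IsCtblAdd ν := by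
  classical
  intro ν hν
  have hkey : ∀ j : Fin n, IsCtblAdd (μ j) := fun j =>
    key_ctbladd p hp μ hbase hhull hsing halpha j
  have hνhull : ν ∈ convexHull ℝ (Set.range μ) := by rw [← hhull]; exact hν
  rw [convexHull_eq] at hνhull
  obtain ⟨ι, t, w, z, hw0, hw1, hz, hcm⟩ := hνhull
  have hrep : ∀ Q : Set X, ν Q = ∑ l ∈ t, w l * z l Q := by
    intro Q
    rw [← hcm, Finset.centerMass_eq_of_sum_1 _ _ hw1, Finset.sum_apply]
    simp [Pi.smul_apply, smul_eq_mul]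
  intro E hE hdis
  have hterm : ∀ l ∈ t, HasSum (fun k => w l * z l (E k)) (w l * z l (⋃ k, E k)) := by
    intro l hl
    obtain ⟨j, hj⟩ := hz l hl
    have hs := hkey j E hE hdis
    rw [hj] at hs
    exact hs.mul_left (w l)
  have hsum := hasSum_sum hterm
  have h1 : (fun k => ν (E k)) = fun k => ∑ l ∈ t, w l * z l (E k) :=
    funext fun k => hrep (E k)
  rw [h1, hrep (⋃ k, E k)]
  exact hsum
end

section
/- Theorem 8.3 of [4]: Let a countably additive transition function p on a measurable space (X,Σ) be given, with Markov operator A on ba(X,Σ). If the Markov chain has exactly one invariant finitely additive probability measure (Δ_ba is a singleton {μ}), then this measure μ is countably additive. -/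
open MeasureTheory Set Filter Topology Function

open scoped ENNReal NNReal


section Chain

lemma chain_reach {P : ℕ → Prop} {a b : ℕ} (hab : a ≤ b) (ha : P a)
    (h : ∀ j, a ≤ j → j < b → P j → P (j + 1)) : P b := by
  induction b, hab using Nat.le_induction with
  | base => exact ha
  | succ n hn ih =>
      exact h n hn (Nat.lt_succ_self n)
        (ih (fun j hj hj2 hPj => h j hj (Nat.lt_succ_of_lt hj2) hPj))

lemma exists_flip {P : ℕ → Prop} {a b : ℕ} (hab : a ≤ b) (ha : P a) (hb : ¬ P b) :
    ∃ j, a ≤ j ∧ j < b ∧ P j ∧ ¬ P (j + 1) := by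
  by_contra hcon
  push_neg at hcon
  exact hb (chain_reach hab ha hcon)

end Chain

section Riemann

variable {h : ℝ → ℝ}

lemma anti_integrableOn_Ioc (ha : Antitone h) :
    IntegrableOn h (Ioc (0:ℝ) 1) := by
  exact (intervalIntegrable_iff_integrableOn_Ioc_of_le zero_le_one).mp ha.intervalIntegrable

lemma anti_integrableOn_Ioi (ha : Antitone h) (hv : ∀ t, (1:ℝ) ≤ t → h t = 0) :
    IntegrableOn h (Ioi (0:ℝ)) := by
  rw [← Set.Ioc_union_Ioi_eq_Ioi (zero_le_one (α := ℝ))]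
  refine (anti_integrableOn_Ioc ha).union ?_
  refine (integrableOn_congr_fun (fun t ht => hv t (le_of_lt ht)) measurableSet_Ioi).mpr ?_
  exact integrableOn_zero

lemma anti_integral_Ioi (ha : Antitone h) (hv : ∀ t, (1:ℝ) ≤ t → h t = 0) :
    ∫ t in Ioi (0:ℝ), h t = ∫ t in Ioc (0:ℝ) 1, h t := by
  rw [← Set.Ioc_union_Ioi_eq_Ioi (zero_le_one (α := ℝ))]
  rw [setIntegral_union (Set.Ioc_disjoint_Ioi le_rfl) measurableSet_Ioi
    (anti_integrableOn_Ioc ha)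
    ((integrableOn_congr_fun (fun t ht => hv t (le_of_lt ht)) measurableSet_Ioi).mpr
      integrableOn_zero)]
  rw [setIntegral_congr_fun measurableSet_Ioi (fun t ht => hv t (le_of_lt ht))]
  simp

/-- The lower Riemann sum with mesh `1/m`. -/
noncomputable def lowSum (m : ℕ) (h : ℝ → ℝ) : ℝ :=
  ∑ i ∈ Finset.range m, (1 / (m:ℝ)) * h (((i:ℝ) + 1) / m)

lemma integral_Ioc_eq_sum (ha : Antitone h) {m : ℕ} (hm : 0 < m) :
    ∫ t in Ioc (0:ℝ) 1, h t
      = ∑ i ∈ Finset.range m, ∫ t in ((i:ℝ)/m)..(((i:ℝ)+1)/m), h t := by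
  have key := intervalIntegral.sum_integral_adjacent_intervals
    (f := h) (μ := volume) (a := fun k => (k:ℝ)/m) (n := m)
    (fun k _ => ha.intervalIntegrable)
  have key2 : ∑ i ∈ Finset.range m, ∫ x in ((i:ℝ)/m)..(((i:ℝ)+1)/m), h x
      = ∫ x in (0:ℝ)..1, h x := by
    simpa [div_self (show (m:ℝ) ≠ 0 from Nat.cast_ne_zero.mpr hm.ne')] using key
  rw [key2, intervalIntegral.integral_of_le zero_le_one]

lemma piece_le (ha : Antitone h) {m : ℕ} (hm : 0 < m) (i : ℕ) :
    ∫ t in ((i:ℝ)/m)..(((i:ℝ)+1)/m), h t ≤ (1/(m:ℝ)) * h ((i:ℝ)/m) := by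
  have hmR : (0:ℝ) < m := Nat.cast_pos.mpr hm
  have hle : ((i:ℝ))/m ≤ ((i:ℝ)+1)/m := by gcongr; linarith
  have := intervalIntegral.integral_mono_on (μ := volume) hle ha.intervalIntegrable
    intervalIntegrable_const (g := fun _ => h ((i:ℝ)/m))
    (fun x hx => ha hx.1)
  rw [intervalIntegral.integral_const] at this
  calc ∫ t in ((i:ℝ)/m)..(((i:ℝ)+1)/m), h t ≤ _ := this
    _ = (1/(m:ℝ)) * h ((i:ℝ)/m) := by
        rw [smul_eq_mul]; congr 1; field_simp; ring

lemma le_piece (ha : Antitone h) {m : ℕ} (hm : 0 < m) (i : ℕ) :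
    (1/(m:ℝ)) * h (((i:ℝ)+1)/m) ≤ ∫ t in ((i:ℝ)/m)..(((i:ℝ)+1)/m), h t := by
  have hmR : (0:ℝ) < m := Nat.cast_pos.mpr hm
  have hle : ((i:ℝ))/m ≤ ((i:ℝ)+1)/m := by gcongr; linarith
  have := intervalIntegral.integral_mono_on (μ := volume) hle
    intervalIntegrable_const ha.intervalIntegrable (f := fun _ => h (((i:ℝ)+1)/m))
    (fun x hx => ha hx.2)
  rw [intervalIntegral.integral_const] at this
  calc (1/(m:ℝ)) * h (((i:ℝ)+1)/m)
      = (((i:ℝ)+1)/m - (i:ℝ)/m) • h (((i:ℝ)+1)/m) := by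
        rw [smul_eq_mul]; congr 1; field_simp; ring
    _ ≤ _ := this

lemma lowSum_le_integral (ha : Antitone h) (hv : ∀ t, (1:ℝ) ≤ t → h t = 0)
    {m : ℕ} (hm : 0 < m) :
    lowSum m h ≤ ∫ t in Ioi (0:ℝ), h t := by
  rw [anti_integral_Ioi ha hv, integral_Ioc_eq_sum ha hm]
  exact Finset.sum_le_sum fun i _ => le_piece ha hm i

lemma integral_le_lowSum (ha : Antitone h) (h0 : ∀ t, 0 ≤ h t) (h1 : ∀ t, h t ≤ 1)
    (hv : ∀ t, (1:ℝ) ≤ t → h t = 0) {m : ℕ} (hm : 0 < m) :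
    ∫ t in Ioi (0:ℝ), h t ≤ lowSum m h + 1/(m:ℝ) := by
  have hmR : (0:ℝ) < m := Nat.cast_pos.mpr hm
  have hup : ∫ t in Ioi (0:ℝ), h t ≤ ∑ i ∈ Finset.range m, (1/(m:ℝ)) * h ((i:ℝ)/m) := by
    rw [anti_integral_Ioi ha hv, integral_Ioc_eq_sum ha hm]
    exact Finset.sum_le_sum fun i _ => piece_le ha hm i
  refine hup.trans ?_
  -- reindex: ∑_{i<m} c*h(i/m) = ∑_{i<m} c*h((i+1)/m) + c*h(0) - c*h(m/m)
  have hre : ∑ i ∈ Finset.range m, (1/(m:ℝ)) * h ((i:ℝ)/m)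
      = lowSum m h + (1/(m:ℝ)) * h 0 - (1/(m:ℝ)) * h (((m:ℕ):ℝ)/m) := by
    have e1 : ∑ i ∈ Finset.range (m+1), (1/(m:ℝ)) * h ((i:ℝ)/m)
        = ∑ i ∈ Finset.range m, (1/(m:ℝ)) * h (((i:ℝ)+1)/m) + (1/(m:ℝ)) * h (((0:ℕ):ℝ)/m) := by
      rw [Finset.sum_range_succ']
      congr 1
      exact Finset.sum_congr rfl (fun i _ => by norm_num)
    have e2 : ∑ i ∈ Finset.range (m+1), (1/(m:ℝ)) * h ((i:ℝ)/m)
        = ∑ i ∈ Finset.range m, (1/(m:ℝ)) * h ((i:ℝ)/m) + (1/(m:ℝ)) * h (((m:ℕ):ℝ)/m) := by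
      rw [Finset.sum_range_succ]
    have := e1.symm.trans e2
    simp only [Nat.cast_zero, zero_div] at this
    unfold lowSum
    linarith
  rw [hre]
  have hmm : h (((m:ℕ):ℝ)/m) = h 1 := by
    rw [div_self (show (m:ℝ) ≠ 0 from Nat.cast_ne_zero.mpr hm.ne')]
  have h10 : h 1 = 0 := hv 1 le_rfl
  have hb : (1/(m:ℝ)) * h 0 ≤ 1/(m:ℝ) := by
    have := h1 0
    have hpos : 0 < 1/(m:ℝ) := by positivity
    nlinarith [h0 0]
  rw [hmm, h10]
  linarith

end Riemann

section LimC

lemma tendsto_integral_antitone (L : Filter ℕ) [L.NeBot] {g : ℕ → ℝ → ℝ} {G : ℝ → ℝ}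
    (hga : ∀ n, Antitone (g n)) (hg0 : ∀ n t, 0 ≤ g n t) (hg1 : ∀ n t, g n t ≤ 1)
    (hgv : ∀ n t, (1:ℝ) ≤ t → g n t = 0)
    (hGa : Antitone G) (hG0 : ∀ t, 0 ≤ G t) (hG1 : ∀ t, G t ≤ 1)
    (hGv : ∀ t, (1:ℝ) ≤ t → G t = 0)
    (hpt : ∀ t, Tendsto (fun n => g n t) L (𝓝 (G t))) :
    Tendsto (fun n => ∫ t in Ioi (0:ℝ), g n t) L (𝓝 (∫ t in Ioi (0:ℝ), G t)) := by
  rw [Metric.tendsto_nhds]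
  intro ε hε
  obtain ⟨m, hm⟩ := exists_nat_gt (3/ε)
  have hm0 : 0 < m := by
    have : (0:ℝ) < 3/ε := by positivity
    exact_mod_cast Nat.cast_pos.mp (this.trans hm)
  have hmR : (0:ℝ) < m := Nat.cast_pos.mpr hm0
  have hεm : 3 < ε * m := by
    rw [div_lt_iff₀ hε] at hm; linarith
  have hm3 : (1:ℝ)/m < ε/3 := by
    rw [div_lt_div_iff₀ hmR (by norm_num : (0:ℝ) < 3)]; linarith
  have hS : Tendsto (fun n => lowSum m (g n)) L (𝓝 (lowSum m G)) := by
    unfold lowSum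
    exact tendsto_finset_sum _ (fun i _ => (hpt _).const_mul _)
  have hev : ∀ᶠ n in L, |lowSum m (g n) - lowSum m G| < ε/3 := by
    have := Metric.tendsto_nhds.mp hS (ε/3) (by positivity)
    simpa [Real.dist_eq] using this
  filter_upwards [hev] with n hn
  rw [Real.dist_eq]
  have b1 : lowSum m (g n) ≤ ∫ t in Ioi (0:ℝ), g n t :=
    lowSum_le_integral (hga n) (hgv n) hm0
  have b2 : ∫ t in Ioi (0:ℝ), g n t ≤ lowSum m (g n) + 1/m :=
    integral_le_lowSum (hga n) (hg0 n) (hg1 n) (hgv n) hm0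
  have b3 : lowSum m G ≤ ∫ t in Ioi (0:ℝ), G t := lowSum_le_integral hGa hGv hm0
  have b4 : ∫ t in Ioi (0:ℝ), G t ≤ lowSum m G + 1/m :=
    integral_le_lowSum hGa hG0 hG1 hGv hm0
  rw [abs_lt] at hn ⊢
  constructor <;> [linarith; linarith]

end LimC


section MSetSpace

variable {X : Type*} [MeasurableSpace X]

/-- The measure algebra: measurable sets with the `lam`-symmetric-difference pseudometric. -/
def MSet (lam : Measure X) : Type _ := {S : Set X // MeasurableSet S}

variable {lam : Measure X} [IsFiniteMeasure lam]

noncomputable instance : PseudoMetricSpace (MSet lam) where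
  dist S T := (lam (symmDiff S.1 T.1)).toReal
  dist_self S := by simp [symmDiff_self]
  dist_comm S T := by rw [symmDiff_comm]
  dist_triangle S T U := by
    have h1 : lam (symmDiff S.1 U.1) ≤ lam (symmDiff S.1 T.1) + lam (symmDiff T.1 U.1) :=
      le_trans (measure_mono (Set.subset_def ▸ symmDiff_triangle S.1 T.1 U.1))
        (measure_union_le _ _)
    have h2 := ENNReal.toReal_mono (a := lam (symmDiff S.1 U.1))
      (by finiteness) h1
    rwa [ENNReal.toReal_add (by finiteness) (by finiteness)] at h2

lemma MSet.dist_def (S T : MSet lam) : dist S T = (lam (symmDiff S.1 T.1)).toReal := rfl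

instance : CompleteSpace (MSet lam) := by
  apply Metric.complete_of_convergent_controlled_sequences (fun n => (1/2:ℝ)^n)
    (fun n => by positivity)
  intro u hu
  set T : Set X := ⋂ N, ⋃ k, (u (N + k)).1 with hT
  have hTm : MeasurableSet T :=
    MeasurableSet.iInter fun N => MeasurableSet.iUnion fun k => (u (N + k)).2
  refine ⟨⟨T, hTm⟩, ?_⟩
  refine tendsto_iff_dist_tendsto_zero.mpr ?_
  have key : ∀ n, dist (u n) (⟨T, hTm⟩ : MSet lam) ≤ 2 * (1/2:ℝ)^n := by
    intro n
    have hsub : symmDiff (u n).1 T ⊆ ⋃ j, symmDiff (u (n + j)).1 (u (n + j + 1)).1 := by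
      intro x hx
      rw [Set.mem_symmDiff] at hx
      rcases hx with ⟨hxu, hxT⟩ | ⟨hxT, hxu⟩
      · -- x ∈ u n, x ∉ T : ∃ N, ∀ k, x ∉ u (N + k)
        rw [hT, Set.mem_iInter] at hxT
        push_neg at hxT
        obtain ⟨N, hN⟩ := hxT
        rw [Set.mem_iUnion] at hN
        push_neg at hN
        have hb : ¬ x ∈ (u (N + n)).1 := hN n
        obtain ⟨j, hj1, hj2, hj3, hj4⟩ :=
          exists_flip (P := fun j => x ∈ (u j).1) (Nat.le_add_left n N) hxu hb
        refine Set.mem_iUnion.mpr ⟨j - n, ?_⟩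
        rw [Nat.add_sub_cancel' hj1]
        exact Set.mem_symmDiff.mpr (Or.inl ⟨hj3, hj4⟩)
      · -- x ∈ T, x ∉ u n
        have : x ∈ ⋃ k, (u (n + k)).1 := by
          rw [hT, Set.mem_iInter] at hxT; exact hxT n
        rw [Set.mem_iUnion] at this
        obtain ⟨k, hk⟩ := this
        obtain ⟨j, hj1, hj2, hj3, hj4⟩ :=
          exists_flip (P := fun j => ¬ x ∈ (u j).1) (Nat.le_add_right n k) hxu
            (by simpa using hk)
        refine Set.mem_iUnion.mpr ⟨j - n, ?_⟩
        rw [Nat.add_sub_cancel' hj1]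
        exact Set.mem_symmDiff.mpr (Or.inr ⟨not_not.mp hj4, hj3⟩)
    have hmeas : lam (symmDiff (u n).1 T) ≤ ∑' j, lam (symmDiff (u (n + j)).1 (u (n + j + 1)).1) :=
      le_trans (measure_mono hsub) (measure_iUnion_le _)
    have hterm : ∀ j, lam (symmDiff (u (n + j)).1 (u (n + j + 1)).1)
        ≤ ENNReal.ofReal ((1/2:ℝ)^(n+j)) := by
      intro j
      have := hu (n + j) (n + j) (n + j + 1) le_rfl (Nat.le_succ _)
      rw [MSet.dist_def] at this
      exact (ENNReal.le_ofReal_iff_toReal_le (by finiteness) (by positivity)).mpr this.le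
    have hsum : ∑' j, lam (symmDiff (u (n + j)).1 (u (n + j + 1)).1)
        ≤ ENNReal.ofReal (2 * (1/2:ℝ)^n) := by
      calc ∑' j, lam (symmDiff (u (n + j)).1 (u (n + j + 1)).1)
          ≤ ∑' j, ENNReal.ofReal ((1/2:ℝ)^(n+j)) := ENNReal.tsum_le_tsum hterm
        _ = ENNReal.ofReal (∑' j : ℕ, (1/2:ℝ)^(n+j)) := by
            have hsummable : Summable (fun j : ℕ => (1/2:ℝ)^(n+j)) := by
              simpa [pow_add] using
                (summable_geometric_of_lt_one (by norm_num : (0:ℝ) ≤ 1/2)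
                  (by norm_num : (1/2:ℝ) < 1)).mul_left ((1/2:ℝ)^n)
            rw [ENNReal.ofReal_tsum_of_nonneg (fun j => by positivity) hsummable]
        _ ≤ ENNReal.ofReal (2 * (1/2:ℝ)^n) := by
            apply ENNReal.ofReal_le_ofReal
            have heq : ∑' j : ℕ, (1/2:ℝ)^(n+j) = (1/2:ℝ)^n * ∑' j : ℕ, (1/2:ℝ)^j := by
              rw [← tsum_mul_left]
              exact tsum_congr fun j => by rw [pow_add]
            rw [heq, tsum_geometric_of_lt_one (by norm_num) (by norm_num)]
            norm_num [mul_comm]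
    refine (MSet.dist_def (u n) ⟨T, hTm⟩).trans_le ?_
    have := le_trans hmeas hsum
    calc (lam (symmDiff (u n).1 T)).toReal
        ≤ (ENNReal.ofReal (2 * (1/2:ℝ)^n)).toReal := ENNReal.toReal_mono (by finiteness) this
      _ = 2 * (1/2:ℝ)^n := ENNReal.toReal_ofReal (by positivity)
  apply squeeze_zero (fun n => dist_nonneg) key
  have : Tendsto (fun n => (1/2:ℝ)^n) atTop (𝓝 0) :=
    tendsto_pow_atTop_nhds_zero_of_lt_one (by norm_num) (by norm_num)
  simpa using this.const_mul 2

end MSetSpace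
section VHS

open ENNReal

variable {X : Type*} [MeasurableSpace X]

lemma measure_sub_le_symmDiff (ρ : Measure X) (A B : Set X) :
    ρ A ≤ ρ B + ρ (symmDiff A B) := by
  have hsub : A ⊆ B ∪ symmDiff A B := by
    intro x hx
    by_cases hB : x ∈ B
    · exact Or.inl hB
    · exact Or.inr (Set.mem_symmDiff.mpr (Or.inl ⟨hx, hB⟩))
  exact le_trans (measure_mono hsub) (measure_union_le _ _)

lemma vhs_tendsto (lam : Measure X) [IsFiniteMeasure lam]
    (σ' : ℕ → Measure X) (c : ℕ → NNReal)
    (hc : ∀ n, σ' n ≤ ((c n : ℝ≥0∞) • lam))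
    (ν : Set X → ℝ)
    (hconv : ∀ S : Set X, MeasurableSet S →
      Tendsto (fun n => ((σ' n) S).toReal) atTop (𝓝 (ν S)))
    (F : ℕ → Set X) (hFm : ∀ j, MeasurableSet (F j)) (hFa : Antitone F)
    (hFe : (⋂ j, F j) = ∅) :
    Tendsto (fun j => ν (F j)) atTop (𝓝 0) := by
  -- finiteness of the σ' n
  have hσle : ∀ n (S : Set X), MeasurableSet S → σ' n S ≤ (c n : ℝ≥0∞) * lam S := by
    intro n S hS
    have := Measure.le_iff.mp (hc n) S hS
    rwa [Measure.smul_apply, smul_eq_mul] at this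
  have hfin : ∀ n (S : Set X), σ' n S ≠ ∞ := by
    intro n S
    have h1 : σ' n S ≤ σ' n Set.univ := measure_mono (Set.subset_univ _)
    have h2 := hσle n Set.univ MeasurableSet.univ
    exact ne_top_of_le_ne_top (ENNReal.mul_ne_top ENNReal.coe_ne_top (measure_ne_top lam _))
      (h1.trans h2)
  have hreal : ∀ n (S : Set X), MeasurableSet S →
      (σ' n S).toReal ≤ (c n : ℝ) * (lam S).toReal := by
    intro n S hS
    have := ENNReal.toReal_mono
      (ENNReal.mul_ne_top ENNReal.coe_ne_top (measure_ne_top lam _)) (hσle n S hS)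
    rwa [ENNReal.toReal_mul, ENNReal.coe_toReal] at this
  -- the functionals on the measure algebra
  set T : ℕ → MSet lam → ℝ := fun n S => (σ' n S.1).toReal with hTdef
  have hlip : ∀ n, LipschitzWith (c n) (T n) := by
    intro n
    apply LipschitzWith.of_dist_le_mul
    intro S S'
    have hsd : MeasurableSet (symmDiff S.1 S'.1) :=
      (S.2.diff S'.2).union (S'.2.diff S.2)
    have key : ∀ A B : MSet lam, T n A - T n B ≤ (c n : ℝ) * dist A B := by
      intro A B
      have h1 := measure_sub_le_symmDiff (σ' n) A.1 B.1
      have h2 : (σ' n A.1).toReal ≤ (σ' n B.1).toReal + (σ' n (symmDiff A.1 B.1)).toReal := by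
        have := ENNReal.toReal_mono (by
          exact ENNReal.add_ne_top.mpr ⟨hfin n _, hfin n _⟩) h1
        rwa [ENNReal.toReal_add (hfin n _) (hfin n _)] at this
      have hsd' : MeasurableSet (symmDiff A.1 B.1) :=
        (A.2.diff B.2).union (B.2.diff A.2)
      have h3 : (σ' n (symmDiff A.1 B.1)).toReal ≤ (c n : ℝ) * (lam (symmDiff A.1 B.1)).toReal :=
        hreal n _ hsd'
      have : dist A B = (lam (symmDiff A.1 B.1)).toReal := rfl
      rw [hTdef]
      simp only
      rw [this]
      linarith
    rw [Real.dist_eq, abs_sub_le_iff]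
    refine ⟨key S S', ?_⟩
    have := key S' S
    rwa [dist_comm] at this
  have hcont : ∀ n, Continuous (T n) := fun n => (hlip n).continuous
  -- lam (F j) → 0
  have lamF : Tendsto (fun j => (lam (F j)).toReal) atTop (𝓝 0) := by
    have h1 : Tendsto (fun j => lam (F j)) atTop (𝓝 (lam (⋂ j, F j))) :=
      tendsto_measure_iInter_atTop (fun j => (hFm j).nullMeasurableSet) hFa
        ⟨0, measure_ne_top lam _⟩
    rw [hFe, measure_empty] at h1
    have h2 := (ENNReal.tendsto_toReal (by simp : (0:ℝ≥0∞) ≠ ⊤)).comp h1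
    simpa [Function.comp_def] using h2
  rw [Metric.tendsto_atTop]
  intro ε hε
  -- Baire category
  set H : ℕ → Set (MSet lam) := fun N =>
    ⋂ (a : ℕ) (b : ℕ) (_ : N ≤ a) (_ : N ≤ b),
      {S : MSet lam | |T a S - T b S| ≤ ε/4} with hHdef
  have hclosed : ∀ N, IsClosed (H N) := by
    intro N
    apply isClosed_iInter; intro a; apply isClosed_iInter; intro b
    apply isClosed_iInter; intro _; apply isClosed_iInter; intro _
    exact isClosed_le (Continuous.abs ((hcont a).sub (hcont b))) continuous_const
  have hcover : (⋃ N, H N) = Set.univ := by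
    apply Set.eq_univ_of_forall
    intro S
    have hcv := hconv S.1 S.2
    rw [Metric.tendsto_atTop] at hcv
    obtain ⟨N, hN⟩ := hcv (ε/8) (by positivity)
    refine Set.mem_iUnion.mpr ⟨N, ?_⟩
    simp only [hHdef, Set.mem_iInter, Set.mem_setOf_eq]
    intro a b ha hb
    have h1 := hN a ha
    have h2 := hN b hb
    rw [Real.dist_eq] at h1 h2
    have : T a S - T b S = ((σ' a S.1).toReal - ν S.1) - ((σ' b S.1).toReal - ν S.1) := by
      rw [hTdef]; ring
    rw [this]
    have := abs_sub (((σ' a S.1)).toReal - ν S.1) (((σ' b S.1)).toReal - ν S.1)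
    calc |((σ' a S.1).toReal - ν S.1) - ((σ' b S.1).toReal - ν S.1)|
        ≤ |(σ' a S.1).toReal - ν S.1| + |(σ' b S.1).toReal - ν S.1| := abs_sub _ _
      _ ≤ ε/8 + ε/8 := by exact add_le_add h1.le h2.le
      _ ≤ ε/4 := by linarith
  haveI : Nonempty (MSet lam) := ⟨⟨∅, MeasurableSet.empty⟩⟩
  obtain ⟨N₀, hN₀⟩ := nonempty_interior_of_iUnion_of_closed hclosed hcover
  obtain ⟨S₀, hS₀⟩ := hN₀
  obtain ⟨δ, hδpos, hball⟩ := Metric.mem_nhds_iff.mp (mem_interior_iff_mem_nhds.mp hS₀)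
  -- key uniform estimate
  have key : ∀ G : Set X, MeasurableSet G → (lam G).toReal < δ →
      ∀ a b, N₀ ≤ a → N₀ ≤ b →
        |(σ' a G).toReal - (σ' b G).toReal| ≤ ε/2 := by
    intro G hG hGδ a b ha hb
    set A : MSet lam := ⟨S₀.1 ∪ G, S₀.2.union hG⟩ with hA
    set B : MSet lam := ⟨S₀.1 \ G, S₀.2.diff hG⟩ with hB
    have dA : dist A S₀ ≤ (lam G).toReal := by
      rw [MSet.dist_def]
      apply ENNReal.toReal_mono (measure_ne_top lam _)
      apply measure_mono
      intro x hx
      rcases Set.mem_symmDiff.mp hx with ⟨h1, h2⟩ | ⟨h1, h2⟩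
      · rcases h1 with h1 | h1
        · exact absurd h1 h2
        · exact h1
      · exact absurd (Or.inl h1) h2
    have dB : dist B S₀ ≤ (lam G).toReal := by
      rw [MSet.dist_def]
      apply ENNReal.toReal_mono (measure_ne_top lam _)
      apply measure_mono
      intro x hx
      rcases Set.mem_symmDiff.mp hx with ⟨h1, h2⟩ | ⟨h1, h2⟩
      · exact absurd h1.1 h2
      · by_cases hxG : x ∈ G
        · exact hxG
        · exact absurd ⟨h1, hxG⟩ h2
    have hAmem : A ∈ H N₀ := hball (Metric.mem_ball.mpr (lt_of_le_of_lt dA hGδ))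
    have hBmem : B ∈ H N₀ := hball (Metric.mem_ball.mpr (lt_of_le_of_lt dB hGδ))
    simp only [hHdef, Set.mem_iInter, Set.mem_setOf_eq] at hAmem hBmem
    have hAB := hAmem a b ha hb
    have hBB := hBmem a b ha hb
    -- σ' n (S₀ ∪ G) = σ' n (S₀ \ G) + σ' n G
    have hsplit : ∀ n, T n A - T n B = (σ' n G).toReal := by
      intro n
      have hU : S₀.1 ∪ G = (S₀.1 \ G) ∪ G := by rw [Set.diff_union_self]
      have := measure_union (μ := σ' n) ((disjoint_sdiff_self_left : Disjoint (S₀.1 \ G) G)) hG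
      have h2 : σ' n (S₀.1 ∪ G) = σ' n (S₀.1 \ G) + σ' n G := by rw [hU, this]
      rw [hTdef]
      simp only [hA, hB]
      rw [h2, ENNReal.toReal_add (hfin n _) (hfin n _)]
      ring
    have e1 : (σ' a G).toReal - (σ' b G).toReal
        = (T a A - T b A) - (T a B - T b B) := by
      rw [← hsplit a, ← hsplit b]; ring
    rw [e1]
    calc |(T a A - T b A) - (T a B - T b B)|
        ≤ |T a A - T b A| + |T a B - T b B| := abs_sub _ _
      _ ≤ ε/4 + ε/4 := add_le_add hAB hBB
      _ = ε/2 := by ring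
  -- uniform bound constant
  set K : ℝ := (∑ n ∈ Finset.range (N₀+1), (c n : ℝ)) + 1 with hK
  have hK1 : (1:ℝ) ≤ K := by
    have : (0:ℝ) ≤ ∑ n ∈ Finset.range (N₀+1), (c n : ℝ) :=
      Finset.sum_nonneg fun n _ => (c n).coe_nonneg
    linarith
  have hKpos : (0:ℝ) < K := by linarith
  have hKc : ∀ n, n ≤ N₀ → (c n : ℝ) ≤ K := by
    intro n hn
    have := Finset.single_le_sum (f := fun n => (c n : ℝ))
      (fun i _ => (c i).coe_nonneg) (Finset.mem_range.mpr (Nat.lt_succ_of_le hn))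
    linarith
  -- choose the final index
  have hsmall : ∀ᶠ j in atTop, (lam (F j)).toReal < min δ (ε/(4*K)) := by
    have := Metric.tendsto_atTop.mp lamF (min δ (ε/(4*K)))
      (lt_min hδpos (by positivity))
    obtain ⟨j₀, hj₀⟩ := this
    refine eventually_atTop.mpr ⟨j₀, fun j hj => ?_⟩
    have := hj₀ j hj
    rw [Real.dist_eq, sub_zero, abs_of_nonneg ENNReal.toReal_nonneg] at this
    exact this
  rw [eventually_atTop] at hsmall
  obtain ⟨j₀, hj₀⟩ := hsmall
  refine ⟨j₀, fun j hj => ?_⟩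
  have hlamj := hj₀ j hj
  have hb1 : (lam (F j)).toReal < δ := lt_of_lt_of_le hlamj (min_le_left _ _)
  have hb2 : (lam (F j)).toReal < ε/(4*K) := lt_of_lt_of_le hlamj (min_le_right _ _)
  have hbound : ∀ n, (σ' n (F j)).toReal ≤ 3*ε/4 := by
    intro n
    rcases le_or_gt n N₀ with hn | hn
    · have h1 := hreal n (F j) (hFm j)
      have h2 : (c n : ℝ) * (lam (F j)).toReal ≤ K * (lam (F j)).toReal :=
        mul_le_mul_of_nonneg_right (hKc n hn) ENNReal.toReal_nonneg
      have h3 : K * (lam (F j)).toReal < K * (ε/(4*K)) :=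
        (mul_lt_mul_iff_right₀ hKpos).mpr hb2
      have h4 : K * (ε/(4*K)) = ε/4 := by field_simp
      nlinarith [hε]
    · have h1 := key (F j) (hFm j) hb1 n N₀ hn.le le_rfl
      have h2 := hreal N₀ (F j) (hFm j)
      have h3 : (c N₀ : ℝ) * (lam (F j)).toReal ≤ K * (lam (F j)).toReal :=
        mul_le_mul_of_nonneg_right (hKc N₀ le_rfl) ENNReal.toReal_nonneg
      have h4 : K * (lam (F j)).toReal < K * (ε/(4*K)) :=
        (mul_lt_mul_iff_right₀ hKpos).mpr hb2
      have h5 : K * (ε/(4*K)) = ε/4 := by field_simp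
      have h6 := abs_le.mp h1
      nlinarith [hε]
  have hν1 : ν (F j) ≤ 3*ε/4 :=
    le_of_tendsto (hconv (F j) (hFm j)) (Eventually.of_forall hbound)
  have hν0 : 0 ≤ ν (F j) :=
    ge_of_tendsto (hconv (F j) (hFm j))
      (Eventually.of_forall fun n => ENNReal.toReal_nonneg)
  rw [Real.dist_eq, sub_zero, abs_of_nonneg hν0]
  linarith

end VHS

section Bridge

variable {X : Type*} [MeasurableSpace X]

lemma faIntegral_toReal (ρ : Measure X) [IsFiniteMeasure ρ] {f : X → ℝ}
    (hf : Measurable f) (h0 : ∀ x, 0 ≤ f x) :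
    faIntegral (fun S => (ρ S).toReal) f = (∫⁻ x, ENNReal.ofReal (f x) ∂ρ).toReal := by
  unfold faIntegral
  have hneg : ∫ t in Set.Ioi (0:ℝ), ((fun S => (ρ S).toReal) {x | f x < -t}) = 0 := by
    rw [setIntegral_congr_fun measurableSet_Ioi (g := fun _ => (0:ℝ))]
    · simp
    · intro t ht
      have hem : {x | f x < -t} = ∅ := by
        ext x
        simp only [Set.mem_setOf_eq, Set.mem_empty_iff_false, iff_false, not_lt]
        have h1 := h0 x
        have h2 : -t < 0 := neg_neg_iff_pos.mpr ht
        linarith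
      simp only [hem]
      simp
  rw [hneg, sub_zero]
  have hlc := lintegral_eq_lintegral_meas_lt ρ (Filter.Eventually.of_forall h0) hf.aemeasurable
  have hmono : Antitone (fun t : ℝ => ρ {x | t < f x}) := by
    intro s t hst
    exact measure_mono (fun x hx => lt_of_le_of_lt hst hx)
  have hmeas : Measurable (fun t : ℝ => ρ {x | t < f x}) := hmono.measurable
  rw [hlc]
  exact integral_toReal (hmeas.aemeasurable.restrict)
    (Filter.Eventually.of_forall fun t => measure_lt_top ρ _)

/-- The transition kernel associated to `p`, as a family of measures. -/
noncomputable def kern (p : X → Set X → ℝ) (hp : IsTransFun p) (x : X) : Measure X :=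
  Measure.ofMeasurable (fun E _ => ENNReal.ofReal (p x E))
    (by
      have h0 : p x ∅ = 0 := (hp.2.2.2 x).1.1
      simp [h0])
    (by
      intro f hfm hfd
      have hca := (hp.2.2.2 x).2 f hfm hfd
      have hsum : p x (⋃ i, f i) = ∑' i, p x (f i) := hca.tsum_eq.symm
      show ENNReal.ofReal (p x (⋃ i, f i)) = ∑' i, ENNReal.ofReal (p x (f i))
      rw [hsum, ENNReal.ofReal_tsum_of_nonneg (fun i => (hp.1 x (f i) (hfm i)).1)
        hca.summable])

lemma kern_apply (p : X → Set X → ℝ) (hp : IsTransFun p) (x : X) {E : Set X}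
    (hE : MeasurableSet E) : kern p hp x E = ENNReal.ofReal (p x E) :=
  Measure.ofMeasurable_apply E hE

instance kern_prob (p : X → Set X → ℝ) (hp : IsTransFun p) (x : X) :
    IsProbabilityMeasure (kern p hp x) :=
  ⟨by rw [kern_apply p hp x MeasurableSet.univ, hp.2.1 x]; simp⟩

lemma kern_measurable (p : X → Set X → ℝ) (hp : IsTransFun p) :
    Measurable (kern p hp) := by
  apply Measure.measurable_of_measurable_coe
  intro E hE
  have : (fun x => kern p hp x E) = fun x => ENNReal.ofReal (p x E) := by
    funext x; exact kern_apply p hp x hE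
  rw [this]
  exact (hp.2.2.1 E hE).ennreal_ofReal

lemma bind_kern_prob (p : X → Set X → ℝ) (hp : IsTransFun p) (ρ : Measure X)
    [IsProbabilityMeasure ρ] : IsProbabilityMeasure (ρ.bind (kern p hp)) := by
  constructor
  rw [Measure.bind_apply MeasurableSet.univ (kern_measurable p hp).aemeasurable]
  have : ∀ x, kern p hp x Set.univ = 1 := fun x => measure_univ
  rw [lintegral_congr this, lintegral_one, measure_univ]

lemma markovOp_eq_bind (p : X → Set X → ℝ) (hp : IsTransFun p) (ρ : Measure X)
    [IsFiniteMeasure ρ] {E : Set X} (hE : MeasurableSet E) :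
    markovOp p (fun S => (ρ S).toReal) E = ((ρ.bind (kern p hp)) E).toReal := by
  unfold markovOp
  rw [faIntegral_toReal ρ (hp.2.2.1 E hE) (fun x => (hp.1 x E hE).1)]
  rw [Measure.bind_apply hE (kern_measurable p hp).aemeasurable]
  congr 1
  exact lintegral_congr fun x => (kern_apply p hp x hE).symm

end Bridge

/-- Theorem 8.3 of [4]: if the Markov chain has exactly one invariant finitely additive
probability measure, then it is countably additive. -/
theorem theorem8_3 {X : Type*} [MeasurableSpace X]
    (hsingl : ∀ x : X, MeasurableSet ({x} : Set X))
    (p : X → Set X → ℝ) (hp : IsTransFun p)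
    (μ : Set X → ℝ) (huniq : InvProbSet p = {μ}) :
    IsCtblAdd μ := by
  classical
  have hμ : μ ∈ InvProbSet p := by rw [huniq]; exact Set.mem_singleton μ
  obtain ⟨hμfa, hμnn, hμ1, hμinv⟩ := hμ
  -- X is nonempty
  have hXne : Nonempty X := by
    by_contra hc
    rw [not_nonempty_iff] at hc
    have he : (Set.univ : Set X) = (∅ : Set X) := Set.univ_eq_empty_iff.mpr hc
    rw [he, hμfa.1] at hμ1
    exact one_ne_zero hμ1.symm
  obtain ⟨x₀⟩ := hXne
  have hκm : Measurable (kern p hp) := kern_measurable p hp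
  -- the iterates of the Markov operator on the initial kernel measure
  let m : ℕ → Measure X := fun n => Nat.rec (kern p hp x₀) (fun _ ρ => ρ.bind (kern p hp)) n
  have hmsucc : ∀ n, m (n + 1) = (m n).bind (kern p hp) := fun n => rfl
  have hmprob : ∀ n, IsProbabilityMeasure (m n) := by
    intro n
    induction n with
    | zero => exact kern_prob p hp x₀
    | succ k ih => exact @bind_kern_prob _ _ p hp (m k) ih
  -- Cesàro averages
  let σc : ℕ → Measure X := fun n => ((n : ℝ≥0∞) + 1)⁻¹ • (∑ k ∈ Finset.range (n + 1), m k)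
  have hσapp : ∀ n S, σc n S = ((n : ℝ≥0∞) + 1)⁻¹ * ∑ k ∈ Finset.range (n + 1), m k S := by
    intro n S
    simp [σc, Measure.smul_apply, Measure.finset_sum_apply, smul_eq_mul]
  have hn1ne0 : ∀ n : ℕ, ((n : ℝ≥0∞) + 1) ≠ 0 := fun n => by simp
  have hn1netop : ∀ n : ℕ, ((n : ℝ≥0∞) + 1) ≠ ⊤ := fun n => by
    simp [ENNReal.add_ne_top, ENNReal.natCast_ne_top]
  have hσuniv : ∀ n, σc n Set.univ = 1 := by
    intro n
    rw [hσapp]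
    have hone : ∀ k ∈ Finset.range (n + 1), m k Set.univ = 1 :=
      fun k _ => (hmprob k).measure_univ
    rw [Finset.sum_congr rfl hone, Finset.sum_const, Finset.card_range, nsmul_eq_mul, mul_one]
    rw [show ((n + 1 : ℕ) : ℝ≥0∞) = (n : ℝ≥0∞) + 1 by push_cast; ring]
    exact ENNReal.inv_mul_cancel (hn1ne0 n) (hn1netop n)
  have hσprob : ∀ n, IsProbabilityMeasure (σc n) := fun n => ⟨hσuniv n⟩
  have hσle1 : ∀ n (S : Set X), σc n S ≤ 1 := by
    intro n S
    calc σc n S ≤ σc n Set.univ := measure_mono (Set.subset_univ _)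
      _ = 1 := hσuniv n
  have hσfin : ∀ n (S : Set X), σc n S ≠ ⊤ :=
    fun n S => ne_top_of_le_ne_top ENNReal.one_ne_top (hσle1 n S)
  have hσtr1 : ∀ n (S : Set X), (σc n S).toReal ≤ 1 := by
    intro n S
    have := ENNReal.toReal_mono ENNReal.one_ne_top (hσle1 n S)
    simpa using this
  -- MAIN STEP: setwise convergence of the Cesàro averages to μ
  have main : ∀ S : Set X, Tendsto (fun n => (σc n S).toReal) atTop (𝓝 (μ S)) := by
    intro S
    rw [tendsto_iff_ultrafilter]
    intro U hU
    -- limits along the ultrafilter exist by compactness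
    have hex : ∀ T : Set X, ∃ r, r ∈ Set.Icc (0:ℝ) 1 ∧
        Tendsto (fun n => (σc n T).toReal) ↑U (𝓝 r) := by
      intro T
      have hmem : ∀ n, (σc n T).toReal ∈ Set.Icc (0:ℝ) 1 :=
        fun n => ⟨ENNReal.toReal_nonneg, hσtr1 n T⟩
      have hle : ↑(U.map fun n => (σc n T).toReal) ≤ Filter.principal (Set.Icc (0:ℝ) 1) := by
        rw [Ultrafilter.coe_map]
        exact Filter.le_principal_iff.mpr (Filter.mem_map.mpr (Filter.univ_mem' hmem))
      obtain ⟨r, hrIcc, hr⟩ := isCompact_Icc.ultrafilter_le_nhds _ hle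
      refine ⟨r, hrIcc, ?_⟩
      rwa [Ultrafilter.coe_map] at hr
    choose ν' hν'Icc hν'T using hex
    have hν'unique : ∀ (T : Set X) (r : ℝ),
        Tendsto (fun n => (σc n T).toReal) ↑U (𝓝 r) → ν' T = r :=
      fun T r hr => tendsto_nhds_unique (hν'T T) hr
    have hν'empty : ν' ∅ = 0 := by
      apply hν'unique
      have : ∀ n : ℕ, (σc n (∅ : Set X)).toReal = 0 := fun n => by simp
      exact tendsto_const_nhds.congr fun n => (this n).symm
    have hν'add : ∀ E F : Set X, MeasurableSet E → MeasurableSet F → Disjoint E F →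
        ν' (E ∪ F) = ν' E + ν' F := by
      intro E F hE hF hEF
      apply hν'unique
      have heq : ∀ n, (σc n E).toReal + (σc n F).toReal = (σc n (E ∪ F)).toReal := by
        intro n
        rw [measure_union hEF hF, ENNReal.toReal_add (hσfin n E) (hσfin n F)]
      exact ((hν'T E).add (hν'T F)).congr heq
    have hν'mono : ∀ S T : Set X, S ⊆ T → ν' S ≤ ν' T := by
      intro S T hST
      exact le_of_tendsto_of_tendsto' (hν'T S) (hν'T T)
        (fun n => ENNReal.toReal_mono (hσfin n T) (measure_mono hST))
    have hν'univ : ν' Set.univ = 1 := by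
      apply hν'unique
      have : ∀ n : ℕ, (σc n (Set.univ : Set X)).toReal = 1 := by
        intro n; rw [hσuniv n]; simp
      exact tendsto_const_nhds.congr fun n => (this n).symm
    -- invariance of ν'
    have hinv : ∀ E : Set X, MeasurableSet E → markovOp p ν' E = ν' E := by
      intro E hE
      have hf0 : ∀ x, 0 ≤ p x E := fun x => (hp.1 x E hE).1
      have hf1 : ∀ x, p x E ≤ 1 := fun x => (hp.1 x E hE).2
      have hemneg : ∀ t : ℝ, 0 < t → {x | p x E < -t} = (∅ : Set X) := by
        intro t ht
        ext x
        simp only [Set.mem_setOf_eq, Set.mem_empty_iff_false, iff_false, not_lt]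
        have : -t < 0 := neg_lt_zero.mpr ht
        linarith [hf0 x]
      have hsecond : ∫ t in Set.Ioi (0:ℝ), ν' {x | p x E < -t} = 0 := by
        rw [setIntegral_congr_fun measurableSet_Ioi (g := fun _ => (0:ℝ))
          (fun t ht => by rw [hemneg t ht, hν'empty])]
        simp
      have hempty : ∀ t : ℝ, (1:ℝ) ≤ t → {x | t < p x E} = (∅ : Set X) := by
        intro t ht
        ext x
        simp only [Set.mem_setOf_eq, Set.mem_empty_iff_false, iff_false, not_lt]
        exact (hf1 x).trans ht
      have hlevsub : ∀ {s t : ℝ}, s ≤ t → {x | t < p x E} ⊆ {x | s < p x E} :=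
        fun {s t} hst x hx => lt_of_le_of_lt hst hx
      have hga : ∀ n, Antitone (fun t => (σc n {x | t < p x E}).toReal) :=
        fun n s t hst => ENNReal.toReal_mono (hσfin n _) (measure_mono (hlevsub hst))
      have hg0 : ∀ n (t : ℝ), 0 ≤ (σc n {x | t < p x E}).toReal :=
        fun n t => ENNReal.toReal_nonneg
      have hg1 : ∀ n (t : ℝ), (σc n {x | t < p x E}).toReal ≤ 1 := fun n t => hσtr1 n _
      have hgv : ∀ n (t : ℝ), (1:ℝ) ≤ t → (σc n {x | t < p x E}).toReal = 0 := by
        intro n t ht; rw [hempty t ht]; simp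
      have hGa : Antitone (fun t => ν' {x | t < p x E}) :=
        fun s t hst => hν'mono _ _ (hlevsub hst)
      have hG0 : ∀ t : ℝ, 0 ≤ ν' {x | t < p x E} := fun t => (hν'Icc _).1
      have hG1 : ∀ t : ℝ, ν' {x | t < p x E} ≤ 1 := fun t => (hν'Icc _).2
      have hGv : ∀ t : ℝ, (1:ℝ) ≤ t → ν' {x | t < p x E} = 0 := by
        intro t ht; rw [hempty t ht]; exact hν'empty
      have hpt : ∀ t : ℝ, Tendsto (fun n => (σc n {x | t < p x E}).toReal) ↑U
          (𝓝 (ν' {x | t < p x E})) := fun t => hν'T _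
      have hInt := tendsto_integral_antitone ↑U hga hg0 hg1 hgv hGa hG0 hG1 hGv hpt
      -- identify the integrals with the bound measures
      have hgn_eq : ∀ n, ∫ t in Set.Ioi (0:ℝ), (σc n {x | t < p x E}).toReal
          = (((σc n).bind (kern p hp)) E).toReal := by
        intro n
        haveI := hσprob n
        have hb : markovOp p (fun S => ((σc n) S).toReal) E
            = (((σc n).bind (kern p hp)) E).toReal := markovOp_eq_bind p hp (σc n) hE
        have hsec : ∫ t in Set.Ioi (0:ℝ), ((σc n) {x | p x E < -t}).toReal = 0 := by
          rw [setIntegral_congr_fun measurableSet_Ioi (g := fun _ => (0:ℝ))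
            (fun t ht => by rw [hemneg t ht]; simp)]
          simp
        have hfa : markovOp p (fun S => ((σc n) S).toReal) E
            = (∫ t in Set.Ioi (0:ℝ), (σc n {x | t < p x E}).toReal)
              - (∫ t in Set.Ioi (0:ℝ), ((σc n) {x | p x E < -t}).toReal) := rfl
        rw [hfa, hsec, sub_zero] at hb
        exact hb
      -- bind of the Cesàro average in terms of the iterates
      have hbind_sum : ∀ n, ((σc n).bind (kern p hp)) E
          = ((n : ℝ≥0∞) + 1)⁻¹ * ∑ k ∈ Finset.range (n + 1), m (k + 1) E := by
        intro n
        rw [Measure.bind_apply hE hκm.aemeasurable]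
        have h1 : ∫⁻ x, kern p hp x E ∂(σc n)
            = ((n : ℝ≥0∞) + 1)⁻¹ * ∫⁻ x, kern p hp x E ∂(∑ k ∈ Finset.range (n + 1), m k) :=
          lintegral_smul_measure _ _
        rw [h1, lintegral_finset_sum_measure]
        congr 1
        refine Finset.sum_congr rfl fun k _ => ?_
        rw [← Measure.bind_apply hE hκm.aemeasurable]
      have hmle1 : ∀ k, m k E ≤ 1 := fun k =>
        le_trans (measure_mono (Set.subset_univ E)) (le_of_eq (hmprob k).measure_univ)
      have hmfin : ∀ k, m k E ≠ ⊤ := fun k =>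
        ne_top_of_le_ne_top ENNReal.one_ne_top (hmle1 k)
      have hmtr1 : ∀ k, (m k E).toReal ≤ 1 := by
        intro k
        have := ENNReal.toReal_mono ENNReal.one_ne_top (hmle1 k)
        simpa using this
      have htoReal_bind : ∀ n, (((σc n).bind (kern p hp)) E).toReal
          = ((n : ℝ) + 1)⁻¹ * ∑ k ∈ Finset.range (n + 1), (m (k + 1) E).toReal := by
        intro n
        have hcast : (((n : ℝ≥0∞) + 1)).toReal = (n : ℝ) + 1 := by
          rw [show ((n : ℝ≥0∞) + 1) = ((n + 1 : ℕ) : ℝ≥0∞) by push_cast; ring,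
            ENNReal.toReal_natCast]
          push_cast; ring
        rw [hbind_sum n, ENNReal.toReal_mul, ENNReal.toReal_inv, hcast,
          ENNReal.toReal_sum (fun k _ => hmfin (k + 1))]
      have htoReal_σ : ∀ n, ((σc n) E).toReal
          = ((n : ℝ) + 1)⁻¹ * ∑ k ∈ Finset.range (n + 1), (m k E).toReal := by
        intro n
        have hcast : (((n : ℝ≥0∞) + 1)).toReal = (n : ℝ) + 1 := by
          rw [show ((n : ℝ≥0∞) + 1) = ((n + 1 : ℕ) : ℝ≥0∞) by push_cast; ring,
            ENNReal.toReal_natCast]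
          push_cast; ring
        rw [hσapp n E, ENNReal.toReal_mul, ENNReal.toReal_inv, hcast,
          ENNReal.toReal_sum (fun k _ => hmfin k)]
      -- the difference tends to 0
      have hdiff : Tendsto (fun n => (((σc n).bind (kern p hp)) E).toReal
          - ((σc n) E).toReal) atTop (𝓝 0) := by
        have hformula : ∀ n, (((σc n).bind (kern p hp)) E).toReal - ((σc n) E).toReal
            = ((n : ℝ) + 1)⁻¹ * ((m (n + 1) E).toReal - (m 0 E).toReal) := by
          intro n
          rw [htoReal_bind n, htoReal_σ n]
          have e1 : ∑ k ∈ Finset.range (n + 1), (m (k + 1) E).toReal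
              = (∑ k ∈ Finset.range (n + 1), (m k E).toReal) + (m (n + 1) E).toReal
                - (m 0 E).toReal := by
            have h1 : ∑ k ∈ Finset.range (n + 2), (m k E).toReal
                = ∑ k ∈ Finset.range (n + 1), (m (k + 1) E).toReal + (m 0 E).toReal :=
              Finset.sum_range_succ' _ _
            have h2 : ∑ k ∈ Finset.range (n + 2), (m k E).toReal
                = ∑ k ∈ Finset.range (n + 1), (m k E).toReal + (m (n + 1) E).toReal :=
              Finset.sum_range_succ _ _
            linarith
          rw [e1]
          ring
        have hbound : ∀ n : ℕ, |(((σc n).bind (kern p hp)) E).toReal - ((σc n) E).toReal|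
            ≤ 2 * ((n : ℝ) + 1)⁻¹ := by
          intro n
          rw [hformula n, abs_mul]
          have h1 : |((n : ℝ) + 1)⁻¹| = ((n : ℝ) + 1)⁻¹ := abs_of_nonneg (by positivity)
          have h2 : |(m (n + 1) E).toReal - (m 0 E).toReal| ≤ 2 := by
            rw [abs_sub_le_iff]
            constructor <;> [skip; skip] <;>
              nlinarith [hmtr1 (n + 1), hmtr1 0, ENNReal.toReal_nonneg (a := m (n + 1) E),
                ENNReal.toReal_nonneg (a := m 0 E)]
          rw [h1, mul_comm]
          have : ((n : ℝ) + 1)⁻¹ ≥ 0 := by positivity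
          nlinarith
        apply squeeze_zero_norm hbound
        have h0 : Tendsto (fun n : ℕ => ((n : ℝ) + 1)⁻¹) atTop (𝓝 0) := by
          have := tendsto_one_div_add_atTop_nhds_zero_nat (𝕜 := ℝ)
          simpa [one_div] using this
        simpa using h0.const_mul 2
      have hdiffU : Tendsto (fun n => (((σc n).bind (kern p hp)) E).toReal
          - ((σc n) E).toReal) ↑U (𝓝 0) := hdiff.mono_left hU
      have hbindU : Tendsto (fun n => (((σc n).bind (kern p hp)) E).toReal) ↑U (𝓝 (ν' E)) := by
        have := (hν'T E).add hdiffU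
        rw [add_zero] at this
        exact this.congr fun n => by ring
      have hIntU : Tendsto (fun n => (((σc n).bind (kern p hp)) E).toReal) ↑U
          (𝓝 (∫ t in Set.Ioi (0:ℝ), ν' {x | t < p x E})) :=
        hInt.congr fun n => hgn_eq n
      have hfinal : ∫ t in Set.Ioi (0:ℝ), ν' {x | t < p x E} = ν' E :=
        tendsto_nhds_unique hIntU hbindU
      show faIntegral ν' (fun x => p x E) = ν' E
      have hdef : faIntegral ν' (fun x => p x E)
          = (∫ t in Set.Ioi (0:ℝ), ν' {x | t < p x E})
            - (∫ t in Set.Ioi (0:ℝ), ν' {x | p x E < -t}) := rfl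
      rw [hdef, hsecond, sub_zero, hfinal]
    -- ν' is an invariant probability, hence equals μ
    have hν'mem : ν' ∈ InvProbSet p :=
      ⟨⟨hν'empty, hν'add⟩, fun T hT => (hν'Icc T).1, hν'univ, hinv⟩
    rw [huniq] at hν'mem
    have hν'eq : ν' = μ := hν'mem
    rw [← hν'eq]
    exact hν'T S
  -- Countable additivity via the Vitali–Hahn–Saks argument
  intro E hE hdisj
  have hUm : MeasurableSet (⋃ n, E n) := MeasurableSet.iUnion hE
  set FF : ℕ → Set X := fun j => (⋃ n, E n) \ ⋃ k ∈ Finset.range j, E k with hFFdef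
  have hFFm : ∀ j, MeasurableSet (FF j) :=
    fun j => hUm.diff (MeasurableSet.biUnion (Finset.range j).countable_toSet
      fun k _ => hE k)
  have hFFa : Antitone FF := by
    intro i j hij
    apply Set.diff_subset_diff_right
    exact Set.biUnion_subset_biUnion_left (by exact_mod_cast Finset.range_subset_range.mpr hij)
  have hFFe : (⋂ j, FF j) = ∅ := by
    ext x
    simp only [Set.mem_iInter, Set.mem_empty_iff_false, iff_false]
    intro hx
    obtain ⟨k, hk⟩ := Set.mem_iUnion.mp (hx 0).1
    exact (hx (k + 1)).2 (Set.mem_iUnion₂.mpr ⟨k, Finset.mem_range.mpr (Nat.lt_succ_self k), hk⟩)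
  have hpartial : ∀ j, μ (⋃ n, E n) = (∑ k ∈ Finset.range j, μ (E k)) + μ (FF j) := by
    intro j
    induction j with
    | zero =>
        simp only [Finset.range_zero, Finset.sum_empty, zero_add]
        congr 1
        simp [hFFdef]
    | succ k ih =>
        have hEk_sub : E k ⊆ FF k := by
          intro x hx
          refine ⟨Set.mem_iUnion.mpr ⟨k, hx⟩, ?_⟩
          intro hmem
          obtain ⟨i, hi, hxi⟩ := Set.mem_iUnion₂.mp hmem
          have hik : i ≠ k := Nat.ne_of_lt (Finset.mem_range.mp hi)
          exact Set.disjoint_left.mp (hdisj hik) hxi hx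
        have hstep : FF (k + 1) = FF k \ E k := by
          rw [hFFdef]
          simp only
          rw [Finset.range_add_one, Finset.set_biUnion_insert, Set.diff_diff]
          rw [Set.union_comm]
        have hsplitset : FF k = E k ∪ FF (k + 1) := by
          rw [hstep, Set.union_diff_cancel hEk_sub]
        have hdisj2 : Disjoint (E k) (FF (k + 1)) := by
          rw [hstep]
          exact disjoint_sdiff_self_right
        have hadd := hμfa.2 (E k) (FF (k + 1)) (hE k) (hFFm (k + 1)) hdisj2
        rw [Finset.sum_range_succ, ih, hsplitset, hadd]
        ring
  -- μ (FF j) → 0 by the VHS lemma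
  have hμFF : Tendsto (fun j => μ (FF j)) atTop (𝓝 0) := by
    set lamM : Measure X := Measure.sum (fun n => ((2:ℝ≥0∞)^(n+1))⁻¹ • σc n) with hlamM
    haveI : IsFiniteMeasure lamM := by
      constructor
      rw [hlamM, Measure.sum_apply _ MeasurableSet.univ]
      have hterm : ∀ n : ℕ, (((2:ℝ≥0∞)^(n+1))⁻¹ • σc n) Set.univ = ((2:ℝ≥0∞)^(n+1))⁻¹ := by
        intro n
        rw [Measure.smul_apply, smul_eq_mul, hσuniv n, mul_one]
      rw [tsum_congr hterm]
      have hmono : ∀ n : ℕ, ((2:ℝ≥0∞)^(n+1))⁻¹ ≤ (2⁻¹ : ℝ≥0∞)^n := by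
        intro n
        rw [ENNReal.inv_pow]
        calc (2⁻¹ : ℝ≥0∞)^(n+1) = (2⁻¹:ℝ≥0∞)^n * 2⁻¹ := by rw [pow_succ]
          _ ≤ (2⁻¹:ℝ≥0∞)^n * 1 := mul_le_mul_right (ENNReal.inv_le_one.mpr one_le_two) _
          _ = (2⁻¹:ℝ≥0∞)^n := mul_one _
      calc ∑' n, ((2:ℝ≥0∞)^(n+1))⁻¹ ≤ ∑' n : ℕ, (2⁻¹:ℝ≥0∞)^n := ENNReal.tsum_le_tsum hmono
        _ = (1 - 2⁻¹)⁻¹ := ENNReal.tsum_geometric _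
        _ < ⊤ := by
            rw [ENNReal.one_sub_inv_two]
            exact ENNReal.inv_lt_top.mpr (by simp)
    have hcoe : ∀ n : ℕ, (((2:ℝ≥0)^(n+1) : ℝ≥0) : ℝ≥0∞) = (2:ℝ≥0∞)^(n+1) := by
      intro n
      rw [ENNReal.coe_pow]
      norm_num
    have hc : ∀ n, σc n ≤ ((((2:ℝ≥0)^(n+1) : ℝ≥0) : ℝ≥0∞) • lamM) := by
      intro n
      rw [Measure.le_iff]
      intro S hS
      have hle := Measure.le_iff.mp (Measure.le_sum (fun k => ((2:ℝ≥0∞)^(k+1))⁻¹ • σc k) n) S hS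
      rw [← hlamM] at hle
      rw [Measure.smul_apply, smul_eq_mul] at hle
      rw [Measure.smul_apply, smul_eq_mul, hcoe n]
      have h2ne0 : ((2:ℝ≥0∞)^(n+1)) ≠ 0 := pow_ne_zero _ (by simp)
      have h2net : ((2:ℝ≥0∞)^(n+1)) ≠ ⊤ := ENNReal.pow_ne_top ENNReal.ofNat_ne_top
      calc σc n S = ((2:ℝ≥0∞)^(n+1) * ((2:ℝ≥0∞)^(n+1))⁻¹) * σc n S := by
            rw [ENNReal.mul_inv_cancel h2ne0 h2net, one_mul]
        _ = (2:ℝ≥0∞)^(n+1) * (((2:ℝ≥0∞)^(n+1))⁻¹ * σc n S) := by rw [mul_assoc]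
        _ ≤ (2:ℝ≥0∞)^(n+1) * lamM S := mul_le_mul_right hle _
    exact vhs_tendsto lamM σc (fun n => (2:ℝ≥0)^(n+1)) hc μ (fun S _ => main S)
      FF hFFm hFFa hFFe
  -- conclude the HasSum
  have hnn : ∀ i, 0 ≤ μ (E i) := fun i => hμnn _ (hE i)
  rw [hasSum_iff_tendsto_nat_of_nonneg hnn]
  have hps : ∀ j, ∑ k ∈ Finset.range j, μ (E k) = μ (⋃ n, E n) - μ (FF j) :=
    fun j => by linarith [hpartial j]
  have hconst : Tendsto (fun _ : ℕ => μ (⋃ n, E n)) atTop (𝓝 (μ (⋃ n, E n))) :=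
    tendsto_const_nhds
  have hfin := hconst.sub hμFF
  rw [sub_zero] at hfin
  exact hfin.congr fun j => (hps j).symm
end

section
/- Theorem 7.8 of [4] (criterion Z): Let a countably additive transition function p on a measurable space (X,Σ) be given. Suppose there exist a sequence of reals ε_n ≥ 0 with ε_n → 0 and a sequence of nonempty sets K_n ∈ Σ with K₁ ⊃ K₂ ⊃ …, ⋂_{n=1}^∞ K_n = ∅, and p(x,K_n) ≥ 1 − ε_n for all x ∈ K_{n+1} and all n. Then there exists an invariant purely finitely additive probability measure μ (Aμ = μ) with μ(K_n) = 1 for all n. -/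
open MeasureTheory Set Filter Topology Function
open scoped ENNReal NNReal

/-- An antitone bounded function vanishing past 1 is integrable on `(0,∞)`. -/
lemma aux_integrableOn {g : ℝ → ℝ} (hanti : Antitone g)
    (h0 : ∀ t, 0 ≤ g t) (h1 : ∀ t, g t ≤ 1) (hv : ∀ t, 1 ≤ t → g t = 0) :
    IntegrableOn g (Ioi (0:ℝ)) := by
  have hmeas : Measurable g := hanti.measurable
  have hIoc : IntegrableOn g (Ioc (0:ℝ) 1) := by
    refine Integrable.mono' (integrable_const 1) hmeas.aestronglyMeasurable ?_
    filter_upwards with t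
    rw [Real.norm_eq_abs, abs_le]
    exact ⟨by linarith [h0 t], h1 t⟩
  have hIoi : IntegrableOn g (Ioi (1:ℝ)) := by
    refine (integrableOn_congr_fun (fun t ht => ?_) measurableSet_Ioi).2 (integrableOn_zero)
    exact hv t (le_of_lt ht)
  have := hIoc.union hIoi
  rwa [Ioc_union_Ioi_eq_Ioi (zero_le_one)] at this

/-- Riemann-sum sandwich for an antitone function on `(0,1]`. -/
lemma aux_sandwich {g : ℝ → ℝ} (hanti : Antitone g)
    (h0 : ∀ t, 0 ≤ g t) (h1 : ∀ t, g t ≤ 1) (hv : ∀ t, 1 ≤ t → g t = 0)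
    (N : ℕ) (hN : 0 < N) :
    (∑ i ∈ Finset.range N, (N:ℝ)⁻¹ * g (((i:ℝ)+1)/N)) ≤ (∫ t in Ioi (0:ℝ), g t) ∧
    (∫ t in Ioi (0:ℝ), g t) ≤ (∑ i ∈ Finset.range N, (N:ℝ)⁻¹ * g (((i:ℝ)+1)/N)) + (N:ℝ)⁻¹ := by
  have hint := aux_integrableOn hanti h0 h1 hv
  have hNR : (0:ℝ) < N := by exact_mod_cast hN
  -- integral over (0, ∞) equals integral over (0,1]
  have hsplit : (∫ t in Ioi (0:ℝ), g t) = ∫ t in Ioc (0:ℝ) 1, g t := by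
    have hu : Ioc (0:ℝ) 1 ∪ Ioi 1 = Ioi 0 := Ioc_union_Ioi_eq_Ioi zero_le_one
    have h2 : (∫ t in Ioi (1:ℝ), g t) = 0 := by
      rw [setIntegral_congr_fun measurableSet_Ioi (fun t ht => hv t (le_of_lt ht))]
      simp
    rw [← hu, setIntegral_union Ioc_disjoint_Ioi_same measurableSet_Ioi
      (hint.mono_set (by rw [← hu]; exact subset_union_left))
      (hint.mono_set (by rw [← hu]; exact subset_union_right)), h2, add_zero]
  -- integrability on pieces
  have hpiece : ∀ a b : ℝ, 0 ≤ a → IntegrableOn g (Ioc a b) := by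
    intro a b ha
    exact hint.mono_set (fun t ht => lt_of_le_of_lt ha ht.1)
  -- piecewise bounds by induction
  have key : ∀ M : ℕ, M ≤ N →
      (∑ i ∈ Finset.range M, (N:ℝ)⁻¹ * g (((i:ℝ)+1)/N)) ≤ (∫ t in Ioc (0:ℝ) ((M:ℝ)/N), g t) ∧
      (∫ t in Ioc (0:ℝ) ((M:ℝ)/N), g t) ≤ ∑ i ∈ Finset.range M, (N:ℝ)⁻¹ * g ((i:ℝ)/N) := by
    intro M
    induction M with
    | zero => intro _; simp
    | succ M ih =>
      intro hMN
      obtain ⟨ih1, ih2⟩ := ih (le_of_lt (Nat.lt_of_succ_le hMN))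
      have hle1 : (0:ℝ) ≤ (M:ℝ)/N := by positivity
      have hle2 : ((M:ℝ))/N ≤ ((M:ℝ)+1)/N := by
        gcongr <;> linarith
      have hu : Ioc (0:ℝ) ((M:ℝ)/N) ∪ Ioc ((M:ℝ)/N) (((M:ℝ)+1)/N) = Ioc 0 (((M:ℝ)+1)/N) :=
        Ioc_union_Ioc_eq_Ioc hle1 hle2
      have hsum : (∫ t in Ioc (0:ℝ) (((M:ℝ)+1)/N), g t)
          = (∫ t in Ioc (0:ℝ) ((M:ℝ)/N), g t) + ∫ t in Ioc ((M:ℝ)/N) (((M:ℝ)+1)/N), g t := by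
        rw [← hu, setIntegral_union (Set.Ioc_disjoint_Ioc_of_le le_rfl) measurableSet_Ioc
          (hpiece _ _ le_rfl) (hpiece _ _ hle1)]
      have hvol : (volume (Ioc ((M:ℝ)/N) (((M:ℝ)+1)/N))).toReal = (N:ℝ)⁻¹ := by
        rw [Real.volume_Ioc, ENNReal.toReal_ofReal (by linarith)]
        field_simp
        ring
      -- bounds on the last piece
      have hlow : (N:ℝ)⁻¹ * g (((M:ℝ)+1)/N) ≤ ∫ t in Ioc ((M:ℝ)/N) (((M:ℝ)+1)/N), g t := by
        have := setIntegral_mono_on (s := Ioc ((M:ℝ)/N) (((M:ℝ)+1)/N)) (f := fun _ => g (((M:ℝ)+1)/N)) (g := g)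
          (integrableOn_const measure_Ioc_lt_top.ne) (hpiece _ _ hle1)
          measurableSet_Ioc (fun t ht => hanti ht.2)
        rwa [setIntegral_const, measureReal_def, hvol, smul_eq_mul] at this
      have hhigh : (∫ t in Ioc ((M:ℝ)/N) (((M:ℝ)+1)/N), g t) ≤ (N:ℝ)⁻¹ * g ((M:ℝ)/N) := by
        have := setIntegral_mono_on (s := Ioc ((M:ℝ)/N) (((M:ℝ)+1)/N)) (f := g) (g := fun _ => g ((M:ℝ)/N))
          (hpiece _ _ hle1) (integrableOn_const measure_Ioc_lt_top.ne)
          measurableSet_Ioc (fun t ht => hanti (le_of_lt ht.1))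
        rwa [setIntegral_const, measureReal_def, hvol, smul_eq_mul] at this
      constructor
      · rw [Finset.sum_range_succ]
        push_cast
        rw [hsum]
        push_cast at ih1
        linarith
      · rw [Finset.sum_range_succ]
        push_cast
        rw [hsum]
        push_cast at ih2
        linarith
  obtain ⟨k1, k2⟩ := key N le_rfl
  have hNN : ((N:ℝ))/N = 1 := div_self (ne_of_gt hNR)
  rw [hNN] at k1 k2
  rw [hsplit]
  refine ⟨k1, le_trans k2 ?_⟩
  -- compare the two Riemann sums by telescoping
  have htel : ∑ i ∈ Finset.range N, ((N:ℝ)⁻¹ * g ((i:ℝ)/N) - (N:ℝ)⁻¹ * g (((i:ℝ)+1)/N))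
      = (N:ℝ)⁻¹ * (g 0 - g ((N:ℝ)/N)) := by
    have := Finset.sum_range_sub' (f := fun i : ℕ => (N:ℝ)⁻¹ * g ((i:ℝ)/N)) N
    push_cast at this ⊢
    rw [this]
    simp [mul_sub]
  rw [hNN, hv 1 le_rfl, sub_zero] at htel
  have hdiff : ∑ i ∈ Finset.range N, (N:ℝ)⁻¹ * g ((i:ℝ)/N)
      - ∑ i ∈ Finset.range N, (N:ℝ)⁻¹ * g (((i:ℝ)+1)/N) = (N:ℝ)⁻¹ * g 0 := by
    rw [← Finset.sum_sub_distrib, htel]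
  have hg0 : (N:ℝ)⁻¹ * g 0 ≤ (N:ℝ)⁻¹ := by
    calc (N:ℝ)⁻¹ * g 0 ≤ (N:ℝ)⁻¹ * 1 := by
          apply mul_le_mul_of_nonneg_left (h1 0) (by positivity)
      _ = (N:ℝ)⁻¹ := mul_one _
  linarith

/-- Exchange of ultrafilter limit and integral for antitone uniformly bounded functions. -/
lemma aux_bracket {U : Ultrafilter ℕ} {g : ℕ → ℝ → ℝ} {G : ℝ → ℝ} {I : ℕ → ℝ} {L : ℝ}
    (hganti : ∀ m, Antitone (g m)) (hg0 : ∀ m t, 0 ≤ g m t) (hg1 : ∀ m t, g m t ≤ 1)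
    (hgv : ∀ m t, 1 ≤ t → g m t = 0)
    (hGanti : Antitone G) (hG0 : ∀ t, 0 ≤ G t) (hG1 : ∀ t, G t ≤ 1)
    (hGv : ∀ t, 1 ≤ t → G t = 0)
    (hptw : ∀ t, Tendsto (fun m => g m t) ↑U (𝓝 (G t)))
    (hI : ∀ m, I m = ∫ t in Ioi (0:ℝ), g m t) (hL : Tendsto I ↑U (𝓝 L)) :
    (∫ t in Ioi (0:ℝ), G t) = L := by
  have key : ∀ N : ℕ, 0 < N → |(∫ t in Ioi (0:ℝ), G t) - L| ≤ 2 * (N:ℝ)⁻¹ := by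
    intro N hN
    set S : ℕ → ℝ := fun m => ∑ i ∈ Finset.range N, (N:ℝ)⁻¹ * g m (((i:ℝ)+1)/N) with hS
    set SG : ℝ := ∑ i ∈ Finset.range N, (N:ℝ)⁻¹ * G (((i:ℝ)+1)/N) with hSG
    have hStend : Tendsto S ↑U (𝓝 SG) := by
      apply tendsto_finset_sum
      intro i _
      exact (hptw _).const_mul _
    have hm1 : ∀ m, S m ≤ I m := fun m => by
      rw [hI m]; exact (aux_sandwich (hganti m) (hg0 m) (hg1 m) (hgv m) N hN).1
    have hm2 : ∀ m, I m ≤ S m + (N:ℝ)⁻¹ := fun m => by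
      rw [hI m]; exact (aux_sandwich (hganti m) (hg0 m) (hg1 m) (hgv m) N hN).2
    have hL1 : SG ≤ L := le_of_tendsto_of_tendsto' hStend hL hm1
    have hL2 : L ≤ SG + (N:ℝ)⁻¹ :=
      le_of_tendsto_of_tendsto' hL (hStend.add_const _) hm2
    obtain ⟨hG1', hG2'⟩ := aux_sandwich hGanti hG0 hG1 hGv N hN
    rw [← hSG] at hG1' hG2'
    rw [abs_le]
    constructor <;> [skip; skip] <;> nlinarith [inv_nonneg.2 (le_of_lt (by exact_mod_cast hN : (0:ℝ) < N))]
  have h0 : |(∫ t in Ioi (0:ℝ), G t) - L| ≤ 0 := by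
    have htend : Tendsto (fun N : ℕ => 2 * ((N:ℝ)+1)⁻¹) atTop (𝓝 0) := by
      have := tendsto_one_div_add_atTop_nhds_zero_nat (𝕜 := ℝ)
      simpa [one_div] using this.const_mul 2
    refine ge_of_tendsto' htend (fun N => ?_)
    have := key (N+1) (Nat.succ_pos N)
    push_cast at this ⊢
    linarith
  have := abs_nonneg ((∫ t in Ioi (0:ℝ), G t) - L)
  have : |(∫ t in Ioi (0:ℝ), G t) - L| = 0 := le_antisymm h0 this
  linarith [abs_eq_zero.1 this, sub_eq_zero.1 (abs_eq_zero.1 this)]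


set_option maxHeartbeats 1000000 in
/-- Theorem 7.8 of [4] (criterion Z): if there are `ε_n ≥ 0`, `ε_n → 0`, and nonempty
measurable sets `K_n` decreasing to `∅` with `p(x,K_n) ≥ 1 - ε_n` for `x ∈ K_{n+1}`,
then there is an invariant purely finitely additive probability measure `μ` with
`μ(K_n) = 1` for all `n`. -/
theorem theorem7_8 {X : Type*} [MeasurableSpace X]
    (hsingl : ∀ x : X, MeasurableSet ({x} : Set X))
    (p : X → Set X → ℝ) (hp : IsTransFun p)
    (eps : ℕ → ℝ) (K : ℕ → Set X)
    (heps0 : ∀ n, 0 ≤ eps n) (hepslim : Tendsto eps atTop (nhds 0))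
    (hKmeas : ∀ n, MeasurableSet (K n)) (hKne : ∀ n, (K n).Nonempty)
    (hKmono : ∀ n, K (n + 1) ⊆ K n) (hKinter : (⋂ n, K n) = ∅)
    (hKp : ∀ n, ∀ x ∈ K (n + 1), 1 - eps n ≤ p x (K n)) :
    ∃ μ : Set X → ℝ, IsFinAdd μ ∧ IsNonnegSF μ ∧ μ Set.univ = 1 ∧ IsPurelyFinAdd μ ∧
      (∀ E : Set X, MeasurableSet E → markovOp p μ E = μ E) ∧ ∀ n, μ (K n) = 1 := by
  obtain ⟨hp1, hp2, hp3, hp4⟩ := hp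
  -- the transition kernel as a family of measures
  set kap : X → Measure X := fun x => Measure.ofMeasurable
      (fun s _ => ENNReal.ofReal (p x s))
      (by simp [(hp4 x).1.1])
      (by
        intro f hmeas hdisj
        show ENNReal.ofReal (p x (⋃ i, f i)) = ∑' i, ENNReal.ofReal (p x (f i))
        have h := (hp4 x).2 f hmeas hdisj
        rw [← h.tsum_eq]
        exact ENNReal.ofReal_tsum_of_nonneg (fun n => (hp1 x (f n) (hmeas n)).1) h.summable)
    with hkap
  have kap_apply : ∀ x s, MeasurableSet s → kap x s = ENNReal.ofReal (p x s) := by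
    intro x s hs
    exact Measure.ofMeasurable_apply s hs
  have kap_meas : Measurable kap := by
    apply Measure.measurable_of_measurable_coe
    intro s hs
    have : (fun x => kap x s) = fun x => ENNReal.ofReal (p x s) :=
      funext fun x => kap_apply x s hs
    rw [this]
    exact (hp3 s hs).ennreal_ofReal
  have kap_prob : ∀ x, IsProbabilityMeasure (kap x) := by
    intro x
    constructor
    rw [kap_apply x _ MeasurableSet.univ, hp2 x, ENNReal.ofReal_one]
  -- integrability of transition probabilities
  have int_p : ∀ (ν : Measure X), IsProbabilityMeasure ν → ∀ E : Set X, MeasurableSet E →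
      Integrable (fun y => p y E) ν := by
    intro ν hν E hE
    haveI := hν
    refine Integrable.mono' (integrable_const 1) (hp3 E hE).aestronglyMeasurable ?_
    filter_upwards with y
    rw [Real.norm_eq_abs, abs_le]
    exact ⟨by linarith [(hp1 y E hE).1], (hp1 y E hE).2⟩
  -- starting points
  set xs : ℕ → X := fun m => (hKne (m+1)).choose with hxsdef
  have hxs : ∀ m, xs m ∈ K (m+1) := fun m => (hKne (m+1)).choose_spec
  -- iterates of the chain
  set nu : ℕ → ℕ → Measure X :=
    fun m k => Nat.rec (Measure.dirac (xs m)) (fun _ ih => ih.bind kap) k with hnu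
  have nu_zero : ∀ m, nu m 0 = Measure.dirac (xs m) := fun m => rfl
  have nu_succ' : ∀ m k, nu m (k+1) = (nu m k).bind kap := fun m k => rfl
  have nu_prob : ∀ m k, IsProbabilityMeasure (nu m k) := by
    intro m k
    induction k with
    | zero => rw [nu_zero]; infer_instance
    | succ k ih =>
      constructor
      rw [nu_succ', Measure.bind_apply MeasurableSet.univ kap_meas.aemeasurable]
      have : ∀ a, kap a Set.univ = 1 := fun a => (kap_prob a).measure_univ
      rw [lintegral_congr this, lintegral_one, ih.measure_univ]
  have nu_succ : ∀ m k (E : Set X), MeasurableSet E →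
      nu m (k+1) E = ENNReal.ofReal (∫ y, p y E ∂(nu m k)) := by
    intro m k E hE
    rw [nu_succ', Measure.bind_apply hE kap_meas.aemeasurable]
    have h1 : ∀ a, kap a E = ENNReal.ofReal (p a E) := fun a => kap_apply a E hE
    rw [lintegral_congr h1]
    rw [← ofReal_integral_eq_lintegral_ofReal (int_p _ (nu_prob m k) E hE)
      (Filter.Eventually.of_forall (fun y => (hp1 y E hE).1))]
  have nu_succ_toReal : ∀ m k (E : Set X), MeasurableSet E →
      ((nu m (k+1)) E).toReal = ∫ y, p y E ∂(nu m k) := by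
    intro m k E hE
    rw [nu_succ m k E hE, ENNReal.toReal_ofReal
      (integral_nonneg (fun y => (hp1 y E hE).1))]
  have nu_ne_top : ∀ m k (E : Set X), nu m k E ≠ ⊤ := by
    intro m k E
    haveI := nu_prob m k
    exact measure_ne_top _ _
  have nu01 : ∀ m k (E : Set X), 0 ≤ ((nu m k) E).toReal ∧ ((nu m k) E).toReal ≤ 1 := by
    intro m k E
    haveI := nu_prob m k
    refine ⟨ENNReal.toReal_nonneg, ?_⟩
    calc ((nu m k) E).toReal ≤ (1 : ℝ≥0∞).toReal :=
          ENNReal.toReal_mono ENNReal.one_ne_top prob_le_one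
      _ = 1 := by simp
  have nu_toReal_mono : ∀ m k (E F : Set X), E ⊆ F →
      ((nu m k) E).toReal ≤ ((nu m k) F).toReal := by
    intro m k E F hEF
    exact ENNReal.toReal_mono (nu_ne_top m k F) (measure_mono hEF)
  -- the epsilon machinery
  have hgex : ∀ q : ℕ, ∃ N, ∀ i, N ≤ i → eps i ≤ (((q:ℝ)+1)⁻¹)^2 := by
    intro q
    have hpos : (0:ℝ) < (((q:ℝ)+1)⁻¹)^2 := by positivity
    have := (hepslim.eventually_lt_const hpos)
    rw [eventually_atTop] at this
    obtain ⟨N, hN⟩ := this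
    exact ⟨N, fun i hi => le_of_lt (hN i hi)⟩
  choose g hgspec using hgex
  set B : ℕ → ℕ := fun q => q + ∑ q' ∈ Finset.range (q+1), g q' with hB
  have hBq : ∀ q, q ≤ B q := fun q => Nat.le_add_right _ _
  have hBg : ∀ q, g q ≤ B q :=
    fun q => le_trans (Finset.single_le_sum (f := g) (fun i _ => Nat.zero_le _)
      (Finset.self_mem_range_succ q)) (Nat.le_add_left _ _)
  set Q : ℕ → ℕ := fun m => Nat.findGreatest (fun q => B q + q ≤ m) m with hQ
  set a : ℕ → ℕ := fun m => Q m + 1 with ha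
  have ha_pos : ∀ m, 0 < a m := fun m => Nat.succ_pos _
  have haR_pos : ∀ m, (0:ℝ) < (a m : ℝ) := fun m => by exact_mod_cast ha_pos m
  have hQ_le : ∀ m, Q m ≤ m := fun m => Nat.findGreatest_le m
  have hQP : ∀ m, B 0 ≤ m → B (Q m) + Q m ≤ m := by
    intro m hm
    exact Nat.findGreatest_spec (P := fun q => B q + q ≤ m) (Nat.zero_le m) (by omega)
  have hQ_ge : ∀ q m, B q + q ≤ m → q ≤ Q m := by
    intro q m h
    exact Nat.le_findGreatest (le_trans (Nat.le_add_left q (B q)) h) h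
  have h2Q : ∀ m, B 0 ≤ m → 2 * Q m ≤ m := by
    intro m hm
    have h1 := hQP m hm
    have h2 := hBq (Q m)
    omega
  -- error sum bound
  have hD : ∀ m, B 0 ≤ m → ∑ j ∈ Finset.range (a m), eps (m - j) ≤ ((a m : ℝ))⁻¹ := by
    intro m hm
    have hsmall : ∀ j ∈ Finset.range (a m), eps (m - j) ≤ (((Q m:ℝ)+1)⁻¹)^2 := by
      intro j hj
      rw [Finset.mem_range] at hj
      apply hgspec (Q m)
      have h1 := hQP m hm
      have h2 := hBg (Q m)
      have h3 : a m = Q m + 1 := rfl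
      omega
    calc ∑ j ∈ Finset.range (a m), eps (m - j)
        ≤ ∑ j ∈ Finset.range (a m), (((Q m:ℝ)+1)⁻¹)^2 := Finset.sum_le_sum hsmall
      _ = (a m : ℝ) * (((a m:ℝ))⁻¹)^2 := by
          rw [Finset.sum_const, Finset.card_range]
          have : ((Q m : ℝ) + 1) = (a m : ℝ) := by rw [ha]; push_cast; ring
          rw [this, nsmul_eq_mul]
      _ = ((a m : ℝ))⁻¹ := by
          field_simp
  -- a tends to infinity
  have ha_top : Tendsto (fun m => (a m : ℕ)) atTop atTop := by
    rw [tendsto_atTop_atTop]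
    intro b
    refine ⟨B b + b, fun m hm => ?_⟩
    have := hQ_ge b m hm
    have h3 : a m = Q m + 1 := rfl
    omega
  have hainv : Tendsto (fun m => ((a m : ℕ) : ℝ)⁻¹) atTop (𝓝 0) :=
    (tendsto_natCast_atTop_atTop.comp ha_top).inv_tendsto_atTop
  -- key chain estimate
  have hchain : ∀ m k, k ≤ m →
      1 - ∑ j ∈ Finset.range k, eps (m - j) ≤ ((nu m k) (K (m + 1 - k))).toReal := by
    intro m k
    induction k with
    | zero =>
      intro _
      simp only [Finset.range_zero, Finset.sum_empty, sub_zero, Nat.sub_zero]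
      rw [nu_zero, Measure.dirac_apply_of_mem (hxs m)]
      simp
    | succ k ih =>
      intro hk1
      have hk : k ≤ m := le_of_lt (Nat.lt_of_succ_le hk1)
      have hm1 : m + 1 - (k+1) = m - k := by omega
      have hm2 : m + 1 - k = (m - k) + 1 := by omega
      rw [hm1, Finset.sum_range_succ, nu_succ_toReal m k (K (m-k)) (hKmeas (m-k))]
      have hSnn : 0 ≤ ∑ j ∈ Finset.range k, eps (m - j) :=
        Finset.sum_nonneg (fun j _ => heps0 _)
      rcases le_or_gt (eps (m-k)) 1 with hle | hlt
      · have hIH : 1 - ∑ j ∈ Finset.range k, eps (m - j) ≤ ((nu m k) (K ((m-k)+1))).toReal := by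
          rw [← hm2]; exact ih hk
        have hind : (1 - eps (m-k)) * ((nu m k) (K ((m-k)+1))).toReal
            = ∫ y, (K ((m-k)+1)).indicator (fun _ => 1 - eps (m-k)) y ∂(nu m k) := by
          rw [integral_indicator_const _ (hKmeas _), smul_eq_mul, mul_comm, measureReal_def]
        have hmono : ∫ y, (K ((m-k)+1)).indicator (fun _ => 1 - eps (m-k)) y ∂(nu m k)
            ≤ ∫ y, p y (K (m-k)) ∂(nu m k) := by
          apply integral_mono
          · exact (integrable_const (1 - eps (m-k))).indicator (hKmeas _)
          · exact int_p _ (nu_prob m k) _ (hKmeas _)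
          · intro y
            by_cases hy : y ∈ K ((m-k)+1)
            · rw [indicator_of_mem hy]
              exact hKp (m-k) y hy
            · rw [indicator_of_notMem hy]
              exact (hp1 y (K (m-k)) (hKmeas _)).1
        have h01 := nu01 m k (K ((m-k)+1))
        nlinarith [mul_le_mul_of_nonneg_left hIH (by linarith : (0:ℝ) ≤ 1 - eps (m-k)),
          mul_nonneg (heps0 (m-k)) hSnn]
      · have : 1 - (∑ j ∈ Finset.range k, eps (m - j) + eps (m-k)) ≤ 0 := by linarith
        refine le_trans this (integral_nonneg (fun y => (hp1 y (K (m-k)) (hKmeas _)).1))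
  -- Cesàro averages
  set c : ℕ → Set X → ℝ :=
    fun m E => ((a m : ℝ))⁻¹ * ∑ k ∈ Finset.range (a m), ((nu m k) E).toReal with hc
  have hc_nonneg : ∀ m E, 0 ≤ c m E := by
    intro m E
    apply mul_nonneg (inv_nonneg.2 (le_of_lt (haR_pos m)))
    exact Finset.sum_nonneg (fun k _ => (nu01 m k E).1)
  have hc_le_one : ∀ m E, c m E ≤ 1 := by
    intro m E
    rw [hc]
    have hsum : ∑ k ∈ Finset.range (a m), ((nu m k) E).toReal ≤ (a m : ℝ) := by
      calc ∑ k ∈ Finset.range (a m), ((nu m k) E).toReal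
          ≤ ∑ k ∈ Finset.range (a m), 1 := Finset.sum_le_sum (fun k _ => (nu01 m k E).2)
        _ = (a m : ℝ) := by simp
    calc ((a m : ℝ))⁻¹ * ∑ k ∈ Finset.range (a m), ((nu m k) E).toReal
        ≤ ((a m : ℝ))⁻¹ * (a m : ℝ) :=
          mul_le_mul_of_nonneg_left hsum (inv_nonneg.2 (le_of_lt (haR_pos m)))
      _ = 1 := inv_mul_cancel₀ (ne_of_gt (haR_pos m))
  have hc_univ : ∀ m, c m Set.univ = 1 := by
    intro m
    rw [hc]
    simp only
    have : ∀ k ∈ Finset.range (a m), ((nu m k) Set.univ).toReal = 1 := by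
      intro k _
      rw [(nu_prob m k).measure_univ]
      simp
    rw [Finset.sum_congr rfl this, Finset.sum_const, Finset.card_range, nsmul_eq_mul, mul_one]
    exact inv_mul_cancel₀ (ne_of_gt (haR_pos m))
  have hc_empty : ∀ m, c m ∅ = 0 := by
    intro m
    rw [hc]
    simp
  have hc_add : ∀ m (E F : Set X), MeasurableSet F → Disjoint E F →
      c m (E ∪ F) = c m E + c m F := by
    intro m E F hF hEF
    rw [hc]
    simp only
    rw [← mul_add, ← Finset.sum_add_distrib]
    congr 1
    apply Finset.sum_congr rfl
    intro k _
    rw [measure_union hEF hF, ENNReal.toReal_add (nu_ne_top m k E) (nu_ne_top m k F)]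
  have hc_mono : ∀ m (E F : Set X), E ⊆ F → c m E ≤ c m F := by
    intro m E F hEF
    apply mul_le_mul_of_nonneg_left _ (inv_nonneg.2 (le_of_lt (haR_pos m)))
    exact Finset.sum_le_sum (fun k _ => nu_toReal_mono m k E F hEF)
  -- the ultrafilter and the limit measure
  set U : Ultrafilter ℕ := Ultrafilter.of atTop with hU
  have hUle : (U : Filter ℕ) ≤ atTop := Ultrafilter.of_le _
  have hex : ∀ f : ℕ → ℝ, (∀ m, f m ∈ Icc (0:ℝ) 1) → ∃ c0, Tendsto f ↑U (𝓝 c0) := by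
    intro f hf
    have h1 : ↑(U.map f) ≤ 𝓟 (Icc (0:ℝ) 1) := by
      rw [Ultrafilter.coe_map, le_principal_iff, mem_map]
      exact univ_mem' hf
    obtain ⟨c0, _, hc0⟩ := isCompact_Icc.ultrafilter_le_nhds (U.map f) h1
    refine ⟨c0, ?_⟩
    rwa [Ultrafilter.coe_map] at hc0
  set μ : Set X → ℝ := fun E => limUnder (↑U) (fun m => c m E) with hμ
  have hμtend : ∀ E : Set X, Tendsto (fun m => c m E) ↑U (𝓝 (μ E)) := by
    intro E
    exact tendsto_nhds_limUnder (hex _ (fun m => ⟨hc_nonneg m E, hc_le_one m E⟩))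
  have hμ_empty : μ ∅ = 0 := by
    refine tendsto_nhds_unique (hμtend ∅) ?_
    have : (fun m => c m (∅ : Set X)) = fun _ => (0:ℝ) := funext hc_empty
    rw [this]
    exact tendsto_const_nhds
  have hμ_univ : μ Set.univ = 1 := by
    refine tendsto_nhds_unique (hμtend Set.univ) ?_
    have : (fun m => c m (Set.univ : Set X)) = fun _ => (1:ℝ) := funext hc_univ
    rw [this]
    exact tendsto_const_nhds
  have hμ_nonneg : ∀ E : Set X, 0 ≤ μ E :=
    fun E => ge_of_tendsto' (hμtend E) (fun m => hc_nonneg m E)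
  have hμ_mono : ∀ E F : Set X, E ⊆ F → μ E ≤ μ F :=
    fun E F hEF => le_of_tendsto_of_tendsto' (hμtend E) (hμtend F) (fun m => hc_mono m E F hEF)
  have hμ_add : ∀ E F : Set X, MeasurableSet F → Disjoint E F → μ (E ∪ F) = μ E + μ F := by
    intro E F hF hEF
    refine tendsto_nhds_unique (hμtend (E ∪ F)) ?_
    have : (fun m => c m (E ∪ F)) = fun m => c m E + c m F :=
      funext (fun m => hc_add m E F hF hEF)
    rw [this]
    exact (hμtend E).add (hμtend F)
  -- μ (K n) = 1
  have hK_anti : ∀ i j : ℕ, i ≤ j → K j ⊆ K i := by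
    intro i j hij
    induction j with
    | zero => rw [Nat.le_zero.1 hij]
    | succ j ihj =>
      rcases Nat.lt_or_ge i (j+1) with h | h
      · exact subset_trans (hKmono j) (ihj (Nat.lt_succ_iff.1 h))
      · have : i = j + 1 := le_antisymm hij h
        rw [this]
  have hcK : ∀ n : ℕ, Tendsto (fun m => c m (K n)) atTop (𝓝 1) := by
    intro n
    have hlow : ∀ᶠ m in atTop, 1 - ((a m : ℝ))⁻¹ ≤ c m (K n) := by
      rw [eventually_atTop]
      refine ⟨max (B 0) (2 * n), fun m hm => ?_⟩
      have hmB : B 0 ≤ m := le_trans (le_max_left _ _) hm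
      have hmn : 2 * n ≤ m := le_trans (le_max_right _ _) hm
      have hterm : ∀ k ∈ Finset.range (a m), 1 - ((a m : ℝ))⁻¹ ≤ ((nu m k) (K n)).toReal := by
        intro k hk
        rw [Finset.mem_range] at hk
        have hkQ : k ≤ Q m := by
          have h3 : a m = Q m + 1 := rfl
          omega
        have hkm : k ≤ m := le_trans hkQ (hQ_le m)
        have hnk : n ≤ m + 1 - k := by
          have := h2Q m hmB
          omega
        have h1 : 1 - ∑ j ∈ Finset.range k, eps (m - j) ≤ ((nu m k) (K (m+1-k))).toReal :=
          hchain m k hkm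
        have h2 : ((nu m k) (K (m+1-k))).toReal ≤ ((nu m k) (K n)).toReal :=
          nu_toReal_mono m k _ _ (hK_anti n (m+1-k) hnk)
        have h3 : ∑ j ∈ Finset.range k, eps (m - j) ≤ ∑ j ∈ Finset.range (a m), eps (m - j) := by
          apply Finset.sum_le_sum_of_subset_of_nonneg
          · exact Finset.range_subset_range.2 (le_of_lt hk)
          · intro j _ _; exact heps0 _
        have h4 := hD m hmB
        linarith
      have hsum : (a m : ℝ) * (1 - ((a m : ℝ))⁻¹) ≤ ∑ k ∈ Finset.range (a m), ((nu m k) (K n)).toReal := by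
        calc (a m : ℝ) * (1 - ((a m : ℝ))⁻¹)
            = ∑ k ∈ Finset.range (a m), (1 - ((a m : ℝ))⁻¹) := by
              rw [Finset.sum_const, Finset.card_range, nsmul_eq_mul]
          _ ≤ _ := Finset.sum_le_sum hterm
      rw [hc]
      simp only
      calc 1 - ((a m : ℝ))⁻¹ = ((a m : ℝ))⁻¹ * ((a m : ℝ) * (1 - ((a m : ℝ))⁻¹)) := by
            rw [← mul_assoc, inv_mul_cancel₀ (ne_of_gt (haR_pos m)), one_mul]
        _ ≤ ((a m : ℝ))⁻¹ * ∑ k ∈ Finset.range (a m), ((nu m k) (K n)).toReal :=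
            mul_le_mul_of_nonneg_left hsum (inv_nonneg.2 (le_of_lt (haR_pos m)))
    have hhigh : ∀ᶠ m in atTop, c m (K n) ≤ 1 := Eventually.of_forall (fun m => hc_le_one m _)
    have h1 : Tendsto (fun m => 1 - ((a m : ℝ))⁻¹) atTop (𝓝 1) := by
      have : Tendsto (fun _ : ℕ => (1:ℝ)) atTop (𝓝 1) := tendsto_const_nhds
      simpa using this.sub hainv
    exact tendsto_of_tendsto_of_tendsto_of_le_of_le' h1 tendsto_const_nhds hlow hhigh
  have hμ_K : ∀ n, μ (K n) = 1 := by
    intro n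
    exact tendsto_nhds_unique (hμtend (K n)) ((hcK n).mono_left hUle)
  have hμ_le_one : ∀ E : Set X, μ E ≤ 1 :=
    fun E => le_of_tendsto' (hμtend E) (fun m => hc_le_one m E)
  -- invariance under the Markov operator
  have hinv : ∀ E : Set X, MeasurableSet E → markovOp p μ E = μ E := by
    intro E hE
    set f : X → ℝ := fun y => p y E with hf
    have hf0 : ∀ y, 0 ≤ f y := fun y => (hp1 y E hE).1
    have hf1 : ∀ y, f y ≤ 1 := fun y => (hp1 y E hE).2
    set gg : ℕ → ℝ → ℝ := fun m t => c m {x | t < f x} with hgg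
    set G : ℝ → ℝ := fun t => μ {x | t < f x} with hG
    have hsubset : ∀ s t : ℝ, s ≤ t → {x | t < f x} ⊆ {x | s < f x} :=
      fun s t hst x hx => lt_of_le_of_lt hst hx
    have hganti : ∀ m, Antitone (gg m) := fun m s t hst => hc_mono m _ _ (hsubset s t hst)
    have hGanti : Antitone G := fun s t hst => hμ_mono _ _ (hsubset s t hst)
    have hempty : ∀ t : ℝ, 1 ≤ t → {x | t < f x} = (∅ : Set X) := by
      intro t ht
      ext x
      simp only [mem_setOf_eq, mem_empty_iff_false, iff_false, not_lt]
      exact le_trans (hf1 x) ht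
    have hgv : ∀ m t, 1 ≤ t → gg m t = 0 := by
      intro m t ht
      rw [hgg]
      simp only
      rw [hempty t ht]
      exact hc_empty m
    have hGv : ∀ t, 1 ≤ t → G t = 0 := by
      intro t ht
      rw [hG]
      simp only
      rw [hempty t ht]
      exact hμ_empty
    have hptw : ∀ t, Tendsto (fun m => gg m t) ↑U (𝓝 (G t)) := fun t => hμtend _
    set I : ℕ → ℝ := fun m => ∫ t in Ioi (0:ℝ), gg m t with hI
    -- each layer function for a fixed measure
    have hmeas_lt : ∀ t : ℝ, MeasurableSet {x | t < f x} := by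
      intro t
      exact measurableSet_lt measurable_const (hp3 E hE)
    have hint_k : ∀ m k, IntegrableOn (fun t => ((nu m k) {x | t < f x}).toReal) (Ioi (0:ℝ)) := by
      intro m k
      apply aux_integrableOn
      · exact fun s t hst => nu_toReal_mono m k _ _ (hsubset s t hst)
      · exact fun t => (nu01 m k _).1
      · exact fun t => (nu01 m k _).2
      · intro t ht
        rw [hempty t ht]
        simp
    have hIB : ∀ m, I m = ((a m : ℝ))⁻¹ * ∑ k ∈ Finset.range (a m), ((nu m (k+1)) E).toReal := by
      intro m
      rw [hI]
      simp only
      have step1 : (∫ t in Ioi (0:ℝ), gg m t)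
          = ((a m:ℝ))⁻¹ * ∫ t in Ioi (0:ℝ),
              ∑ k ∈ Finset.range (a m), ((nu m k) {x | t < f x}).toReal := by
        rw [← integral_const_mul]
      rw [step1, integral_finset_sum _ (fun k _ => hint_k m k)]
      congr 1
      apply Finset.sum_congr rfl
      intro k _
      rw [nu_succ_toReal m k E hE]
      exact ((int_p (nu m k) (nu_prob m k) E hE).integral_eq_integral_meas_lt
        (Filter.Eventually.of_forall hf0)).symm
    have htel : ∀ m, I m = c m E
        + ((a m:ℝ))⁻¹ * (((nu m (a m)) E).toReal - ((nu m 0) E).toReal) := by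
      intro m
      rw [hIB m, hc]
      simp only
      have hts : ∑ k ∈ Finset.range (a m), (((nu m (k+1)) E).toReal - ((nu m k) E).toReal)
          = ((nu m (a m)) E).toReal - ((nu m 0) E).toReal :=
        Finset.sum_range_sub (fun k => ((nu m k) E).toReal) (a m)
      rw [Finset.sum_sub_distrib] at hts
      have h6 : ∑ k ∈ Finset.range (a m), ((nu m (k+1)) E).toReal
          = (∑ k ∈ Finset.range (a m), ((nu m k) E).toReal)
            + (((nu m (a m)) E).toReal - ((nu m 0) E).toReal) := by linarith
      rw [h6, mul_add]
    have hItend : Tendsto I ↑U (𝓝 (μ E)) := by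
      have hdiff : Tendsto
          (fun m => ((a m:ℝ))⁻¹ * (((nu m (a m)) E).toReal - ((nu m 0) E).toReal))
          atTop (𝓝 0) := by
        apply squeeze_zero_norm _ hainv
        intro m
        rw [Real.norm_eq_abs, abs_mul,
          abs_of_nonneg (inv_nonneg.2 (le_of_lt (haR_pos m)))]
        have h1 := nu01 m (a m) E
        have h2 := nu01 m 0 E
        have habs : |((nu m (a m)) E).toReal - ((nu m 0) E).toReal| ≤ 1 := by
          rw [abs_le]
          constructor <;> linarith
        calc ((a m:ℝ))⁻¹ * |((nu m (a m)) E).toReal - ((nu m 0) E).toReal|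
            ≤ ((a m:ℝ))⁻¹ * 1 :=
              mul_le_mul_of_nonneg_left habs (inv_nonneg.2 (le_of_lt (haR_pos m)))
          _ = ((a m:ℝ))⁻¹ := mul_one _
      have h7 := (hμtend E).add (hdiff.mono_left hUle)
      rw [add_zero] at h7
      exact h7.congr (fun m => (htel m).symm)
    have hbr : (∫ t in Ioi (0:ℝ), G t) = μ E :=
      aux_bracket hganti (fun m t => hc_nonneg m _) (fun m t => hc_le_one m _) hgv
        hGanti (fun t => hμ_nonneg _) (fun t => hμ_le_one _) hGv hptw (fun m => rfl) hItend
    show faIntegral μ (fun x => p x E) = μ E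
    rw [faIntegral]
    have hneg : (∫ t in Ioi (0:ℝ), μ {x | p x E < -t}) = 0 := by
      rw [setIntegral_congr_fun (g := fun _ => (0:ℝ)) measurableSet_Ioi ?_, integral_zero]
      intro t ht
      have hemp : {x | p x E < -t} = (∅ : Set X) := by
        ext x
        simp only [mem_setOf_eq, mem_empty_iff_false, iff_false, not_lt]
        have ht' : (0:ℝ) < t := ht
        linarith [hf0 x]
      show μ {x | p x E < -t} = 0
      rw [hemp]
      exact hμ_empty
    rw [hneg, sub_zero]
    exact hbr
  -- pure finite additivity
  have hμ_pfa : IsPurelyFinAdd μ := by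
    intro lam hfa hca hnn hle E hE
    have lam_mono : ∀ A Bs : Set X, MeasurableSet A → MeasurableSet Bs → A ⊆ Bs →
        lam A ≤ lam Bs := by
      intro A Bs hA hBs hAB
      have h1 := hfa.2 A (Bs \ A) hA (hBs.diff hA) disjoint_sdiff_self_right
      rw [union_diff_cancel hAB] at h1
      have h2 := hnn (Bs \ A) (hBs.diff hA)
      linarith
    have hμcompl : ∀ n, μ ((K n)ᶜ) = 0 := by
      intro n
      have h1 := hμ_add (K n) ((K n)ᶜ) (hKmeas n).compl disjoint_compl_right
      rw [union_compl_self, hμ_univ, hμ_K n] at h1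
      linarith
    have hlamcompl : ∀ n, lam ((K n)ᶜ) = 0 := by
      intro n
      have h1 := hle ((K n)ᶜ) (hKmeas n).compl
      rw [hμcompl n] at h1
      exact le_antisymm h1 (hnn _ (hKmeas n).compl)
    set D : ℕ → Set X := disjointed (fun n => (K n)ᶜ) with hD2
    have hDmeas : ∀ n, MeasurableSet (D n) :=
      MeasurableSet.disjointed (fun n => (hKmeas n).compl)
    have hDdisj : Pairwise (Disjoint on D) := disjoint_disjointed _
    have hDunion : (⋃ n, D n) = Set.univ := by
      rw [hD2, iUnion_disjointed, ← compl_iInter, hKinter, compl_empty]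
    have hsum := hca D hDmeas hDdisj
    rw [hDunion] at hsum
    have hDzero : ∀ n, lam (D n) = 0 := by
      intro n
      have h1 : lam (D n) ≤ lam ((K n)ᶜ) :=
        lam_mono _ _ (hDmeas n) (hKmeas n).compl (disjointed_subset _ n)
      rw [hlamcompl n] at h1
      exact le_antisymm h1 (hnn _ (hDmeas n))
    have hzf : (fun n => lam (D n)) = fun _ => (0:ℝ) := funext hDzero
    rw [hzf] at hsum
    have huniv : lam Set.univ = 0 := hsum.unique hasSum_zero
    have h1 : lam E ≤ lam Set.univ := lam_mono _ _ hE MeasurableSet.univ (subset_univ E)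
    rw [huniv] at h1
    exact le_antisymm h1 (hnn E hE)
  exact ⟨μ, ⟨hμ_empty, fun E F _ hF hEF => hμ_add E F hF hEF⟩,
    fun E _ => hμ_nonneg E, hμ_univ, hμ_pfa, hinv, hμ_K⟩
end

section
/- Theorem of Šidak (invariance of the Yosida–Hewitt components): Let a countably additive transition function p on a measurable space (X,Σ) be given, with Markov operator A on ba(X,Σ). If a finitely additive measure μ ≥ 0 satisfies Aμ = μ and μ = μ₁ + μ₂ is its Yosida–Hewitt decomposition into a countably additive part μ₁ and a purely finitely additive part μ₂, then Aμ₁ = μ₁ and Aμ₂ = μ₂. -/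
open MeasureTheory Set Filter Topology Function

section SidakHelpers

variable {X : Type*} [MeasurableSpace X]

lemma sf_mono {μ : Set X → ℝ} (hμ : IsFinAdd μ) (hpos : IsNonnegSF μ)
    {E F : Set X} (hE : MeasurableSet E) (hF : MeasurableSet F) (hFE : F ⊆ E) :
    μ F ≤ μ E := by
  have h : E = F ∪ (E \ F) := (Set.union_diff_cancel hFE).symm
  have := hμ.2 F (E \ F) hF (hE.diff hF) disjoint_sdiff_self_right
  rw [h, this]
  have := hpos (E \ F) (hE.diff hF)
  linarith

lemma level_antitone {μ : Set X → ℝ} (hμ : IsFinAdd μ) (hpos : IsNonnegSF μ)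
    {f : X → ℝ} (hfm : Measurable f) :
    Antitone (fun t => μ {x | t < f x}) := by
  intro s t hst
  exact sf_mono hμ hpos (measurableSet_lt measurable_const hfm)
    (measurableSet_lt measurable_const hfm) (fun x hx => lt_of_le_of_lt hst hx)

lemma level_integrableOn {μ : Set X → ℝ} (hμ : IsFinAdd μ) (hpos : IsNonnegSF μ)
    {f : X → ℝ} (hfm : Measurable f) (hf1 : ∀ x, f x ≤ 1) :
    IntegrableOn (fun t => μ {x | t < f x}) (Set.Ioi 0) := by
  have hmeas : Measurable (fun t => μ {x | t < f x}) :=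
    (level_antitone hμ hpos hfm).measurable
  have hzero : ∀ t : ℝ, 1 ≤ t → μ {x | t < f x} = 0 := by
    intro t ht
    have : {x | t < f x} = ∅ := by
      ext x; simp only [Set.mem_setOf_eq, Set.mem_empty_iff_false, iff_false, not_lt]
      exact (hf1 x).trans ht
    rw [this, hμ.1]
  have h1 : IntegrableOn (fun t => μ {x | t < f x}) (Set.Ioc 0 1) := by
    refine Integrable.mono' (integrable_const (μ Set.univ)) hmeas.aestronglyMeasurable ?_
    refine Filter.Eventually.of_forall fun t => ?_
    rw [Real.norm_eq_abs, abs_of_nonneg (hpos _ (measurableSet_lt measurable_const hfm))]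
    exact sf_mono hμ hpos MeasurableSet.univ (measurableSet_lt measurable_const hfm)
      (Set.subset_univ _)
  have h2 : IntegrableOn (fun t => μ {x | t < f x}) (Set.Ioi 1) := by
    refine (integrableOn_congr_fun (fun t ht => ?_) measurableSet_Ioi).mpr
      (integrableOn_zero (ε' := ℝ))
    exact hzero t (le_of_lt ht)
  have : Set.Ioi (0:ℝ) = Set.Ioc 0 1 ∪ Set.Ioi 1 := (Set.Ioc_union_Ioi_eq_Ioi zero_le_one).symm
  rw [this]
  exact h1.union h2

lemma level_integral_split {μ : Set X → ℝ} (hμ : IsFinAdd μ) (hpos : IsNonnegSF μ)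
    {f : X → ℝ} (hfm : Measurable f) (hf1 : ∀ x, f x ≤ 1) :
    ∫ t in Set.Ioi (0:ℝ), μ {x | t < f x} = ∫ t in Set.Ioc (0:ℝ) 1, μ {x | t < f x} := by
  have hzero : ∀ t : ℝ, t ∈ Set.Ioi (1:ℝ) → μ {x | t < f x} = 0 := by
    intro t ht
    have : {x | t < f x} = ∅ := by
      ext x; simp only [Set.mem_setOf_eq, Set.mem_empty_iff_false, iff_false, not_lt]
      exact (hf1 x).trans (le_of_lt ht)
    rw [this, hμ.1]
  have h : Set.Ioi (0:ℝ) = Set.Ioc 0 1 ∪ Set.Ioi 1 := (Set.Ioc_union_Ioi_eq_Ioi zero_le_one).symm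
  rw [h, setIntegral_union (Set.Ioc_disjoint_Ioi le_rfl) measurableSet_Ioi
    ((level_integrableOn hμ hpos hfm hf1).mono_set (by rw [h]; exact Set.subset_union_left))
    ((level_integrableOn hμ hpos hfm hf1).mono_set (by rw [h]; exact Set.subset_union_right))]
  rw [setIntegral_congr_fun measurableSet_Ioi hzero, integral_zero, add_zero]

lemma faIntegral_eq {μ : Set X → ℝ} (hμ : IsFinAdd μ)
    {f : X → ℝ} (hf0 : ∀ x, 0 ≤ f x) :
    faIntegral μ f = ∫ t in Set.Ioi (0:ℝ), μ {x | t < f x} := by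
  unfold faIntegral
  have : ∀ t : ℝ, t ∈ Set.Ioi (0:ℝ) → μ {x | f x < -t} = 0 := by
    intro t ht
    have : {x | f x < -t} = ∅ := by
      ext x; simp only [Set.mem_setOf_eq, Set.mem_empty_iff_false, iff_false, not_lt]
      exact le_trans (by linarith [Set.mem_Ioi.mp ht]) (hf0 x)
    rw [this, hμ.1]
  rw [setIntegral_congr_fun measurableSet_Ioi this, integral_zero, sub_zero]

lemma faIntegral_mono {μ μ' : Set X → ℝ} (hμ : IsFinAdd μ) (hpos : IsNonnegSF μ)
    (hμ' : IsFinAdd μ') (hpos' : IsNonnegSF μ')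
    (hle : ∀ E, MeasurableSet E → μ E ≤ μ' E)
    {f : X → ℝ} (hfm : Measurable f) (hf0 : ∀ x, 0 ≤ f x) (hf1 : ∀ x, f x ≤ 1) :
    faIntegral μ f ≤ faIntegral μ' f := by
  rw [faIntegral_eq hμ hf0, faIntegral_eq hμ' hf0]
  refine setIntegral_mono_on (level_integrableOn hμ hpos hfm hf1)
    (level_integrableOn hμ' hpos' hfm hf1) measurableSet_Ioi fun t _ => ?_
  exact hle _ (measurableSet_lt measurable_const hfm)

lemma faIntegral_add {μ μ' : Set X → ℝ} (hμ : IsFinAdd μ) (hpos : IsNonnegSF μ)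
    (hμ' : IsFinAdd μ') (hpos' : IsNonnegSF μ')
    {f : X → ℝ} (hfm : Measurable f) (hf0 : ∀ x, 0 ≤ f x) (hf1 : ∀ x, f x ≤ 1) :
    faIntegral (fun E => μ E + μ' E) f = faIntegral μ f + faIntegral μ' f := by
  have hs : IsFinAdd (fun E => μ E + μ' E) := by
    constructor
    · simp [hμ.1, hμ'.1]
    · intro E F hE hF hEF
      simp only [hμ.2 E F hE hF hEF, hμ'.2 E F hE hF hEF]; ring
  rw [faIntegral_eq hμ hf0, faIntegral_eq hμ' hf0, faIntegral_eq hs hf0]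
  exact integral_add (level_integrableOn hμ hpos hfm hf1)
    (level_integrableOn hμ' hpos' hfm hf1)

lemma faIntegral_congr {μ μ' : Set X → ℝ} (h : ∀ E, MeasurableSet E → μ E = μ' E)
    {f : X → ℝ} (hfm : Measurable f) :
    faIntegral μ f = faIntegral μ' f := by
  unfold faIntegral
  have h1 : (fun t : ℝ => μ {x | t < f x}) = fun t => μ' {x | t < f x} :=
    funext fun t => h _ (measurableSet_lt measurable_const hfm)
  have h2 : (fun t : ℝ => μ {x | f x < -t}) = fun t => μ' {x | f x < -t} :=
    funext fun t => h _ (measurableSet_lt hfm measurable_const)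
  rw [h1, h2]

lemma faIntegral_one {μ : Set X → ℝ} (hμ : IsFinAdd μ) (hpos : IsNonnegSF μ)
    {f : X → ℝ} (hf : ∀ x, f x = 1) :
    faIntegral μ f = μ Set.univ := by
  have hf0 : ∀ x, (0:ℝ) ≤ f x := fun x => by rw [hf x]; norm_num
  rw [faIntegral_eq hμ hf0]
  have hfm : Measurable f := by
    have : f = fun _ => (1:ℝ) := funext hf
    rw [this]; exact measurable_const
  rw [level_integral_split hμ hpos hfm (fun x => le_of_eq (hf x))]
  have : ∀ t ∈ Set.Ioc (0:ℝ) 1, μ {x | t < f x} =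
      Set.indicator (Set.Ioo (0:ℝ) 1) (fun _ => μ Set.univ) t := by
    intro t ht
    have ht0 : (0:ℝ) < t := ht.1
    have ht1 : t ≤ 1 := ht.2
    rcases lt_or_eq_of_le ht1 with h | h
    · have h1 : {x | t < f x} = Set.univ := by
        ext x; simp [hf x, h]
      rw [h1, Set.indicator_of_mem (Set.mem_Ioo.mpr ⟨ht0, h⟩)]
    · have h1 : {x | t < f x} = ∅ := by
        ext x; simp [hf x, h]
      rw [h1, hμ.1, Set.indicator_of_notMem (by simp [h])]
  rw [setIntegral_congr_fun measurableSet_Ioc this]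
  rw [integral_indicator measurableSet_Ioo]
  rw [setIntegral_const, measureReal_restrict_apply measurableSet_Ioo]
  have h2 : Set.Ioo (0:ℝ) 1 ∩ Set.Ioc 0 1 = Set.Ioo 0 1 :=
    Set.inter_eq_self_of_subset_left Set.Ioo_subset_Ioc_self
  rw [h2]
  simp [Real.volume_Ioo]

lemma exists_measure_of_ca {μ₁ : Set X → ℝ} (h1 : IsFinAdd μ₁) (h1pos : IsNonnegSF μ₁)
    (h1ca : IsCtblAdd μ₁) :
    ∃ M : Measure X, IsFiniteMeasure M ∧ ∀ E, MeasurableSet E → M E = ENNReal.ofReal (μ₁ E) := by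
  refine ⟨Measure.ofMeasurable (fun E _ => ENNReal.ofReal (μ₁ E)) (by simp [h1.1]) ?_, ?_, ?_⟩
  · intro f hm hd
    have h := h1ca f hm hd
    show ENNReal.ofReal (μ₁ (⋃ i, f i)) = ∑' i, ENNReal.ofReal (μ₁ (f i))
    rw [← h.tsum_eq, ENNReal.ofReal_tsum_of_nonneg (fun i => h1pos _ (hm i)) h.summable]
  · constructor
    rw [Measure.ofMeasurable_apply _ MeasurableSet.univ]
    exact ENNReal.ofReal_lt_top
  · intro E hE
    exact Measure.ofMeasurable_apply _ hE

lemma exists_measure_int {M : Measure X} [IsFiniteMeasure M] {p : X → Set X → ℝ}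
    (hpm : ∀ E : Set X, MeasurableSet E → Measurable fun x => p x E)
    (hb : ∀ (x : X) (E : Set X), MeasurableSet E → 0 ≤ p x E ∧ p x E ≤ 1)
    (hu : ∀ x : X, p x Set.univ = 1)
    (hca : ∀ x : X, IsFinAdd (p x) ∧ IsCtblAdd (p x)) :
    ∃ N : Measure X, IsFiniteMeasure N ∧
      ∀ E, MeasurableSet E → N E = ∫⁻ x, ENNReal.ofReal (p x E) ∂M := by
  refine ⟨Measure.ofMeasurable (fun E _ => ∫⁻ x, ENNReal.ofReal (p x E) ∂M)
    (by simp [(fun x => (hca x).1.1 : ∀ x, p x ∅ = 0)]) ?_, ?_, ?_⟩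
  · intro f hm hd
    show ∫⁻ x, ENNReal.ofReal (p x (⋃ i, f i)) ∂M = ∑' i, ∫⁻ x, ENNReal.ofReal (p x (f i)) ∂M
    have key : ∀ x : X, ENNReal.ofReal (p x (⋃ i, f i)) = ∑' i, ENNReal.ofReal (p x (f i)) := by
      intro x
      have h := (hca x).2 f hm hd
      rw [← h.tsum_eq, ENNReal.ofReal_tsum_of_nonneg (fun i => (hb x _ (hm i)).1) h.summable]
    calc ∫⁻ x, ENNReal.ofReal (p x (⋃ i, f i)) ∂M
        = ∫⁻ x, ∑' i, ENNReal.ofReal (p x (f i)) ∂M := lintegral_congr key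
      _ = ∑' i, ∫⁻ x, ENNReal.ofReal (p x (f i)) ∂M :=
          lintegral_tsum fun i => ((hpm _ (hm i)).ennreal_ofReal).aemeasurable
  · constructor
    rw [Measure.ofMeasurable_apply _ MeasurableSet.univ]
    have : ∀ x : X, ENNReal.ofReal (p x Set.univ) = 1 := fun x => by simp [hu x]
    rw [lintegral_congr this, lintegral_one]
    exact measure_lt_top M _
  · intro E hE
    exact Measure.ofMeasurable_apply _ hE

end SidakHelpers

/-- Šidak's theorem on the Yosida–Hewitt components: if `μ = μ₁ + μ₂` is invariant,
with `μ₁` countably additive and `μ₂` purely finitely additive, then `μ₁` and `μ₂`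
are both invariant. -/
theorem sidak_components {X : Type*} [MeasurableSpace X]
    (hsingl : ∀ x : X, MeasurableSet ({x} : Set X))
    (p : X → Set X → ℝ) (hp : IsTransFun p)
    (μ μ₁ μ₂ : Set X → ℝ)
    (hμ : IsFinAdd μ) (hμpos : IsNonnegSF μ)
    (hinv : ∀ E : Set X, MeasurableSet E → markovOp p μ E = μ E)
    (h1 : IsFinAdd μ₁) (h1pos : IsNonnegSF μ₁) (h1ca : IsCtblAdd μ₁)
    (h2 : IsFinAdd μ₂) (h2pos : IsNonnegSF μ₂) (h2pfa : IsPurelyFinAdd μ₂)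
    (hsum : ∀ E : Set X, MeasurableSet E → μ E = μ₁ E + μ₂ E) :
    (∀ E : Set X, MeasurableSet E → markovOp p μ₁ E = μ₁ E) ∧
    (∀ E : Set X, MeasurableSet E → markovOp p μ₂ E = μ₂ E) := by
  obtain ⟨hb, hu, hpm, hca⟩ := hp
  obtain ⟨M, hMfin, hM⟩ := exists_measure_of_ca h1 h1pos h1ca
  haveI := hMfin
  have hMreal : ∀ E, MeasurableSet E → (M E).toReal = μ₁ E := fun E hE => by
    rw [hM E hE, ENNReal.toReal_ofReal (h1pos E hE)]
  obtain ⟨N, hNfin, hN⟩ := exists_measure_int (M := M) hpm hb hu hca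
  haveI := hNfin
  -- representation of `markovOp p μ₁` by the genuine measure `N`
  have hrep : ∀ E, MeasurableSet E → markovOp p μ₁ E = (N E).toReal := by
    intro E hE
    have hfm := hpm E hE
    have hf0 : ∀ x, 0 ≤ p x E := fun x => (hb x E hE).1
    have hf1 : ∀ x, p x E ≤ 1 := fun x => (hb x E hE).2
    have hint : Integrable (fun x => p x E) M := by
      refine Integrable.mono' (integrable_const 1) hfm.aestronglyMeasurable ?_
      exact Eventually.of_forall fun x => by
        rw [Real.norm_eq_abs, abs_of_nonneg (hf0 x)]; exact hf1 x
    have hlc : ∫ x, p x E ∂M = ∫ t in Set.Ioi (0:ℝ), (M {x | t < p x E}).toReal :=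
      hint.integral_eq_integral_meas_lt (Eventually.of_forall hf0)
    have hcg : ∫ t in Set.Ioi (0:ℝ), (M {x | t < p x E}).toReal
        = ∫ t in Set.Ioi (0:ℝ), μ₁ {x | t < p x E} := by
      refine setIntegral_congr_fun measurableSet_Ioi fun t _ => ?_
      exact hMreal _ (measurableSet_lt measurable_const hfm)
    have hNE : (N E).toReal = ∫ x, p x E ∂M := by
      rw [hN E hE, ← integral_eq_lintegral_of_nonneg_ae (Eventually.of_forall hf0)
        hfm.aestronglyMeasurable]
    show faIntegral μ₁ (fun x => p x E) = (N E).toReal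
    rw [faIntegral_eq h1 hf0, ← hcg, ← hlc, hNE]
  -- total mass is preserved
  have htot : (N Set.univ).toReal = μ₁ Set.univ := by
    rw [← hrep Set.univ MeasurableSet.univ]
    exact faIntegral_one h1 h1pos hu
  -- `Aμ₁ ≤ Aμ = μ`
  have hle : ∀ E, MeasurableSet E → (N E).toReal ≤ μ E := by
    intro E hE
    rw [← hrep E hE, ← hinv E hE]
    exact faIntegral_mono h1 h1pos hμ hμpos
      (fun F hF => by rw [hsum F hF]; linarith [h2pos F hF])
      (hpm E hE) (fun x => (hb x E hE).1) (fun x => (hb x E hE).2)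
  -- Hahn decomposition of `N - M`
  set s : SignedMeasure X := N.toSignedMeasure - M.toSignedMeasure with hsdef
  obtain ⟨i, hi₁, hi₂, hi₃⟩ := s.exists_compl_positive_negative
  have hsval : ∀ E : Set X, MeasurableSet E → s E = (N E).toReal - (M E).toReal :=
    fun E hE => Measure.toSignedMeasure_sub_apply hE
  set ν : Set X → ℝ := fun E => s (E ∩ i) with hνdef
  have hνfa : IsFinAdd ν := by
    constructor
    · show s (∅ ∩ i) = 0
      rw [Set.empty_inter]; exact s.empty
    · intro E F hE hF hEF
      show s ((E ∪ F) ∩ i) = s (E ∩ i) + s (F ∩ i)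
      rw [Set.union_inter_distrib_right]
      exact s.of_union (hEF.mono Set.inter_subset_left Set.inter_subset_left)
        (hE.inter hi₁) (hF.inter hi₁)
  have hνca : IsCtblAdd ν := by
    intro E hm hd
    have hd' : Pairwise (Disjoint on fun n => E n ∩ i) := fun m n hmn =>
      (hd hmn).mono Set.inter_subset_left Set.inter_subset_left
    have := s.m_iUnion (fun n => (hm n).inter hi₁) hd'
    have hU : (⋃ n, E n ∩ i) = (⋃ n, E n) ∩ i := by rw [Set.iUnion_inter]
    rw [hU] at this
    exact this
  have hνpos : ∀ E, MeasurableSet E → 0 ≤ ν E := by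
    intro E hE
    have := (VectorMeasure.restrict_le_restrict_iff 0 s hi₁).1 hi₂
      (hE.inter hi₁) Set.inter_subset_right
    simpa using this
  have hνle : ∀ E, MeasurableSet E → ν E ≤ μ₂ E := by
    intro E hE
    have h5 := hsval _ (hE.inter hi₁)
    have h6 := hle _ (hE.inter hi₁)
    have h7 := hMreal _ (hE.inter hi₁)
    have h8 := hsum _ (hE.inter hi₁)
    have h9 : μ₂ (E ∩ i) ≤ μ₂ E :=
      sf_mono h2 h2pos hE (hE.inter hi₁) Set.inter_subset_left
    show s (E ∩ i) ≤ μ₂ E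
    rw [h5, h7]
    linarith
  have hν0 := h2pfa ν hνfa hνca hνpos hνle
  -- `Aμ₁ ≤ μ₁`
  have hNleM : ∀ E, MeasurableSet E → (N E).toReal ≤ μ₁ E := by
    intro E hE
    have hsplit : s E = s (E ∩ i) + s (E ∩ iᶜ) := by
      have : E = (E ∩ i) ∪ (E ∩ iᶜ) := by
        rw [← Set.inter_union_distrib_left, Set.union_compl_self, Set.inter_univ]
      nth_rewrite 1 [this]
      exact s.of_union (Disjoint.mono Set.inter_subset_right Set.inter_subset_right
        disjoint_compl_right) (hE.inter hi₁) (hE.inter hi₁.compl)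
    have hz : s (E ∩ i) = 0 := hν0 E hE
    have hneg : s (E ∩ iᶜ) ≤ 0 := by
      have := (VectorMeasure.restrict_le_restrict_iff s 0 hi₁.compl).1 hi₃
        (hE.inter hi₁.compl) Set.inter_subset_right
      simpa using this
    have hsE : s E ≤ 0 := by rw [hsplit, hz, zero_add]; exact hneg
    rw [hsval E hE, hMreal E hE] at hsE
    linarith
  -- equality from equal total masses
  have hNeqM : ∀ E, MeasurableSet E → (N E).toReal = μ₁ E := by
    intro E hE
    have hE' := hNleM E hE
    have hEc := hNleM Eᶜ hE.compl
    have hNadd : (N E).toReal + (N Eᶜ).toReal = (N Set.univ).toReal := by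
      rw [← ENNReal.toReal_add (measure_ne_top N E) (measure_ne_top N Eᶜ),
        measure_add_measure_compl hE]
    have hμadd : μ₁ Set.univ = μ₁ E + μ₁ Eᶜ := by
      have := h1.2 E Eᶜ hE hE.compl disjoint_compl_right
      rw [Set.union_compl_self] at this
      exact this
    linarith [htot]
  have conc1 : ∀ E : Set X, MeasurableSet E → markovOp p μ₁ E = μ₁ E := by
    intro E hE
    rw [hrep E hE, hNeqM E hE]
  refine ⟨conc1, ?_⟩
  intro E hE
  have hfm := hpm E hE
  have hf0 : ∀ x, 0 ≤ p x E := fun x => (hb x E hE).1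
  have hf1 : ∀ x, p x E ≤ 1 := fun x => (hb x E hE).2
  have hadd : markovOp p μ E = markovOp p μ₁ E + markovOp p μ₂ E := by
    show faIntegral μ (fun x => p x E)
      = faIntegral μ₁ (fun x => p x E) + faIntegral μ₂ (fun x => p x E)
    rw [faIntegral_congr hsum hfm]
    exact faIntegral_add h1 h1pos h2 h2pos hfm hf0 hf1
  have := hinv E hE
  have := hsum E hE
  have := conc1 E hE
  linarith
end

section
/- n-step transition probabilities of CM1: for every x₀ ∈ (0,1) and every n ≥ 1, pⁿ(x₀,{x₀^{2ⁿ}}) = x₀^{2ⁿ−1} and pⁿ(x₀,{0}) = 1 − x₀^{2ⁿ−1}, and pⁿ(x₀, E) = 0 for every Borel set E disjoint from {0, x₀^{2ⁿ}}. -/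
open MeasureTheory Set Filter Topology Function

/-- The Dirac measure at `y`, as a set function. -/
noncomputable def diracSF (y : ℝ) (E : Set ℝ) : ℝ := E.indicator (fun _ => (1:ℝ)) y

/-- The transition function of CM1: `p(x,·) = x·δ_{x²} + (1-x)·δ₀` on `(0,1)`,
`p(0,·) = δ₀`, `p(1,·) = δ₁` (the formula below specializes correctly at `0` and `1`). -/
noncomputable def p1 (x : ℝ) (E : Set ℝ) : ℝ :=
  x * diracSF (x ^ 2) E + (1 - x) * diracSF 0 E

/-- The transition function of CM2: `p(x,·) = (1-x)·δ_{x²} + x·δ₀` on `(0,1)`,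
`p(0,·) = δ₀`, `p(1,·) = δ₁`. -/
noncomputable def p2 (x : ℝ) (E : Set ℝ) : ℝ :=
  if x = 1 then diracSF 1 E else (1 - x) * diracSF (x ^ 2) E + x * diracSF 0 E

/-- The transition function of CM3: the CM1 rule on `[0,1/2]`, the CM2 rule on `(1/2,1)`,
`p(1,·) = δ₁`. -/
noncomputable def p3 (x : ℝ) (E : Set ℝ) : ℝ :=
  if x = 1 then diracSF 1 E
  else if x ≤ 1 / 2 then x * diracSF (x ^ 2) E + (1 - x) * diracSF 0 E
  else (1 - x) * diracSF (x ^ 2) E + x * diracSF 0 E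

/-- The `n`-step transition function of CM1 (`p1n 0` is the identity kernel, and
`p1n (n+1) x E = ∫ p1n n (y,E) p(x,dy)` is the integral convolution). -/
noncomputable def p1n : ℕ → ℝ → Set ℝ → ℝ
  | 0 => fun x E => diracSF x E
  | n + 1 => fun x E => faIntegral (p1 x) fun y => p1n n y E

/-- The `n`-step transition function of CM2. -/
noncomputable def p2n : ℕ → ℝ → Set ℝ → ℝ
  | 0 => fun x E => diracSF x E
  | n + 1 => fun x E => faIntegral (p2 x) fun y => p2n n y E

/-- The `n`-step transition function of CM3. -/
noncomputable def p3n : ℕ → ℝ → Set ℝ → ℝ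
  | 0 => fun x E => diracSF x E
  | n + 1 => fun x E => faIntegral (p3 x) fun y => p3n n y E

lemma intg_ind (c : ℝ) :
    MeasureTheory.IntegrableOn (fun t => if t < c then (1:ℝ) else 0) (Set.Ioi 0) := by
  have h : (fun t => if t < c then (1:ℝ) else 0) = (Set.Iio c).indicator (fun _ => 1) := by
    funext t; simp [Set.indicator_apply]
  rw [h]
  rw [show IntegrableOn ((Set.Iio c).indicator fun _ => (1:ℝ)) (Set.Ioi 0) volume ↔ _ from MeasureTheory.integrable_indicator_iff measurableSet_Iio]
  apply (MeasureTheory.integrableOn_const_iff (C := (1:ℝ)) (by simp)).2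
  right
  rw [MeasureTheory.Measure.restrict_apply measurableSet_Iio]
  rw [show Set.Iio c ∩ Set.Ioi 0 = Set.Ioo 0 c by ext t; simp [Set.mem_Ioo]; tauto]
  exact (Real.volume_Ioo ▸ ENNReal.ofReal_lt_top)

lemma integral_ind (c : ℝ) (hc : 0 ≤ c) :
    ∫ t in Set.Ioi (0:ℝ), (if t < c then (1:ℝ) else 0) = c := by
  have h : (fun t => if t < c then (1:ℝ) else 0) = (Set.Iio c).indicator (fun _ => 1) := by
    funext t; simp [Set.indicator_apply]
  rw [h, MeasureTheory.setIntegral_indicator measurableSet_Iio]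
  rw [show Set.Ioi (0:ℝ) ∩ Set.Iio c = Set.Ioo 0 c from rfl]
  simp [Real.volume_Ioo, ENNReal.toReal_ofReal hc, hc]

lemma faIntegral_comb (a b u v : ℝ) (ha : 0 ≤ a) (hb : 0 ≤ b) (f : ℝ → ℝ)
    (hu : 0 ≤ f u) (hv : 0 ≤ f v) (μ : Set ℝ → ℝ)
    (hμ : ∀ E, μ E = a * diracSF u E + b * diracSF v E) :
    faIntegral μ f = a * f u + b * f v := by
  rw [faIntegral]
  have h1 : ∀ t : ℝ, μ {x | t < f x}
      = a * (if t < f u then (1:ℝ) else 0) + b * (if t < f v then (1:ℝ) else 0) := by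
    intro t; rw [hμ]; simp [diracSF, Set.indicator_apply]
  have e1 : (∫ t in Set.Ioi (0:ℝ), μ {x | t < f x}) = a * f u + b * f v := by
    rw [MeasureTheory.setIntegral_congr_fun measurableSet_Ioi (fun t _ => h1 t)]
    rw [MeasureTheory.integral_add (((intg_ind (f u)).const_mul a))
      (((intg_ind (f v)).const_mul b))]
    rw [integral_const_mul, integral_const_mul,
      integral_ind _ hu, integral_ind _ hv]
  have e2 : (∫ t in Set.Ioi (0:ℝ), μ {x | f x < -t}) = 0 := by
    rw [MeasureTheory.setIntegral_congr_fun measurableSet_Ioi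
      (show ∀ t ∈ Set.Ioi (0:ℝ), μ {x | f x < -t} = (fun _ => (0:ℝ)) t by
        intro t ht
        rw [hμ]
        have h1 : ¬ (f u < -t) := by simp at ht; linarith
        have h2 : ¬ (f v < -t) := by simp at ht; linarith
        simp [diracSF, Set.indicator_apply, h1, h2])]
    simp
  rw [e1, e2]; ring

lemma diracSF_nonneg (y : ℝ) (E : Set ℝ) : 0 ≤ diracSF y E := by
  unfold diracSF; exact Set.indicator_nonneg (fun _ _ => zero_le_one) y

lemma p1n_nonneg (E : Set ℝ) : ∀ n, ∀ x ∈ Set.Icc (0:ℝ) 1, 0 ≤ p1n n x E := by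
  intro n
  induction n with
  | zero => intro x _; exact diracSF_nonneg x E
  | succ n ih =>
    intro x hx
    obtain ⟨h0, h1⟩ := hx
    have hu := ih (x^2) ⟨by positivity, by nlinarith⟩
    have hv := ih 0 (by norm_num)
    have key := faIntegral_comb x (1-x) (x^2) 0 h0 (by linarith)
      (fun y => p1n n y E) hu hv (p1 x) (fun E => rfl)
    rw [show p1n (n+1) x E = faIntegral (p1 x) fun y => p1n n y E from rfl, key]
    nlinarith

lemma p1n_zero (E : Set ℝ) : ∀ n, p1n n 0 E = diracSF 0 E := by
  intro n
  induction n with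
  | zero => rfl
  | succ n ih =>
    have hu : 0 ≤ p1n n ((0:ℝ)^2) E := by
      norm_num; exact p1n_nonneg E n 0 (by norm_num)
    have hv := p1n_nonneg E n 0 (by norm_num)
    have key := faIntegral_comb 0 1 ((0:ℝ)^2) 0 le_rfl zero_le_one
      (fun y => p1n n y E) hu hv (p1 0) (fun E => by simp [p1])
    rw [show p1n (n+1) 0 E = faIntegral (p1 0) fun y => p1n n y E from rfl, key]
    norm_num [ih]

lemma p1n_formula (E : Set ℝ) :
    ∀ n, ∀ x ∈ Set.Ioo (0:ℝ) 1,
      p1n (n+1) x E = x ^ (2 ^ (n+1) - 1) * diracSF (x ^ (2 ^ (n+1))) E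
        + (1 - x ^ (2 ^ (n+1) - 1)) * diracSF 0 E := by
  intro n
  induction n with
  | zero =>
    intro x hx
    obtain ⟨h0, h1⟩ := hx
    have key := faIntegral_comb x (1-x) (x^2) 0 h0.le (by linarith)
      (fun y => p1n 0 y E) (diracSF_nonneg _ E) (diracSF_nonneg _ E) (p1 x) (fun E => rfl)
    rw [show p1n 1 x E = faIntegral (p1 x) fun y => p1n 0 y E from rfl, key]
    norm_num [p1n]
  | succ n ih =>
    intro x hx
    obtain ⟨h0, h1⟩ := hx
    have hx2 : x ^ 2 ∈ Set.Ioo (0:ℝ) 1 := ⟨by positivity, by nlinarith⟩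
    have hu := p1n_nonneg E (n+1) (x^2) ⟨hx2.1.le, hx2.2.le⟩
    have hv := p1n_nonneg E (n+1) 0 (by norm_num)
    have key := faIntegral_comb x (1-x) (x^2) 0 h0.le (by linarith)
      (fun y => p1n (n+1) y E) hu hv (p1 x) (fun E => rfl)
    rw [show p1n (n+2) x E = faIntegral (p1 x) fun y => p1n (n+1) y E from rfl, key]
    beta_reduce
    rw [ih (x^2) hx2, p1n_zero]
    have hk : 1 ≤ 2 ^ (n+1) := Nat.one_le_two_pow
    have e1 : (x ^ 2) ^ (2 ^ (n+1)) = x ^ (2 ^ (n+2)) := by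
      rw [← pow_mul]
      congr 1
      ring
    have e2 : x * (x ^ 2) ^ (2 ^ (n+1) - 1) = x ^ (2 ^ (n+2) - 1) := by
      rw [← pow_mul, ← pow_succ']
      congr 1
      have h2 : 2 ^ (n+2) = 2 * 2 ^ (n+1) := by ring
      omega
    rw [e1]
    nlinarith [e2, diracSF_nonneg (x ^ 2 ^ (n+2)) E, diracSF_nonneg 0 E]

/-- The `n`-step transition probabilities of CM1: starting from `x₀ ∈ (0,1)`, the `n`-th
Markov measure puts mass `x₀^{2ⁿ-1}` at `x₀^{2ⁿ}`, mass `1 - x₀^{2ⁿ-1}` at `0`, and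
vanishes on Borel sets disjoint from these two atoms. -/
theorem cm1_nstep (x₀ : ℝ) (hx : x₀ ∈ Set.Ioo (0:ℝ) 1) (n : ℕ) (hn : 1 ≤ n) :
    p1n n x₀ {x₀ ^ (2 ^ n)} = x₀ ^ (2 ^ n - 1) ∧
    p1n n x₀ {0} = 1 - x₀ ^ (2 ^ n - 1) ∧
    ∀ E : Set ℝ, MeasurableSet E → Disjoint E ({0, x₀ ^ (2 ^ n)} : Set ℝ) →
      p1n n x₀ E = 0 := by
  obtain ⟨m, rfl⟩ : ∃ m, n = m + 1 := ⟨n - 1, by omega⟩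
  obtain ⟨h0, h1⟩ := hx
  have hne : x₀ ^ (2 ^ (m+1)) ≠ 0 := by positivity
  have hform := p1n_formula
  refine ⟨?_, ?_, ?_⟩
  · rw [p1n_formula _ m x₀ ⟨h0, h1⟩]
    simp [diracSF, Set.indicator_apply, hne, Ne.symm hne]
  · rw [p1n_formula _ m x₀ ⟨h0, h1⟩]
    simp [diracSF, Set.indicator_apply, hne, Ne.symm hne, h0.ne, h0.ne']
  · intro E _ hdisj
    have hE0 : (0:ℝ) ∉ E := fun h => (Set.disjoint_left.mp hdisj h) (by simp)
    have hEx : x₀ ^ (2 ^ (m+1)) ∉ E := fun h => (Set.disjoint_left.mp hdisj h) (by simp)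
    rw [p1n_formula _ m x₀ ⟨h0, h1⟩]
    simp [diracSF, Set.indicator_apply, hE0, hEx]
end
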